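/- arXiv:1204.6278 — 6 statements merged into one kernel-verified Lean document; each statement's English description precedes it below -/
import Mathlib

section
/- Let g ≥ 1, k ≥ 0 be integers and m_1, …, m_k ≥ 2 be integers, and let Γ = Γ(g; m_1, …, m_k) be the corresponding orbifold surface group. Then def(Γ) = 2g − 1; that is, Γ admits a finite presentation whose number of generators minus number of relators equals 2g − 1, and every finite presentation of Γ with a generators and b relators satisfies a − b ≤ 2g − 1. -/
/-- `Γ` admits a finite presentation with `a` generators and `b` relators,
i.e. `Γ` is isomorphic to a free group on `a` generators modulo the normal closure
of `b` relators. -/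
def IsPresentation (Γ : Type) [Group Γ] (a b : ℕ) : Prop :=
  ∃ r : Fin b → FreeGroup (Fin a), Nonempty (Γ ≃* PresentedGroup (Set.range r))

/-- `Γ` has deficiency `n`: some finite presentation realizes `a - b = n`, and every
finite presentation satisfies `a - b ≤ n`. -/
def HasDeficiency (Γ : Type) [Group Γ] (n : ℤ) : Prop :=
  (∃ a b : ℕ, IsPresentation Γ a b ∧ (a : ℤ) - (b : ℤ) = n) ∧
    ∀ a b : ℕ, IsPresentation Γ a b → (a : ℤ) - (b : ℤ) ≤ n

open scoped commutatorElement

/-- The relators of the orbifold surface group of genus `g` with `k` cone points of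
multiplicities `m 0, …, m (k-1)`: the long relator `[x_1,y_1]⋯[x_g,y_g]·z_1⋯z_k`
together with the relators `z_j ^ (m j)`. -/
def orbifoldRels (g k : ℕ) (m : Fin k → ℕ) : Set (FreeGroup (Fin g ⊕ Fin g ⊕ Fin k)) :=
  insert
    ((List.ofFn fun i : Fin g =>
        ⁅FreeGroup.of (Sum.inl i : Fin g ⊕ Fin g ⊕ Fin k),
          FreeGroup.of (Sum.inr (Sum.inl i))⁆).prod *
      (List.ofFn fun j : Fin k => FreeGroup.of (Sum.inr (Sum.inr j))).prod)
    (Set.range fun j : Fin k => FreeGroup.of (Sum.inr (Sum.inr j)) ^ m j)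

/-- The orbifold surface group `Γ(g; m 0, …, m (k-1))`. -/
abbrev OrbifoldSurfaceGroup (g k : ℕ) (m : Fin k → ℕ) : Type :=
  PresentedGroup (orbifoldRels g k m)

namespace OrbAux


/-- Heisenberg group over ℚ. -/
@[ext] structure Heis where
  x : ℚ
  y : ℚ
  z : ℚ

namespace Heis

instance : Mul Heis := ⟨fun p q => ⟨p.x + q.x, p.y + q.y, p.z + q.z + p.x * q.y⟩⟩
instance : One Heis := ⟨⟨0, 0, 0⟩⟩
instance : Inv Heis := ⟨fun p => ⟨-p.x, -p.y, -p.z + p.x * p.y⟩⟩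

@[simp] lemma mul_x (p q : Heis) : (p * q).x = p.x + q.x := rfl
@[simp] lemma mul_y (p q : Heis) : (p * q).y = p.y + q.y := rfl
@[simp] lemma mul_z (p q : Heis) : (p * q).z = p.z + q.z + p.x * q.y := rfl
@[simp] lemma one_x : (1 : Heis).x = 0 := rfl
@[simp] lemma one_y : (1 : Heis).y = 0 := rfl
@[simp] lemma one_z : (1 : Heis).z = 0 := rfl
@[simp] lemma inv_x (p : Heis) : (p⁻¹).x = -p.x := rfl
@[simp] lemma inv_y (p : Heis) : (p⁻¹).y = -p.y := rfl
@[simp] lemma inv_z (p : Heis) : (p⁻¹).z = -p.z + p.x * p.y := rfl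

instance : Group Heis :=
  Group.ofLeftAxioms
    (by intro a b c; ext <;> simp <;> ring)
    (by intro a; ext <;> simp)
    (by intro a; ext <;> simp <;> ring)

/-- First coordinate as a homomorphism. -/
def px : Heis →* Multiplicative ℚ :=
  { toFun := fun p => Multiplicative.ofAdd p.x
    map_one' := rfl
    map_mul' := fun p q => by simp [Multiplicative.ofAdd]; rfl }

/-- Second coordinate as a homomorphism. -/
def py : Heis →* Multiplicative ℚ :=
  { toFun := fun p => Multiplicative.ofAdd p.y
    map_one' := rfl
    map_mul' := fun p q => by simp [Multiplicative.ofAdd]; rfl }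

lemma central_mul {p q : Heis} (hp : p.x = 0 ∧ p.y = 0) (hq : q.x = 0 ∧ q.y = 0) :
    (p * q).z = p.z + q.z := by simp [hp.1]

lemma conj_z (w p : Heis) (hp : p.x = 0) (hpy : p.y = 0) :
    (w * p * w⁻¹).z = p.z := by simp [hp, hpy]; ring

lemma commutator_xy :
    ⁅(⟨1,0,0⟩ : Heis), (⟨0,1,0⟩ : Heis)⁆ = ⟨0,0,1⟩ := by
  show (⟨1,0,0⟩ : Heis) * ⟨0,1,0⟩ * (⟨1,0,0⟩ : Heis)⁻¹ * (⟨0,1,0⟩ : Heis)⁻¹ = _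
  ext <;> simp

end Heis



variable {X : Type*}

def ev (v : X → ℚ) : FreeGroup X →* Multiplicative ℚ :=
  FreeGroup.lift fun s => Multiplicative.ofAdd (v s)

def expo (v : X → ℚ) (w : FreeGroup X) : ℚ := (ev v w).toAdd

@[simp] lemma expo_one (v : X → ℚ) : expo v 1 = 0 := by simp [expo]

@[simp] lemma expo_of (v : X → ℚ) (s : X) : expo v (FreeGroup.of s) = v s := by
  simp [expo, ev]

@[simp] lemma expo_mul (v : X → ℚ) (w u : FreeGroup X) :
    expo v (w * u) = expo v w + expo v u := by simp [expo]

@[simp] lemma expo_inv (v : X → ℚ) (w : FreeGroup X) : expo v w⁻¹ = -expo v w := by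
  simp [expo]

@[simp] lemma expo_pure (v : X → ℚ) (s : X) : expo v (pure s) = v s := expo_of v s

lemma expo_left_add (v v' : X → ℚ) (w : FreeGroup X) :
    expo (v + v') w = expo v w + expo v' w := by
  refine FreeGroup.induction_on w (by simp) (fun t => by simp) (fun t h => by simp [h]; try ring)
    (fun a b ha hb => by simp [ha, hb]; ring)

lemma expo_left_smul (q : ℚ) (v : X → ℚ) (w : FreeGroup X) :
    expo (q • v) w = q * expo v w := by
  refine FreeGroup.induction_on w (by simp) (fun t => by simp) (fun t h => by simp [h]; try ring)
    (fun a b ha hb => by simp [ha, hb]; ring)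

lemma expo_left_zero (w : FreeGroup X) : expo (0 : X → ℚ) w = 0 := by
  have := expo_left_smul 0 0 w; simpa using this

/-- The space of ℚ-valued weights on the generators annihilating all relators;
this is `Hom(G, ℚ)` for the presented group `G`. -/
def kerSpace (rels : Set (FreeGroup X)) : Submodule ℚ (X → ℚ) where
  carrier := {v | ∀ w ∈ rels, expo v w = 0}
  add_mem' := by intro v v' hv hv' w hw; rw [expo_left_add]; simp [hv w hw, hv' w hw]
  zero_mem' := by intro w hw; exact expo_left_zero w
  smul_mem' := by intro q v hv w hw; rw [expo_left_smul]; simp [hv w hw]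

lemma ev_eq_one_of_ker {rels : Set (FreeGroup X)} (v : kerSpace rels) :
    ∀ w ∈ rels, (ev v.1) w = 1 := by
  intro w hw
  have h := v.2 w hw
  have : Multiplicative.toAdd (ev v.1 w) = 0 := h
  calc ev v.1 w = Multiplicative.ofAdd (Multiplicative.toAdd (ev v.1 w)) := rfl
    _ = Multiplicative.ofAdd 0 := by rw [this]
    _ = 1 := rfl


@[simp] lemma expo_pow (v : X → ℚ) (w : FreeGroup X) (n : ℕ) :
    expo v (w ^ n) = n * expo v w := by
  induction n with
  | zero => simp
  | succ n ih => rw [pow_succ, expo_mul, ih]; push_cast; ring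

@[simp] lemma expo_commutator (v : X → ℚ) (w u : FreeGroup X) :
    expo v ⁅w, u⁆ = 0 := by
  simp [commutatorElement_def]

lemma expo_listProd (v : X → ℚ) (l : List (FreeGroup X)) :
    expo v l.prod = (l.map (expo v)).sum := by
  induction l with
  | nil => simp
  | cons a t ih => simp [ih]

lemma expo_eq_sum [Fintype X] [DecidableEq X] (v : X → ℚ) (w : FreeGroup X) :
    expo v w = ∑ s, expo (Pi.single s 1) w * v s := by
  refine FreeGroup.induction_on w ?_ ?_ ?_ ?_
  · simp
  · intro t
    show expo v (FreeGroup.of t) = ∑ s, expo (Pi.single s 1) (FreeGroup.of t) * v s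
    simp [Pi.single_apply, Finset.sum_ite_eq]
  · intro t ih
    show expo v (FreeGroup.of t)⁻¹ = ∑ s, expo (Pi.single s 1) (FreeGroup.of t)⁻¹ * v s
    simp [Pi.single_apply, Finset.sum_ite_eq]
  · intro w u hw hu
    simp only [expo_mul, hw, hu, add_mul, Finset.sum_add_distrib]

section Transfer

variable {X Y : Type*} {relsX : Set (FreeGroup X)} {relsY : Set (FreeGroup Y)}

lemma mk_rel_one (rels : Set (FreeGroup X)) {w : FreeGroup X} (hw : w ∈ rels) :
    PresentedGroup.mk rels w = 1 :=
  (QuotientGroup.eq_one_iff w).mpr (Subgroup.subset_normalClosure hw)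

lemma hom_mk (rels : Set (FreeGroup X)) (c : PresentedGroup rels →* Multiplicative ℚ)
    (w : FreeGroup X) :
    c (PresentedGroup.mk rels w)
      = ev (fun s => Multiplicative.toAdd (c (PresentedGroup.of s))) w := by
  have h : c.comp (PresentedGroup.mk rels)
      = ev (fun s => Multiplicative.toAdd (c (PresentedGroup.of s))) := by
    ext s
    simp [ev, PresentedGroup.of]
  exact (DFunLike.congr_fun h w :)

/-- The homomorphism to `ℚ` induced by a weight vector annihilating the relators. -/
def homOfKer (v : kerSpace relsX) : PresentedGroup relsX →* Multiplicative ℚ :=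
  PresentedGroup.toGroup (f := fun s => Multiplicative.ofAdd (v.1 s))
    (fun w hw => ev_eq_one_of_ker v w hw)

@[simp] lemma homOfKer_of (v : kerSpace relsX) (s : X) :
    homOfKer v (PresentedGroup.of s) = Multiplicative.ofAdd (v.1 s) :=
  PresentedGroup.toGroup.of _

/-- Transfer of weight vectors along an isomorphism of presented groups. -/
def transferFun (e : PresentedGroup relsX ≃* PresentedGroup relsY) (v : kerSpace relsX) :
    Y → ℚ :=
  fun t => Multiplicative.toAdd ((homOfKer v) (e.symm (PresentedGroup.of t)))

lemma hom_mk' (c : PresentedGroup relsY →* Multiplicative ℚ) (w : FreeGroup Y)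
    (hw : w ∈ relsY) : c (PresentedGroup.mk relsY w) = 1 := by
  rw [mk_rel_one relsY hw, map_one]

lemma transfer_mem (e : PresentedGroup relsX ≃* PresentedGroup relsY) (v : kerSpace relsX) :
    transferFun e v ∈ kerSpace relsY := by
  intro w hw
  have h1 : expo (transferFun e v) w = Multiplicative.toAdd
      (((homOfKer v).comp e.symm.toMonoidHom) (PresentedGroup.mk relsY w)) := by
    rw [hom_mk relsY ((homOfKer v).comp e.symm.toMonoidHom) w]
    rfl
  rw [h1, mk_rel_one relsY hw, map_one]
  rfl

lemma homOfKer_transfer (e : PresentedGroup relsX ≃* PresentedGroup relsY) (v : kerSpace relsX) :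
    homOfKer (⟨transferFun e v, transfer_mem e v⟩ : kerSpace relsY)
      = (homOfKer v).comp e.symm.toMonoidHom := by
  ext t
  simp [transferFun]

lemma homOfKer_add (v v' : kerSpace relsX) :
    homOfKer (v + v') = homOfKer v * homOfKer v' := by
  ext s
  simp

lemma homOfKer_smul (q : ℚ) (v : kerSpace relsX) :
    homOfKer (q • v)
      = (AddMonoidHom.toMultiplicative (AddMonoidHom.mulLeft q)).comp (homOfKer v) := by
  ext s
  simp

lemma transferFun_apply (e : PresentedGroup relsX ≃* PresentedGroup relsY) (v : kerSpace relsX)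
    (t : Y) :
    transferFun e v t = Multiplicative.toAdd ((homOfKer v) (e.symm (PresentedGroup.of t))) := rfl

/-- Weight spaces of isomorphic presented groups are linearly equivalent. -/
def kerLequiv (e : PresentedGroup relsX ≃* PresentedGroup relsY) :
    kerSpace relsX ≃ₗ[ℚ] kerSpace relsY where
  toFun v := ⟨transferFun e v, transfer_mem e v⟩
  invFun w := ⟨transferFun e.symm w, transfer_mem e.symm w⟩
  left_inv v := by
    apply Subtype.ext
    funext s
    show transferFun e.symm ⟨transferFun e v, transfer_mem e v⟩ s = v.1 s
    rw [transferFun_apply, homOfKer_transfer e v]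
    simp
  right_inv w := by
    apply Subtype.ext
    funext t
    show transferFun e ⟨transferFun e.symm w, transfer_mem e.symm w⟩ t = w.1 t
    rw [transferFun_apply, homOfKer_transfer e.symm w]
    simp
  map_add' v v' := by
    apply Subtype.ext
    funext t
    show transferFun e (v + v') t = transferFun e v t + transferFun e v' t
    rw [transferFun_apply, transferFun_apply, transferFun_apply, homOfKer_add]
    simp
  map_smul' q v := by
    apply Subtype.ext
    funext t
    show transferFun e (q • v) t = q * transferFun e v t
    rw [transferFun_apply, transferFun_apply, homOfKer_smul]
    simp

end Transfer

section Rank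

variable {X I : Type*} [Fintype X] [Fintype I]

/-- The abelianized relator matrix, as a linear map. -/
def relMap (p : I → FreeGroup X) : (X → ℚ) →ₗ[ℚ] (I → ℚ) where
  toFun v := fun i => expo v (p i)
  map_add' v v' := by funext i; exact expo_left_add v v' (p i)
  map_smul' q v := by funext i; exact expo_left_smul q v (p i)

lemma ker_relMap (p : I → FreeGroup X) :
    LinearMap.ker (relMap p) = kerSpace (Set.range p) := by
  ext v
  constructor
  · intro hv w hw
    obtain ⟨i, rfl⟩ := hw
    have := congrFun (LinearMap.mem_ker.mp hv) i
    exact this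
  · intro hv
    apply LinearMap.mem_ker.mpr
    funext i
    exact hv (p i) ⟨i, rfl⟩

lemma card_le_card_add_finrank (p : I → FreeGroup X) :
    Fintype.card X ≤ Fintype.card I + Module.finrank ℚ (kerSpace (Set.range p)) := by
  have h1 := LinearMap.finrank_range_add_finrank_ker (relMap p)
  rw [ker_relMap] at h1
  have h2 : Module.finrank ℚ (LinearMap.range (relMap p)) ≤ Fintype.card I := by
    have := Submodule.finrank_le (LinearMap.range (relMap p))
    simpa [Module.finrank_pi] using this
  have h3 : Module.finrank ℚ (X → ℚ) = Fintype.card X := by simp [Module.finrank_pi]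
  omega

lemma relMap_surjective (p : I → FreeGroup X)
    (h : Module.finrank ℚ (kerSpace (Set.range p)) + Fintype.card I = Fintype.card X) :
    Function.Surjective (relMap p) := by
  have h1 := LinearMap.finrank_range_add_finrank_ker (relMap p)
  rw [ker_relMap] at h1
  have h3 : Module.finrank ℚ (X → ℚ) = Fintype.card X := by simp [Module.finrank_pi]
  have h4 : Module.finrank ℚ (LinearMap.range (relMap p)) = Fintype.card I := by omega
  have h5 : LinearMap.range (relMap p) = ⊤ := by
    apply Submodule.eq_top_of_finrank_eq
    rw [h4]
    simp [Module.finrank_pi]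
  exact LinearMap.range_eq_top.mp h5

end Rank

section Orbifold

variable (g k : ℕ) (m : Fin k → ℕ)

/-- The generator `z_j`. -/
def zgen (j : Fin k) : FreeGroup (Fin g ⊕ Fin g ⊕ Fin k) :=
  FreeGroup.of (Sum.inr (Sum.inr j))

/-- The long relator. -/
def longRel : FreeGroup (Fin g ⊕ Fin g ⊕ Fin k) :=
  (List.ofFn fun i : Fin g =>
      ⁅FreeGroup.of (Sum.inl i : Fin g ⊕ Fin g ⊕ Fin k),
        FreeGroup.of (Sum.inr (Sum.inl i))⁆).prod *
    (List.ofFn fun j : Fin k => FreeGroup.of (Sum.inr (Sum.inr j))).prod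

lemma orbifoldRels_eq :
    orbifoldRels g k m = insert (longRel g k) (Set.range fun j : Fin k => zgen g k j ^ m j) := rfl

lemma longRel_mem : longRel g k ∈ orbifoldRels g k m := by
  rw [orbifoldRels_eq]; exact Set.mem_insert _ _

lemma zpow_mem (j : Fin k) : zgen g k j ^ m j ∈ orbifoldRels g k m := by
  rw [orbifoldRels_eq]; exact Set.mem_insert_of_mem _ ⟨j, rfl⟩

lemma expo_longRel (v : (Fin g ⊕ Fin g ⊕ Fin k) → ℚ) :
    expo v (longRel g k) = ∑ j : Fin k, v (Sum.inr (Sum.inr j)) := by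
  unfold longRel
  rw [expo_mul, expo_listProd, expo_listProd]
  simp [List.map_ofFn, Function.comp_def, List.sum_ofFn]

lemma expo_zpow (v : (Fin g ⊕ Fin g ⊕ Fin k) → ℚ) (j : Fin k) :
    expo v (zgen g k j ^ m j) = (m j : ℚ) * v (Sum.inr (Sum.inr j)) := by
  simp [zgen]

lemma z_coord_eq_zero (hm : ∀ j, 2 ≤ m j) {v : (Fin g ⊕ Fin g ⊕ Fin k) → ℚ}
    (hv : v ∈ kerSpace (orbifoldRels g k m)) (j : Fin k) : v (Sum.inr (Sum.inr j)) = 0 := by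
  have h := hv _ (zpow_mem g k m j)
  rw [expo_zpow] at h
  have hmj : (m j : ℚ) ≠ 0 := by
    have := hm j; positivity
  exact (mul_eq_zero.mp h).resolve_left hmj

/-- Extension of a weight on the `x,y` generators by zero on the `z` generators. -/
def extendXY (u : (Fin g ⊕ Fin g) → ℚ) : (Fin g ⊕ Fin g ⊕ Fin k) → ℚ :=
  fun s => match s with
  | .inl i => u (.inl i)
  | .inr (.inl i) => u (.inr i)
  | .inr (.inr _) => 0

lemma extendXY_mem (u : (Fin g ⊕ Fin g) → ℚ) :
    extendXY g k u ∈ kerSpace (orbifoldRels g k m) := by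
  intro w hw
  rw [orbifoldRels_eq] at hw
  rcases hw with rfl | ⟨j, rfl⟩
  · rw [expo_longRel]
    simp [extendXY]
  · rw [expo_zpow]
    simp [extendXY]

/-- The weight space of the standard presentation is `ℚ^{2g}`. -/
def kerOrbEquiv (hm : ∀ j, 2 ≤ m j) :
    kerSpace (orbifoldRels g k m) ≃ₗ[ℚ] ((Fin g ⊕ Fin g) → ℚ) where
  toFun v := fun p => v.1 (p.elim Sum.inl (Sum.inr ∘ Sum.inl))
  invFun u := ⟨extendXY g k u, extendXY_mem g k m u⟩
  left_inv v := by
    apply Subtype.ext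
    funext s
    rcases s with i | s
    · rfl
    · rcases s with i | j
      · rfl
      · exact (z_coord_eq_zero g k m hm v.2 j).symm
  right_inv u := by funext p; rcases p with i | i <;> rfl
  map_add' v v' := by funext p; rfl
  map_smul' q v := by funext p; rfl

lemma finrank_kerSpace_orbifold (hm : ∀ j, 2 ≤ m j) :
    Module.finrank ℚ (kerSpace (orbifoldRels g k m)) = g + g := by
  rw [LinearEquiv.finrank_eq (kerOrbEquiv g k m hm)]
  simp [Module.finrank_pi]

end Orbifold

section HeisRep

variable (g k : ℕ) (m : Fin k → ℕ)

/-- Images of the generators in the Heisenberg group. -/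
def psiGen : (Fin g ⊕ Fin g ⊕ Fin k) → Heis
  | .inl _ => ⟨1, 0, 0⟩
  | .inr (.inl _) => ⟨0, 1, 0⟩
  | .inr (.inr _) => 1

/-- The Heisenberg representation of the free group on the standard generators. -/
def Psi : FreeGroup (Fin g ⊕ Fin g ⊕ Fin k) →* Heis :=
  FreeGroup.lift (psiGen g k)

lemma Heis_central_pow (t : ℚ) (n : ℕ) : (⟨0, 0, t⟩ : Heis) ^ n = ⟨0, 0, n * t⟩ := by
  induction n with
  | zero => ext <;> simp
  | succ n ih =>
      rw [pow_succ, ih]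
      ext <;> simp <;> push_cast <;> ring

lemma Psi_commutator (i : Fin g) :
    Psi g k ⁅FreeGroup.of (Sum.inl i : Fin g ⊕ Fin g ⊕ Fin k),
      FreeGroup.of (Sum.inr (Sum.inl i))⁆ = ⟨0, 0, 1⟩ := by
  rw [map_commutatorElement]
  have h1 : Psi g k (FreeGroup.of (Sum.inl i)) = ⟨1, 0, 0⟩ := FreeGroup.lift_apply_of
  have h2 : Psi g k (FreeGroup.of (Sum.inr (Sum.inl i))) = ⟨0, 1, 0⟩ := FreeGroup.lift_apply_of
  rw [h1, h2, Heis.commutator_xy]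

lemma Psi_z (j : Fin k) : Psi g k (zgen g k j) = 1 := FreeGroup.lift_apply_of

lemma Psi_longRel : Psi g k (longRel g k) = ⟨0, 0, (g : ℚ)⟩ := by
  unfold longRel
  rw [map_mul, map_list_prod, map_list_prod, List.map_ofFn, List.map_ofFn]
  have h1 : List.ofFn ((Psi g k) ∘ fun i : Fin g =>
      ⁅FreeGroup.of (Sum.inl i : Fin g ⊕ Fin g ⊕ Fin k),
        FreeGroup.of (Sum.inr (Sum.inl i))⁆) = List.ofFn (fun _ : Fin g => (⟨0,0,1⟩ : Heis)) := by
    congr 1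
    funext i
    exact Psi_commutator g k i
  have h2 : List.ofFn ((Psi g k) ∘ fun j : Fin k =>
      FreeGroup.of (Sum.inr (Sum.inr j) : Fin g ⊕ Fin g ⊕ Fin k))
      = List.ofFn (fun _ : Fin k => (1 : Heis)) := by
    congr 1
    funext j
    exact Psi_z g k j
  rw [h1, h2, List.ofFn_const, List.ofFn_const, List.prod_replicate, List.prod_replicate,
    one_pow, mul_one, Heis_central_pow]
  ext <;> simp

lemma Psi_zpow (j : Fin k) : Psi g k (zgen g k j ^ m j) = 1 := by
  rw [map_pow, Psi_z, one_pow]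

/-- First two Heisenberg coordinates vanish on the normal closure of the relators. -/
lemma Psi_coords {w : FreeGroup (Fin g ⊕ Fin g ⊕ Fin k)}
    (hw : w ∈ Subgroup.normalClosure (orbifoldRels g k m)) :
    (Psi g k w).x = 0 ∧ (Psi g k w).y = 0 := by
  have key : ∀ (q : Heis →* Multiplicative ℚ),
      (∀ u ∈ orbifoldRels g k m, q (Psi g k u) = 1) → q (Psi g k w) = 1 := by
    intro q hq
    have : Subgroup.normalClosure (orbifoldRels g k m) ≤ (q.comp (Psi g k)).ker :=
      Subgroup.normalClosure_le_normal (fun u hu => MonoidHom.mem_ker.2 (hq u hu))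
    exact this hw
  constructor
  · have := key Heis.px (by
      intro u hu
      rw [orbifoldRels_eq] at hu
      rcases hu with rfl | ⟨j, rfl⟩
      · rw [Psi_longRel]; rfl
      · rw [Psi_zpow]; rfl)
    exact congrArg Multiplicative.toAdd this
  · have := key Heis.py (by
      intro u hu
      rw [orbifoldRels_eq] at hu
      rcases hu with rfl | ⟨j, rfl⟩
      · rw [Psi_longRel]; rfl
      · rw [Psi_zpow]; rfl)
    exact congrArg Multiplicative.toAdd this

/-- The "relator count" weight on the kernel. -/
def phi (w : FreeGroup (Fin g ⊕ Fin g ⊕ Fin k)) : ℚ := (Psi g k w).z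

lemma phi_one : phi g k 1 = 0 := by simp [phi]

lemma phi_longRel : phi g k (longRel g k) = (g : ℚ) := by rw [phi, Psi_longRel]

lemma phi_zpow (j : Fin k) : phi g k (zgen g k j ^ m j) = 0 := by rw [phi, Psi_zpow]; rfl

lemma phi_mul {n n' : FreeGroup (Fin g ⊕ Fin g ⊕ Fin k)}
    (hn : n ∈ Subgroup.normalClosure (orbifoldRels g k m)) :
    phi g k (n * n') = phi g k n + phi g k n' := by
  have h := Psi_coords g k m hn
  rw [phi, phi, phi, map_mul, Heis.mul_z, h.1]
  ring

lemma phi_inv {n : FreeGroup (Fin g ⊕ Fin g ⊕ Fin k)}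
    (hn : n ∈ Subgroup.normalClosure (orbifoldRels g k m)) :
    phi g k n⁻¹ = -phi g k n := by
  have h := Psi_coords g k m hn
  rw [phi, phi, map_inv, Heis.inv_z, h.1]
  ring

lemma phi_conj (w : FreeGroup (Fin g ⊕ Fin g ⊕ Fin k))
    {n : FreeGroup (Fin g ⊕ Fin g ⊕ Fin k)}
    (hn : n ∈ Subgroup.normalClosure (orbifoldRels g k m)) :
    phi g k (w * n * w⁻¹) = phi g k n := by
  have h := Psi_coords g k m hn
  rw [phi, phi, map_mul, map_mul, map_inv]
  exact Heis.conj_z (Psi g k w) (Psi g k n) h.1 h.2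

end HeisRep

section Lift

variable {X Y : Type*} {relsX : Set (FreeGroup X)} {relsY : Set (FreeGroup Y)}

/-- A lift of an isomorphism of presented groups to the free groups. -/
noncomputable def liftHom (e : PresentedGroup relsX ≃* PresentedGroup relsY) :
    FreeGroup X →* FreeGroup Y :=
  FreeGroup.lift fun s =>
    Classical.choose (PresentedGroup.mk_surjective relsY (e (PresentedGroup.of s)))

lemma liftHom_spec (e : PresentedGroup relsX ≃* PresentedGroup relsY) (w : FreeGroup X) :
    PresentedGroup.mk relsY (liftHom e w) = e (PresentedGroup.mk relsX w) := by
  have h : (PresentedGroup.mk relsY).comp (liftHom e)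
      = (e.toMonoidHom).comp (PresentedGroup.mk relsX) := by
    apply FreeGroup.ext_hom
    intro s
    have := Classical.choose_spec (PresentedGroup.mk_surjective relsY (e (PresentedGroup.of s)))
    simp only [MonoidHom.comp_apply, liftHom, FreeGroup.lift_apply_of]
    exact this
  exact DFunLike.congr_fun h w

lemma liftHom_mem (e : PresentedGroup relsX ≃* PresentedGroup relsY) {w : FreeGroup X}
    (hw : w ∈ Subgroup.normalClosure relsX) :
    liftHom e w ∈ Subgroup.normalClosure relsY := by
  have h1 : PresentedGroup.mk relsX w = 1 := (QuotientGroup.eq_one_iff w).mpr hw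
  have h2 : PresentedGroup.mk relsY (liftHom e w) = 1 := by
    rw [liftHom_spec, h1, map_one]
  exact (QuotientGroup.eq_one_iff _).mp h2

lemma liftHom_inv_self_mem (e : PresentedGroup relsX ≃* PresentedGroup relsY) (w : FreeGroup X) :
    w⁻¹ * liftHom e.symm (liftHom e w) ∈ Subgroup.normalClosure relsX := by
  have h : PresentedGroup.mk relsX (w⁻¹ * liftHom e.symm (liftHom e w)) = 1 := by
    rw [map_mul, liftHom_spec, liftHom_spec]
    simp
  exact (QuotientGroup.eq_one_iff _).mp h

end Lift

/-- The key upper bound: any presentation of the orbifold surface group with `a` generators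
and `b` relators satisfies `a - b ≤ 2g - 1`. -/
lemma upper_bound (g k : ℕ) (hg : 1 ≤ g) (m : Fin k → ℕ) (hm : ∀ j, 2 ≤ m j)
    (a b : ℕ) (r : Fin b → FreeGroup (Fin a))
    (θ : OrbifoldSurfaceGroup g k m ≃* PresentedGroup (Set.range r)) :
    (a : ℤ) - (b : ℤ) ≤ 2 * (g : ℤ) - 1 := by
  by_contra hcon
  push_neg at hcon
  -- the weight space of the given presentation has dimension `2g`
  have hfr : Module.finrank ℚ (kerSpace (Set.range r)) = g + g := by
    rw [LinearEquiv.finrank_eq (kerLequiv θ.symm)]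
    exact finrank_kerSpace_orbifold g k m hm
  have hcard := card_le_card_add_finrank r
  rw [hfr, Fintype.card_fin, Fintype.card_fin] at hcard
  -- so `a = b + 2g` exactly
  have hab : a = b + (g + g) := by omega
  have hsur := relMap_surjective r (by rw [hfr, Fintype.card_fin, Fintype.card_fin]; omega)
  set N0 := Subgroup.normalClosure (orbifoldRels g k m) with hN0
  -- the lifted homomorphisms between the free groups
  let lα := liftHom θ
  let lβ := liftHom θ.symm
  have hnmem : ∀ w, w⁻¹ * lβ (lα w) ∈ N0 := fun w => liftHom_inv_self_mem θ w
  -- the dual weight vector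
  obtain ⟨v, hv⟩ := hsur (fun i => phi g k (lβ (r i)))
  have hvi : ∀ i, expo v (r i) = phi g k (lβ (r i)) := fun i => congrFun hv i
  -- the subgroup of the free group where the two relator counts agree
  let K : Subgroup (FreeGroup (Fin a)) :=
    { carrier := {x | lβ x ∈ N0 ∧ phi g k (lβ x) = expo v x}
      one_mem' := by
        constructor
        · rw [map_one]; exact one_mem _
        · rw [map_one, phi_one]; simp
      mul_mem' := by
        rintro x y ⟨hx1, hx2⟩ ⟨hy1, hy2⟩
        constructor
        · rw [map_mul]; exact mul_mem hx1 hy1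
        · rw [map_mul, phi_mul g k m hx1, hx2, hy2, expo_mul]
      inv_mem' := by
        rintro x ⟨hx1, hx2⟩
        constructor
        · rw [map_inv]; exact inv_mem hx1
        · rw [map_inv, phi_inv g k m hx1, hx2, expo_inv] }
  haveI hKn : K.Normal := by
    constructor
    rintro x ⟨hx1, hx2⟩ w
    constructor
    · show lβ (w * x * w⁻¹) ∈ N0
      rw [map_mul, map_mul, map_inv]
      exact Subgroup.Normal.conj_mem (Subgroup.normalClosure_normal) _ hx1 _
    · show phi g k (lβ (w * x * w⁻¹)) = expo v (w * x * w⁻¹)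
      rw [map_mul, map_mul, map_inv, phi_conj g k m (lβ w) hx1, hx2]
      rw [expo_mul, expo_mul, expo_inv]
      ring
  have hNK : Subgroup.normalClosure (Set.range r) ≤ K := by
    apply Subgroup.normalClosure_le_normal
    rintro x ⟨i, rfl⟩
    constructor
    · exact liftHom_mem θ.symm (Subgroup.subset_normalClosure ⟨i, rfl⟩)
    · exact (hvi i).symm
  -- the defect homomorphism `D`
  have hDmul : ∀ w1 w2 : FreeGroup (Fin g ⊕ Fin g ⊕ Fin k),
      phi g k ((w1 * w2)⁻¹ * lβ (lα (w1 * w2))) - expo v (lα (w1 * w2))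
        = (phi g k (w1⁻¹ * lβ (lα w1)) - expo v (lα w1))
          + (phi g k (w2⁻¹ * lβ (lα w2)) - expo v (lα w2)) := by
    intro w1 w2
    have hid : (w1 * w2)⁻¹ * lβ (lα (w1 * w2))
        = (w2⁻¹ * (w1⁻¹ * lβ (lα w1)) * w2⁻¹⁻¹) * (w2⁻¹ * lβ (lα w2)) := by
      rw [map_mul, map_mul]
      group
    rw [hid, phi_mul g k m
        (Subgroup.Normal.conj_mem (Subgroup.normalClosure_normal) _ (hnmem w1) _),
      phi_conj g k m _ (hnmem w1), map_mul, expo_mul]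
    ring
  let D : FreeGroup (Fin g ⊕ Fin g ⊕ Fin k) →* Multiplicative ℚ :=
    { toFun := fun w => Multiplicative.ofAdd (phi g k (w⁻¹ * lβ (lα w)) - expo v (lα w))
      map_one' := by
        simp only [inv_one, one_mul, map_one, phi_one, expo_one]
        simp
      map_mul' := fun w1 w2 => by
        rw [← ofAdd_add, ← hDmul w1 w2] }
  have hDval : ∀ w ∈ N0, D w = Multiplicative.ofAdd (-phi g k w) := by
    intro w hw
    have h1 : lα w ∈ Subgroup.normalClosure (Set.range r) := liftHom_mem θ hw
    have h2 := hNK h1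
    obtain ⟨h3, h4⟩ := h2
    show Multiplicative.ofAdd (phi g k (w⁻¹ * lβ (lα w)) - expo v (lα w))
        = Multiplicative.ofAdd (-phi g k w)
    rw [phi_mul g k m (inv_mem hw), phi_inv g k m hw, h4]
    ring_nf
  -- `D` kills each `z_j`
  have hz : ∀ j : Fin k, D (zgen g k j) = 1 := by
    intro j
    have h1 : D (zgen g k j ^ m j) = 1 := by
      rw [hDval _ (Subgroup.subset_normalClosure (zpow_mem g k m j)), phi_zpow]
      simp
    rw [map_pow] at h1
    have h2 := congrArg Multiplicative.toAdd h1
    rw [toAdd_pow] at h2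
    have hmj : (m j : ℚ) ≠ 0 := by have := hm j; positivity
    have h2' : (m j : ℚ) * Multiplicative.toAdd (D (zgen g k j)) = 0 := by
      rw [← nsmul_eq_mul]
      simpa using h2
    have h4 : Multiplicative.toAdd (D (zgen g k j)) = 0 := by
      rcases mul_eq_zero.mp h2' with h | h
      · exact absurd h hmj
      · exact h
    calc D (zgen g k j) = Multiplicative.ofAdd (Multiplicative.toAdd (D (zgen g k j))) := rfl
      _ = Multiplicative.ofAdd 0 := by rw [h4]
      _ = 1 := rfl
  -- `D` of the long relator, computed two ways
  have hlong1 : D (longRel g k) = Multiplicative.ofAdd (-(g : ℚ)) := by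
    rw [hDval _ (Subgroup.subset_normalClosure (longRel_mem g k m)), phi_longRel]
  have hlong2 : D (longRel g k) = 1 := by
    unfold longRel
    rw [map_mul, map_list_prod, map_list_prod, List.map_ofFn, List.map_ofFn]
    have h1 : List.ofFn (D ∘ fun i : Fin g =>
        ⁅FreeGroup.of (Sum.inl i : Fin g ⊕ Fin g ⊕ Fin k),
          FreeGroup.of (Sum.inr (Sum.inl i))⁆) = List.ofFn (fun _ : Fin g => (1 : Multiplicative ℚ)) := by
      congr 1
      funext i
      show D ⁅_, _⁆ = 1
      rw [map_commutatorElement]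
      exact commutatorElement_eq_one_iff_commute.mpr (mul_comm _ _)
    have h2 : List.ofFn (D ∘ fun j : Fin k =>
        FreeGroup.of (Sum.inr (Sum.inr j) : Fin g ⊕ Fin g ⊕ Fin k))
        = List.ofFn (fun _ : Fin k => (1 : Multiplicative ℚ)) := by
      congr 1
      funext j
      exact hz j
    rw [h1, h2, List.ofFn_const, List.ofFn_const, List.prod_replicate, List.prod_replicate,
      one_pow, one_pow, mul_one]
  rw [hlong2] at hlong1
  have : -(g : ℚ) = 0 := by
    have := congrArg Multiplicative.toAdd hlong1
    simpa using this.symm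
  have : (g : ℚ) = 0 := by linarith
  have : g = 0 := by exact_mod_cast this
  omega

/-- The standard relators as a finite family. -/
def rho (g k : ℕ) (m : Fin k → ℕ) : Fin (k + 1) → FreeGroup (Fin g ⊕ Fin g ⊕ Fin k) :=
  Fin.cases (longRel g k) (fun j => zgen g k j ^ m j)

lemma range_rho (g k : ℕ) (m : Fin k → ℕ) : Set.range (rho g k m) = orbifoldRels g k m := by
  ext w
  constructor
  · rintro ⟨t, rfl⟩
    rcases Fin.eq_zero_or_eq_succ t with rfl | ⟨j, rfl⟩
    · simpa [rho] using longRel_mem g k m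
    · simpa [rho] using zpow_mem g k m j
  · intro hw
    rw [orbifoldRels_eq] at hw
    rcases hw with rfl | ⟨j, rfl⟩
    · exact ⟨0, by simp [rho]⟩
    · exact ⟨j.succ, by simp [rho]⟩

/-- The standard presentation realizes deficiency `2g - 1`. -/
lemma exists_presentation (g k : ℕ) (m : Fin k → ℕ) :
    IsPresentation (OrbifoldSurfaceGroup g k m) (g + (g + k)) (k + 1) := by
  let e : (Fin g ⊕ Fin g ⊕ Fin k) ≃ Fin (g + (g + k)) :=
    (Equiv.sumCongr (Equiv.refl (Fin g)) finSumFinEquiv).trans finSumFinEquiv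
  refine ⟨(FreeGroup.freeGroupCongr e) ∘ rho g k m, ?_⟩
  have himg : FreeGroup.freeGroupCongr e '' orbifoldRels g k m
      = Set.range ((FreeGroup.freeGroupCongr e) ∘ rho g k m) := by
    rw [Set.range_comp, range_rho]
  exact ⟨himg ▸ PresentedGroup.equivPresentedGroup (orbifoldRels g k m) e⟩

end OrbAux

/-- The deficiency of the orbifold surface group `Γ(g; m_1, …, m_k)` with `g ≥ 1` and
all `m_i ≥ 2` equals `2g - 1`. -/
theorem deficiency_orbifoldSurfaceGroup (g k : ℕ) (hg : 1 ≤ g) (m : Fin k → ℕ)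
    (hm : ∀ j, 2 ≤ m j) :
    HasDeficiency (OrbifoldSurfaceGroup g k m) (2 * (g : ℤ) - 1) := by
  constructor
  · refine ⟨g + (g + k), k + 1, OrbAux.exists_presentation g k m, ?_⟩
    push_cast
    ring
  · rintro a b ⟨r, ⟨θ⟩⟩
    exact OrbAux.upper_bound g k hg m hm a b r θ
end

section
/- (Morse inequality / P. Hall's inequality) Let Γ be a group admitting a finite presentation with a generators and b relators, and let K be a field. Then a − b ≤ b_1(Γ; K) − b_2(Γ; K). In particular, def(Γ) ≤ b_1(Γ; K) − b_2(Γ; K). -/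
/-- `bettiNumber K Γ i` is the `K`-dimension of the group cohomology `H^i(Γ; K)`
with trivial coefficients. -/
noncomputable def bettiNumber (K : Type) [Field K] (Γ : Type) [Group Γ] (i : ℕ) : ℕ :=
  Module.finrank K (groupCohomology (Rep.trivial K Γ K) i)

open groupCohomology

namespace Morse

variable {K : Type} [Field K] {Γ : Type} [Group Γ] {a b : ℕ}

/-! ### The linearized relation matrix -/

/-- The monoid hom `FreeGroup (Fin a) →* Multiplicative K` induced by `v : Fin a → K`. -/
noncomputable def flift (v : Fin a → K) : FreeGroup (Fin a) →* Multiplicative K :=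
  FreeGroup.lift fun i => Multiplicative.ofAdd (v i)

@[simp] lemma flift_of (v : Fin a → K) (i : Fin a) :
    flift v (FreeGroup.of i) = Multiplicative.ofAdd (v i) :=
  FreeGroup.lift_apply_of

lemma flift_add (v w : Fin a → K) (x : FreeGroup (Fin a)) :
    Multiplicative.toAdd (flift (v + w) x)
      = Multiplicative.toAdd (flift v x) + Multiplicative.toAdd (flift w x) := by
  have : flift (v + w) = (flift v) * (flift w) := by
    apply FreeGroup.ext_hom
    intro i
    simp [flift]
  simp [this]

lemma flift_smul (c : K) (v : Fin a → K) (x : FreeGroup (Fin a)) :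
    Multiplicative.toAdd (flift (c • v) x) = c * Multiplicative.toAdd (flift v x) := by
  induction x using FreeGroup.induction_on with
  | C1 => simp [flift]
  | of i => simp [flift]
  | inv_of i h => simp_all [flift]
  | mul x y hx hy =>
      simp only [flift, Pi.smul_apply, smul_eq_mul] at hx hy ⊢
      simp [map_mul, toAdd_mul, hx, hy, mul_add]

/-- Evaluation of relators: the linearized relation matrix, as a linear map `K^a → K^b`. -/
noncomputable def ev (r : Fin b → FreeGroup (Fin a)) : (Fin a → K) →ₗ[K] (Fin b → K) where
  toFun v j := Multiplicative.toAdd (flift v (r j))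
  map_add' v w := funext fun j => flift_add v w (r j)
  map_smul' c v := funext fun j => flift_smul c v (r j)

lemma ev_apply (r : Fin b → FreeGroup (Fin a)) (v : Fin a → K) (j : Fin b) :
    ev r v j = Multiplicative.toAdd (flift v (r j)) := rfl

/-! ### Identification of the first cohomology -/

section H1part
variable (r : Fin b → FreeGroup (Fin a)) (π : FreeGroup (Fin a) →* Γ)

lemma pi_r_eq_one (hk : ∀ w, w ∈ Subgroup.normalClosure (Set.range r) ↔ π w = 1) (j : Fin b) :
    π (r j) = 1 :=
  (hk _).1 (Subgroup.subset_normalClosure ⟨j, rfl⟩)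

lemma flift_eq_comp (ψ : Γ →* Multiplicative K) :
    flift (fun i => Multiplicative.toAdd (ψ (π (FreeGroup.of i)))) = ψ.comp π :=
  FreeGroup.ext_hom _ _ fun i => by simp [flift]

noncomputable def toKerFun (ψ : Additive Γ →+ K) : Fin a → K :=
  fun i => ψ (Additive.ofMul (π (FreeGroup.of i)))

lemma toKerFun_mem (hk : ∀ w, w ∈ Subgroup.normalClosure (Set.range r) ↔ π w = 1)
    (ψ : Additive Γ →+ K) : ev r (toKerFun π ψ) = 0 := by
  funext j
  have h1 : flift (toKerFun π ψ) = (AddMonoidHom.toMultiplicativeRight ψ).comp π :=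
    flift_eq_comp π (AddMonoidHom.toMultiplicativeRight ψ)
  rw [Pi.zero_apply, ev_apply, h1]
  simp [pi_r_eq_one r π hk j]

variable (hs : Function.Surjective π)
    (hk : ∀ w, w ∈ Subgroup.normalClosure (Set.range r) ↔ π w = 1)

include hk in
lemma ker_le_flift_ker {v : Fin a → K} (hv : ev r v = 0) : π.ker ≤ (flift v).ker := by
  intro x hx
  have hx' : x ∈ Subgroup.normalClosure (Set.range r) := (hk x).2 hx
  refine Subgroup.normalClosure_le_normal ?_ hx'
  rintro y ⟨j, rfl⟩
  have : Multiplicative.toAdd (flift v (r j)) = 0 := by rw [← ev_apply]; simp [hv]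
  simpa [MonoidHom.mem_ker] using this

noncomputable def ofKer (v : Fin a → K) (hv : ev r v = 0) : Γ →* Multiplicative K :=
  π.liftOfRightInverse (Function.surjInv hs) (Function.rightInverse_surjInv hs)
    ⟨flift v, ker_le_flift_ker r π hk hv⟩

lemma ofKer_π (v : Fin a → K) (hv : ev r v = 0) (x : FreeGroup (Fin a)) :
    ofKer r π hs hk v hv (π x) = flift v x :=
  MonoidHom.liftOfRightInverse_comp_apply _ _ _ _ x

/-- Group homs `Γ → K` are identified with the kernel of the relation matrix. -/
noncomputable def addHomEquivKer : (Additive Γ →+ K) ≃ₗ[K] LinearMap.ker (ev (K := K) r) where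
  toFun ψ := ⟨toKerFun π ψ, LinearMap.mem_ker.2 (toKerFun_mem r π hk ψ)⟩
  map_add' ψ χ := rfl
  map_smul' c ψ := rfl
  invFun v := MonoidHom.toAdditiveLeft (ofKer r π hs hk v.1 (LinearMap.mem_ker.1 v.2))
  left_inv ψ := by
    have key : ∀ hv, ofKer r π hs hk (toKerFun π ψ) hv = AddMonoidHom.toMultiplicativeRight ψ := by
      intro hv
      apply MonoidHom.ext
      intro g
      obtain ⟨x, rfl⟩ := hs g
      rw [ofKer_π]
      exact DFunLike.congr_fun (flift_eq_comp π (AddMonoidHom.toMultiplicativeRight ψ)) x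
    dsimp only
    rw [key]
    exact AddMonoidHom.toMultiplicativeRight.symm_apply_apply ψ
  right_inv v := by
    apply Subtype.ext
    funext i
    dsimp only [toKerFun]
    erw [ofKer_π r π hs hk v.1 (LinearMap.mem_ker.1 v.2) (FreeGroup.of i)]
    simp
    rfl

end H1part

/-! ### Second cohomology: evaluation of 2-cocycles -/

abbrev twoCocycles {k G : Type} [CommRing k] [Group G] (A : Rep k G) :
    Submodule k (G × G → A) := cocycles₂ A

abbrev twoCoboundaries {k G : Type} [CommRing k] [Group G] (A : Rep k G) :
    Submodule k (twoCocycles A) := LinearMap.range (shortComplexH2 A).moduleCatToCycles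

abbrev H2q {k G : Type} [CommRing k] [Group G] (A : Rep k G) := twoCocycles A ⧸ twoCoboundaries A

noncomputable instance : Field (CoeSort.coe (Rep.trivial K Γ K)) := inferInstanceAs (Field K)

section EVC
variable (K Γ)

/-- Evaluation of a 2-cocycle at a pair of group elements, as a linear map. -/
noncomputable def evc (g h : Γ) : twoCocycles (Rep.trivial K Γ K) →ₗ[K] K :=
  (LinearMap.proj (g, h)).comp (twoCocycles (Rep.trivial K Γ K)).subtype

end EVC

@[simp] lemma evc_apply (g h : Γ) (σ : twoCocycles (Rep.trivial K Γ K)) :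
    evc K Γ g h σ = σ.1 (g, h) := rfl

lemma cocy (σ : twoCocycles (Rep.trivial K Γ K)) (g h j : Γ) :
    σ.1 (g * h, j) + σ.1 (g, h)
      = σ.1 (h, j) + σ.1 (g, h * j) := by
  have := (mem_cocycles₂_iff (A := Rep.trivial K Γ K) σ.1).1 σ.2 g h j
  simpa using this

lemma cocy_one_snd (σ : twoCocycles (Rep.trivial K Γ K)) (g : Γ) :
    σ.1 (g, 1) = σ.1 (1, 1) := by
  have h := cocy σ g 1 1
  rw [mul_one, mul_one] at h
  linear_combination h

lemma cocy_one_fst (σ : twoCocycles (Rep.trivial K Γ K)) (g : Γ) :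
    σ.1 (1, g) = σ.1 (1, 1) := by
  have h := cocy σ 1 1 g
  rw [one_mul, one_mul] at h
  linear_combination -h

lemma cocy_inv (σ : twoCocycles (Rep.trivial K Γ K)) (g : Γ) :
    σ.1 (g⁻¹, g) = σ.1 (g, g⁻¹) := by
  have h := cocy σ g g⁻¹ g
  rw [mul_inv_cancel, inv_mul_cancel, cocy_one_fst] at h
  linear_combination - cocy_one_snd σ g - h

/-- The value of a 2-cocycle, typed in `K`. -/
def sval (σ : twoCocycles (Rep.trivial K Γ K)) (g h : Γ) : K := σ.1 (g, h)

lemma sval_cocy (σ : twoCocycles (Rep.trivial K Γ K)) (g h j : Γ) :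
    sval σ (g * h) j + sval σ g h = sval σ h j + sval σ g (h * j) := cocy σ g h j

lemma sval_one_snd (σ : twoCocycles (Rep.trivial K Γ K)) (g : Γ) :
    sval σ g 1 = sval σ 1 1 := cocy_one_snd σ g

lemma sval_one_fst (σ : twoCocycles (Rep.trivial K Γ K)) (g : Γ) :
    sval σ 1 g = sval σ 1 1 := cocy_one_fst σ g

lemma sval_inv (σ : twoCocycles (Rep.trivial K Γ K)) (g : Γ) :
    sval σ g⁻¹ g = sval σ g g⁻¹ := cocy_inv σ g

lemma evc_sval (g h : Γ) (σ : twoCocycles (Rep.trivial K Γ K)) :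
    evc K Γ g h σ = sval σ g h := rfl

/-- The universal central extension gadget: pairs of a linear functional on 2-cocycles
and a group element. -/
@[ext] structure UE (K Γ : Type) [Field K] [Group Γ] where
  c : twoCocycles (Rep.trivial K Γ K) →ₗ[K] K
  g : Γ

namespace UE

noncomputable instance : Mul (UE K Γ) :=
  ⟨fun x y => ⟨x.c + y.c + evc K Γ x.g y.g, x.g * y.g⟩⟩
noncomputable instance : One (UE K Γ) := ⟨⟨-evc K Γ 1 1, 1⟩⟩
noncomputable instance : Inv (UE K Γ) :=
  ⟨fun x => ⟨-x.c - evc K Γ x.g x.g⁻¹ - evc K Γ 1 1, x.g⁻¹⟩⟩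

@[simp] lemma mul_c (x y : UE K Γ) : (x * y).c = x.c + y.c + evc K Γ x.g y.g := rfl
@[simp] lemma mul_g (x y : UE K Γ) : (x * y).g = x.g * y.g := rfl
@[simp] lemma one_c : (1 : UE K Γ).c = -evc K Γ 1 1 := rfl
@[simp] lemma one_g : (1 : UE K Γ).g = 1 := rfl
@[simp] lemma inv_c (x : UE K Γ) : (x⁻¹).c = -x.c - evc K Γ x.g x.g⁻¹ - evc K Γ 1 1 := rfl
@[simp] lemma inv_g (x : UE K Γ) : (x⁻¹).g = x.g⁻¹ := rfl

noncomputable instance : Group (UE K Γ) :=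
  Group.ofLeftAxioms
    (fun x y z => by
      ext σ
      · simp only [mul_c, mul_g, LinearMap.add_apply, evc_apply]
        linear_combination cocy σ x.g y.g z.g
      · exact mul_assoc _ _ _)
    (fun x => by
      ext σ
      · simp only [mul_c, mul_g, one_c, one_g, LinearMap.add_apply, LinearMap.neg_apply,
          evc_apply, cocy_one_fst]
        ring
      · exact one_mul _)
    (fun x => by
      ext σ
      · simp only [mul_c, mul_g, inv_c, inv_g, one_c, LinearMap.add_apply, LinearMap.sub_apply,
          LinearMap.neg_apply, evc_apply, cocy_inv]
        ring
      · exact inv_mul_cancel _)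

/-- Projection to `Γ`. -/
def proj : UE K Γ →* Γ := { toFun := UE.g, map_one' := rfl, map_mul' := fun _ _ => rfl }

@[simp] lemma proj_apply (x : UE K Γ) : proj x = x.g := rfl

end UE

section Lift
variable (π : FreeGroup (Fin a) →* Γ)

/-- The lift of the free group into the universal gadget. -/
noncomputable def LL : FreeGroup (Fin a) →* UE K Γ :=
  FreeGroup.lift fun i => ⟨0, π (FreeGroup.of i)⟩

lemma LL_g (x : FreeGroup (Fin a)) : (LL (K := K) π x).g = π x := by
  have : (UE.proj).comp (LL (K := K) π) = π :=
    FreeGroup.ext_hom _ _ fun i => by simp [LL]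
  exact DFunLike.congr_fun this x

/-- The cocycle-evaluation part of the lift. -/
noncomputable def cc (w : FreeGroup (Fin a)) : twoCocycles (Rep.trivial K Γ K) →ₗ[K] K :=
  (LL π w).c

lemma cc_mul (x y : FreeGroup (Fin a)) :
    cc (K := K) π (x * y) = cc π x + cc π y + evc K Γ (π x) (π y) := by
  simp only [cc, map_mul, UE.mul_c, LL_g]

lemma cc_one : cc (K := K) π 1 = -evc K Γ 1 1 := by
  simp only [cc, map_one, UE.one_c]

lemma cc_inv (x : FreeGroup (Fin a)) :
    cc (K := K) π x⁻¹ = -cc π x - evc K Γ (π x) (π x)⁻¹ - evc K Γ 1 1 := by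
  simp only [cc, map_inv, UE.inv_c, LL_g]

lemma cc_of (i : Fin a) : cc (K := K) π (FreeGroup.of i) = 0 := by
  simp only [cc, LL, FreeGroup.lift_apply_of]

end Lift


/-! ### The map from 2-cocycles to `K^b` -/

section PhiSec
variable (r : Fin b → FreeGroup (Fin a)) (π : FreeGroup (Fin a) →* Γ)

/-- Evaluation of the universal lift on the relators, corrected by `σ(1,1)`. -/
noncomputable def Phi : twoCocycles (Rep.trivial K Γ K) →ₗ[K] (Fin b → K) :=
  LinearMap.pi fun j => cc (K := K) π (r j) + evc K Γ 1 1

lemma Phi_apply (σ : twoCocycles (Rep.trivial K Γ K)) (j : Fin b) :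
    Phi r π σ j = cc (K := K) π (r j) σ + sval σ 1 1 := rfl

lemma cc_dOne (σ : twoCocycles (Rep.trivial K Γ K)) (f : Γ → K)
    (hval : ∀ g h : Γ, sval σ g h = f h - f (g * h) + f g) (w : FreeGroup (Fin a)) :
    cc (K := K) π w σ
      = Multiplicative.toAdd (flift (fun i => f (π (FreeGroup.of i))) w) - f (π w) := by
  induction w using FreeGroup.induction_on with
  | C1 =>
      rw [cc_one]
      simp only [map_one, toAdd_one, LinearMap.neg_apply, evc_sval, hval, mul_one]
      ring
  | of i =>
      rw [cc_of]
      simp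
  | inv_of i h =>
      rw [cc_inv]
      simp only [LinearMap.sub_apply, LinearMap.neg_apply, evc_sval, map_inv, toAdd_inv, h,
        hval, mul_inv_cancel, mul_one, one_mul]
      ring
  | mul x y hx hy =>
      rw [cc_mul]
      simp only [LinearMap.add_apply, evc_sval, map_mul, toAdd_mul, hx, hy, hval]
      ring

lemma Phi_mem_of_coboundary (hk : ∀ w, w ∈ Subgroup.normalClosure (Set.range r) ↔ π w = 1)
    {σ : twoCocycles (Rep.trivial K Γ K)} (hσ : σ ∈ twoCoboundaries (Rep.trivial K Γ K)) :
    Phi r π σ ∈ LinearMap.range (ev (K := K) r) := by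
  obtain ⟨f, hf⟩ := hσ
  have hval : ∀ g h : Γ, sval σ g h = f h - f (g * h) + f g := by
    intro g h
    have h1 : σ.1 = (d₁₂ (Rep.trivial K Γ K)).hom f := by rw [← hf]; rfl
    show σ.1 (g, h) = _
    rw [h1]
    show (Rep.trivial K Γ K).ρ g (f h) - f (g * h) + f g = f h - f (g * h) + f g
    simp [Rep.trivial_ρ_apply, Representation.trivial_apply]
  refine ⟨fun i => f (π (FreeGroup.of i)), ?_⟩
  funext j
  rw [ev_apply]
  show _ = cc (K := K) π (r j) σ + sval σ 1 1
  rw [cc_dOne π σ f hval (r j), pi_r_eq_one r π hk j, hval]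
  simp only [mul_one]
  ring

lemma mem_coboundary_of_Phi_mem
    (hs : Function.Surjective π)
    (hk : ∀ w, w ∈ Subgroup.normalClosure (Set.range r) ↔ π w = 1)
    (σ : twoCocycles (Rep.trivial K Γ K)) (v : Fin a → K)
    (hv : ev (K := K) r v = Phi r π σ) :
    σ ∈ twoCoboundaries (Rep.trivial K Γ K) := by
  classical
  set q : FreeGroup (Fin a) → K :=
    fun w => cc (K := K) π w σ - Multiplicative.toAdd (flift v w) with hq
  have q_mul : ∀ x y, q (x * y) = q x + q y + sval σ (π x) (π y) := by
    intro x y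
    simp only [hq, cc_mul, LinearMap.add_apply, evc_sval, map_mul, toAdd_mul]
    ring
  have q_one : q 1 = -sval σ 1 1 := by
    simp only [hq, cc_one, LinearMap.neg_apply, evc_sval, map_one, toAdd_one]
    ring
  have q_rj : ∀ j, q (r j) = -sval σ 1 1 := by
    intro j
    have h1 : Multiplicative.toAdd (flift v (r j)) = Phi r π σ j := by
      rw [← hv]; rfl
    simp only [hq, h1, Phi_apply]
    ring
  -- the subgroup of elements of the kernel on which `q` is the constant `-σ(1,1)`
  let T : Subgroup (FreeGroup (Fin a)) :=
    { carrier := {w | π w = 1 ∧ q w = -sval σ 1 1}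
      one_mem' := ⟨map_one π, q_one⟩
      mul_mem' := by
        rintro x y ⟨hx1, hx2⟩ ⟨hy1, hy2⟩
        refine ⟨by simp [map_mul, hx1, hy1], ?_⟩
        rw [q_mul, hx1, hy1, hx2, hy2, sval_one_fst]
        ring
      inv_mem' := by
        rintro x ⟨hx1, hx2⟩
        refine ⟨by simp [hx1], ?_⟩
        have h1 := q_mul x⁻¹ x
        rw [inv_mul_cancel, q_one, hx2, hx1, map_inv, hx1, inv_one, sval_one_fst] at h1
        linear_combination -h1 }
  have Tnormal : T.Normal := by
    constructor
    intro n hn w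
    obtain ⟨hn1, hn2⟩ := hn
    refine ⟨by simp [map_mul, hn1], ?_⟩
    have h1 : q (w * n) = q w - sval σ 1 1 + sval σ (π w) 1 := by
      rw [q_mul, hn1, hn2]; ring
    have h2 : q (w * n * w⁻¹) = q (w * n) + q w⁻¹ + sval σ (π w) (π w)⁻¹ := by
      rw [q_mul]
      simp [map_mul, hn1]
    have h3 : q (w * w⁻¹) = q w + q w⁻¹ + sval σ (π w) (π w)⁻¹ := by
      rw [q_mul]
      simp
    rw [mul_inv_cancel, q_one] at h3
    linear_combination h2 + h1 + sval_one_snd σ (π w) - h3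
  have hT : ∀ w, π w = 1 → q w = -sval σ 1 1 := by
    intro w hw
    have : Subgroup.normalClosure (Set.range r) ≤ T := by
      apply Subgroup.normalClosure_le_normal
      rintro y ⟨j, rfl⟩
      exact ⟨pi_r_eq_one r π hk j, q_rj j⟩
    exact (this ((hk w).2 hw)).2
  have hfiber : ∀ x y, π x = π y → q x = q y := by
    intro x y hxy
    have h1 : π (y⁻¹ * x) = 1 := by simp [map_mul, hxy]
    have h2 : q (y * (y⁻¹ * x)) = q y + q (y⁻¹ * x) + sval σ (π y) 1 := by
      rw [q_mul, h1]
    rw [hT _ h1] at h2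
    have h3 : y * (y⁻¹ * x) = x := by group
    rw [h3] at h2
    linear_combination h2 + sval_one_snd σ (π y)
  -- construct the cochain
  let s : Γ → FreeGroup (Fin a) := Function.surjInv hs
  have hsval : ∀ g, π (s g) = g := fun g => Function.surjInv_eq hs g
  let f : Γ → K := fun g => -q (s g)
  have key : ∀ g h : Γ, sval σ g h = f h - f (g * h) + f g := by
    intro g h
    have h1 : q (s g * s h) = q (s (g * h)) := by
      apply hfiber
      simp [map_mul, hsval]
    have h2 : q (s g * s h) = q (s g) + q (s h) + sval σ (π (s g)) (π (s h)) := q_mul _ _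
    rw [hsval, hsval] at h2
    simp only [f]
    rw [h1] at h2
    linear_combination -h2
  refine ⟨f, ?_⟩
  apply Subtype.ext
  show (d₁₂ (Rep.trivial K Γ K)).hom f = σ.1
  funext p
  have hk2 := key p.1 p.2
  simp only [sval] at hk2
  simp only [d₁₂_hom_apply, Rep.trivial_ρ_apply, Representation.trivial_apply]
  linear_combination -hk2

end PhiSec

/-! ### The core inequality -/

section Final
variable (r : Fin b → FreeGroup (Fin a)) (π : FreeGroup (Fin a) →* Γ)

theorem core_ineq (hs : Function.Surjective π)
    (hk : ∀ w, w ∈ Subgroup.normalClosure (Set.range r) ↔ π w = 1) :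
    (a : ℤ) - (b : ℤ) ≤ (bettiNumber K Γ 1 : ℤ) - (bettiNumber K Γ 2 : ℤ) := by
  classical
  have e1 : bettiNumber K Γ 1 = Module.finrank K (LinearMap.ker (ev (K := K) r)) := by
    have E : groupCohomology (Rep.trivial K Γ K) 1 ≃ₗ[K] LinearMap.ker (ev (K := K) r) :=
      (H1IsoOfIsTrivial (Rep.trivial K Γ K)).toLinearEquiv.trans (addHomEquivKer r π hs hk)
    exact E.finrank_eq
  have E2 : groupCohomology (Rep.trivial K Γ K) 2 ≃ₗ[K] H2q (Rep.trivial K Γ K) :=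
    (H2Iso (Rep.trivial K Γ K)).toLinearEquiv
  have hcond : twoCoboundaries (Rep.trivial K Γ K) ≤
      LinearMap.ker ((LinearMap.range (ev (K := K) r)).mkQ.comp (Phi r π)) := by
    intro σ hσ
    simp only [LinearMap.mem_ker, LinearMap.comp_apply, Submodule.mkQ_apply,
      Submodule.Quotient.mk_eq_zero]
    exact Phi_mem_of_coboundary r π hk hσ
  let Xi : H2q (Rep.trivial K Γ K) →ₗ[K] ((Fin b → K) ⧸ LinearMap.range (ev (K := K) r)) :=
    Submodule.liftQ (twoCoboundaries (Rep.trivial K Γ K))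
      ((LinearMap.range (ev (K := K) r)).mkQ.comp (Phi r π)) hcond
  have hXi : Function.Injective Xi := by
    rw [← LinearMap.ker_eq_bot]
    apply Submodule.ker_liftQ_eq_bot
    intro σ hσ
    simp only [LinearMap.mem_ker, LinearMap.comp_apply, Submodule.mkQ_apply,
      Submodule.Quotient.mk_eq_zero] at hσ
    obtain ⟨v, hv⟩ := hσ
    exact mem_coboundary_of_Phi_mem r π hs hk σ v hv
  have hH2le : Module.finrank K (H2q (Rep.trivial K Γ K))
      ≤ Module.finrank K ((Fin b → K) ⧸ LinearMap.range (ev (K := K) r)) :=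
    LinearMap.finrank_le_finrank_of_injective hXi
  have e2 : bettiNumber K Γ 2 = Module.finrank K (H2q (Rep.trivial K Γ K)) := E2.finrank_eq
  have hq : Module.finrank K ((Fin b → K) ⧸ LinearMap.range (ev (K := K) r))
      + Module.finrank K (LinearMap.range (ev (K := K) r)) = Module.finrank K (Fin b → K) :=
    Submodule.finrank_quotient_add_finrank _
  have hrn : Module.finrank K (LinearMap.range (ev (K := K) r))
      + Module.finrank K (LinearMap.ker (ev (K := K) r)) = Module.finrank K (Fin a → K) :=
    LinearMap.finrank_range_add_finrank_ker _
  have ha : Module.finrank K (Fin a → K) = a := by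
    rw [Module.finrank_fintype_fun_eq_card, Fintype.card_fin]
  have hb : Module.finrank K (Fin b → K) = b := by
    rw [Module.finrank_fintype_fun_eq_card, Fintype.card_fin]
  omega

end Final

end Morse

/-- Morse inequality (P. Hall's inequality): if `Γ` has a finite presentation with `a`
generators and `b` relators and `K` is a field, then `a - b ≤ b_1(Γ; K) - b_2(Γ; K)`;
in particular `def(Γ) ≤ b_1(Γ; K) - b_2(Γ; K)`. -/
theorem deficiency_le_betti_sub_betti (Γ : Type) [Group Γ] (K : Type) [Field K]
    (a b : ℕ) (h : IsPresentation Γ a b) :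
    (a : ℤ) - (b : ℤ) ≤ (bettiNumber K Γ 1 : ℤ) - (bettiNumber K Γ 2 : ℤ) ∧
      ∀ n : ℤ, HasDeficiency Γ n →
        n ≤ (bettiNumber K Γ 1 : ℤ) - (bettiNumber K Γ 2 : ℤ) := by
  have main : ∀ a' b' : ℕ, IsPresentation Γ a' b' →
      (a' : ℤ) - (b' : ℤ) ≤ (bettiNumber K Γ 1 : ℤ) - (bettiNumber K Γ 2 : ℤ) := by
    rintro a' b' ⟨r, ⟨e⟩⟩
    let π : FreeGroup (Fin a') →* Γ :=
      (e.symm.toMonoidHom).comp (PresentedGroup.mk (Set.range r))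
    have hs : Function.Surjective π :=
      e.symm.surjective.comp (PresentedGroup.mk_surjective _)
    have hk : ∀ w, w ∈ Subgroup.normalClosure (Set.range r) ↔ π w = 1 := by
      intro w
      have h1 : π w = e.symm (PresentedGroup.mk (Set.range r) w) := rfl
      rw [h1]
      rw [show (1 : Γ) = e.symm 1 from (map_one e.symm).symm]
      rw [e.symm.injective.eq_iff]
      exact (QuotientGroup.eq_one_iff w).symm
    exact Morse.core_ineq r π hs hk
  exact ⟨main a b h, fun n hn => by
    obtain ⟨⟨a', b', hp, he⟩, -⟩ := hn
    rw [← he]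
    exact main a' b' hp⟩
end

section
/- Let p be a prime, Δ a surface group of genus h ≥ 1, and Δ̄ ≤ Δ a subgroup of index p. Let 1 → Z → G → Δ → 1 be a central extension with Z cyclic of order p (i.e. Z is a central subgroup of G of order p and π : G → Δ is a surjection with kernel Z). Then the extension splits over Δ̄: there exists a group homomorphism s : Δ̄ → G with π ∘ s equal to the inclusion of Δ̄ into Δ; consequently the preimage π^{-1}(Δ̄) is isomorphic to Z × Δ̄. -/
open scoped commutatorElement

/-- The surface relator `[x_1,y_1]⋯[x_g,y_g]` in the free group on `x_1,…,x_g,y_1,…,y_g`. -/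
def surfaceRel (g : ℕ) : FreeGroup (Fin g ⊕ Fin g) :=
  (List.ofFn fun i : Fin g =>
    ⁅FreeGroup.of (Sum.inl i : Fin g ⊕ Fin g), FreeGroup.of (Sum.inr i)⁆).prod

/-- The genus-`g` surface group `⟨x_1,y_1,…,x_g,y_g ∣ [x_1,y_1]⋯[x_g,y_g]⟩`. -/
abbrev SurfaceGroup (g : ℕ) : Type :=
  PresentedGroup ({surfaceRel g} : Set (FreeGroup (Fin g ⊕ Fin g)))

namespace CESplit

variable {h : ℕ} (p : ℕ) (Δ' : Subgroup (SurfaceGroup h))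

/-- The quotient map from the free group. -/
abbrev qh : FreeGroup (Fin h ⊕ Fin h) →* SurfaceGroup h := PresentedGroup.mk _

/-- Translation action on functions on the coset space. -/
def trv (g : SurfaceGroup h) :
    ((SurfaceGroup h ⧸ Δ') → ZMod p) ≃+ ((SurfaceGroup h ⧸ Δ') → ZMod p) where
  toFun v := fun x => v (g⁻¹ • x)
  invFun v := fun x => v (g • x)
  left_inv v := funext fun x => by simp
  right_inv v := funext fun x => by simp
  map_add' _ _ := rfl

@[simp] lemma trv_apply (g : SurfaceGroup h) (v : (SurfaceGroup h ⧸ Δ') → ZMod p) (x) :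
    trv p Δ' g v x = v (g⁻¹ • x) := rfl

lemma trv_one : trv p Δ' 1 = AddEquiv.refl _ := by
  ext v x; simp

lemma trv_mul (g₁ g₂ : SurfaceGroup h) (v) :
    trv p Δ' (g₁ * g₂) v = trv p Δ' g₁ (trv p Δ' g₂ v) := by
  funext x; simp [mul_smul]

/-- The action of the surface group on `Multiplicative` functions, for the semidirect product. -/
def act : SurfaceGroup h →* MulAut (Multiplicative ((SurfaceGroup h ⧸ Δ') → ZMod p)) where
  toFun g := AddEquiv.toMultiplicative (trv p Δ' g)
  map_one' := by
    apply MulEquiv.ext; intro v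
    show Multiplicative.ofAdd (trv p Δ' 1 (Multiplicative.toAdd v)) = v
    rw [trv_one]; rfl
  map_mul' g₁ g₂ := by
    apply MulEquiv.ext; intro v
    show Multiplicative.ofAdd (trv p Δ' (g₁ * g₂) (Multiplicative.toAdd v)) = _
    rw [trv_mul]; rfl

/-- The evaluation homomorphism into the semidirect product. -/
def Φ (c : Fin h ⊕ Fin h → (SurfaceGroup h ⧸ Δ') → ZMod p) :
    FreeGroup (Fin h ⊕ Fin h) →* Multiplicative ((SurfaceGroup h ⧸ Δ') → ZMod p) ⋊[act p Δ'] SurfaceGroup h :=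
  FreeGroup.lift fun a => ⟨Multiplicative.ofAdd (c a), PresentedGroup.of a⟩

lemma Φ_right (c) (w : FreeGroup (Fin h ⊕ Fin h)) : (Φ p Δ' c w).right = qh w := by
  have : (SemidirectProduct.rightHom.comp (Φ p Δ' c)) = (qh (h := h)) := by
    apply FreeGroup.ext_hom; intro a; simp [Φ]; rfl
  exact DFunLike.congr_fun this w

/-- The cocycle part. -/
def Lv (c : Fin h ⊕ Fin h → (SurfaceGroup h ⧸ Δ') → ZMod p) (w : FreeGroup (Fin h ⊕ Fin h)) : (SurfaceGroup h ⧸ Δ') → ZMod p :=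
  Multiplicative.toAdd ((Φ p Δ' c w).left)

lemma Lv_of (c : Fin h ⊕ Fin h → (SurfaceGroup h ⧸ Δ') → ZMod p) (a) : Lv p Δ' c (FreeGroup.of a) = c a := by
  simp [Lv, Φ]

lemma Lv_one (c : Fin h ⊕ Fin h → (SurfaceGroup h ⧸ Δ') → ZMod p) : Lv p Δ' c 1 = 0 := by
  simp [Lv]

lemma Lv_mul (c : Fin h ⊕ Fin h → (SurfaceGroup h ⧸ Δ') → ZMod p) (w₁ w₂ : FreeGroup (Fin h ⊕ Fin h)) :
    Lv p Δ' c (w₁ * w₂) = Lv p Δ' c w₁ + trv p Δ' (qh w₁) (Lv p Δ' c w₂) := by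
  simp only [Lv, map_mul, SemidirectProduct.mul_left, Φ_right]
  rfl

lemma Lv_inv (c : Fin h ⊕ Fin h → (SurfaceGroup h ⧸ Δ') → ZMod p) (w : FreeGroup (Fin h ⊕ Fin h)) :
    Lv p Δ' c w⁻¹ = - trv p Δ' (qh w)⁻¹ (Lv p Δ' c w) := by
  have h1 : Lv p Δ' c (w⁻¹ * w) = 0 := by rw [inv_mul_cancel]; exact Lv_one p Δ' c
  rw [Lv_mul] at h1
  have h2 := eq_neg_of_add_eq_zero_left h1
  rw [h2, map_inv]

end CESplit

namespace CESplit
variable {h : ℕ} (p : ℕ) (Δ' : Subgroup (SurfaceGroup h))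

@[simp] lemma trv_trv (g₁ g₂ : SurfaceGroup h) (v) :
    trv p Δ' g₁ (trv p Δ' g₂ v) = trv p Δ' (g₁ * g₂) v := (trv_mul p Δ' g₁ g₂ v).symm

lemma Lv_commutator (c : Fin h ⊕ Fin h → (SurfaceGroup h ⧸ Δ') → ZMod p) (α β : Fin h ⊕ Fin h) :
    Lv p Δ' c ⁅FreeGroup.of α, FreeGroup.of β⁆ =
      c α + trv p Δ' (PresentedGroup.of α) (c β)
        - trv p Δ' (PresentedGroup.of α * PresentedGroup.of β * (PresentedGroup.of α)⁻¹) (c α)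
        - trv p Δ' (PresentedGroup.of α * PresentedGroup.of β * (PresentedGroup.of α)⁻¹ * (PresentedGroup.of β)⁻¹) (c β) := by
  have hq : ∀ γ : Fin h ⊕ Fin h, qh (FreeGroup.of γ) = PresentedGroup.of γ := fun _ => rfl
  simp [commutatorElement_def, Lv_mul, Lv_inv, Lv_of, map_mul, map_inv, hq, map_add, map_neg,
    sub_eq_add_neg, mul_assoc]
  abel

end CESplit

namespace CESplit
variable {h : ℕ} (p : ℕ) (Δ' : Subgroup (SurfaceGroup h))

lemma trv_one_apply (v : (SurfaceGroup h ⧸ Δ') → ZMod p) : trv p Δ' 1 v = v := by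
  rw [trv_one]; rfl

variable (c : Fin h ⊕ Fin h → (SurfaceGroup h ⧸ Δ') → ZMod p)

lemma Lv_prod_zero : ∀ (l : List (FreeGroup (Fin h ⊕ Fin h))),
    (∀ w ∈ l, Lv p Δ' c w = 0) → Lv p Δ' c l.prod = 0
  | [], _ => by simpa using Lv_one p Δ' c
  | (a :: l), H => by
    rw [List.prod_cons, Lv_mul, H a (by simp), Lv_prod_zero l (fun w hw => H w (by simp [hw]))]
    simp

lemma Lv_prod_left : ∀ (l₁ : List (FreeGroup (Fin h ⊕ Fin h))) (w) (l₂),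
    (∀ v ∈ l₁, Lv p Δ' c v = 0) → (∀ v ∈ l₂, Lv p Δ' c v = 0) →
    Lv p Δ' c (l₁ ++ w :: l₂).prod = trv p Δ' (qh l₁.prod) (Lv p Δ' c w)
  | [], w, l₂, _, H₂ => by
    rw [List.nil_append, List.prod_cons, Lv_mul, Lv_prod_zero p Δ' c l₂ H₂]
    simp [trv_one_apply]
  | (a :: l₁), w, l₂, H₁, H₂ => by
    rw [List.cons_append, List.prod_cons, Lv_mul, H₁ a (by simp),
      Lv_prod_left l₁ w l₂ (fun v hv => H₁ v (by simp [hv])) H₂]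
    simp [List.prod_cons, map_mul]

/-- The `k`-th commutator block. -/
def BB (k : Fin h) : FreeGroup (Fin h ⊕ Fin h) :=
  ⁅FreeGroup.of (Sum.inl k : Fin h ⊕ Fin h), FreeGroup.of (Sum.inr k)⁆

lemma rel_decomp (k : Fin h) :
    surfaceRel h = ((List.ofFn (BB (h := h))).take k ++
      BB k :: (List.ofFn (BB (h := h))).drop (k + 1)).prod := by
  have h1 : (List.ofFn (BB (h := h)))[(k : ℕ)]'(by simp) = BB k := by
    simp [List.getElem_ofFn]
  rw [← h1, List.getElem_cons_drop, List.take_append_drop]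
  rfl

end CESplit

namespace CESplit
variable {h : ℕ} (p : ℕ) (Δ' : Subgroup (SurfaceGroup h))

/-- coefficient function supported on the `x_k` generator -/
def cu (k : Fin h) (u : (SurfaceGroup h ⧸ Δ') → ZMod p) :
    Fin h ⊕ Fin h → (SurfaceGroup h ⧸ Δ') → ZMod p :=
  fun α => if α = Sum.inl k then u else 0

/-- coefficient function supported on the `y_k` generator -/
def cw (k : Fin h) (v : (SurfaceGroup h ⧸ Δ') → ZMod p) :
    Fin h ⊕ Fin h → (SurfaceGroup h ⧸ Δ') → ZMod p :=
  fun α => if α = Sum.inr k then v else 0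

/-- the prefix element -/
def Pref (k : Fin h) : SurfaceGroup h := qh ((List.ofFn (BB (h := h))).take k).prod

lemma mem_take_BB (k : Fin h) (v : FreeGroup (Fin h ⊕ Fin h))
    (hv : v ∈ (List.ofFn (BB (h := h))).take k) : ∃ j : Fin h, (j : ℕ) < (k : ℕ) ∧ v = BB j := by
  rw [List.mem_take_iff_getElem] at hv
  obtain ⟨i, hi, hv⟩ := hv
  simp only [List.length_ofFn, lt_min_iff] at hi
  refine ⟨⟨i, hi.2⟩, hi.1, ?_⟩
  rw [← hv]; simp [List.getElem_ofFn]

lemma mem_drop_BB (k : Fin h) (v : FreeGroup (Fin h ⊕ Fin h))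
    (hv : v ∈ (List.ofFn (BB (h := h))).drop ((k : ℕ) + 1)) :
    ∃ j : Fin h, (k : ℕ) < (j : ℕ) ∧ v = BB j := by
  rw [List.mem_iff_getElem] at hv
  obtain ⟨i, hi, hv⟩ := hv
  have hl : i < h - ((k : ℕ) + 1) := by simpa using hi
  have hlt : (k : ℕ) + 1 + i < h := by omega
  refine ⟨⟨(k : ℕ) + 1 + i, hlt⟩, by show (k : ℕ) < (k : ℕ) + 1 + i; omega, ?_⟩
  rw [← hv, List.getElem_drop]
  simp [List.getElem_ofFn]

lemma Lv_cu_BB (k j : Fin h) (hjk : j ≠ k) (u) : Lv p Δ' (cu p Δ' k u) (BB j) = 0 := by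
  rw [BB, Lv_commutator]
  simp [cu, hjk]

lemma Lv_cw_BB (k j : Fin h) (hjk : j ≠ k) (v) : Lv p Δ' (cw p Δ' k v) (BB j) = 0 := by
  rw [BB, Lv_commutator]
  simp [cw, hjk]

lemma Lv_cu_rel (k : Fin h) (u) :
    Lv p Δ' (cu p Δ' k u) (surfaceRel h) =
      trv p Δ' (Pref k)
        (u - trv p Δ' (PresentedGroup.of (Sum.inl k) * PresentedGroup.of (Sum.inr k) *
          (PresentedGroup.of (Sum.inl k))⁻¹) u) := by
  have e1 := congrArg (Lv p Δ' (cu p Δ' k u)) (rel_decomp (h := h) k)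
  rw [e1, Lv_prod_left]
  · rw [BB, Lv_commutator]
    simp [cu, sub_eq_add_neg, Pref]
  · intro v hv
    obtain ⟨j, hj, rfl⟩ := mem_take_BB k v hv
    exact Lv_cu_BB p Δ' k j (fun e => by simp [e] at hj) u
  · intro v hv
    obtain ⟨j, hj, rfl⟩ := mem_drop_BB k v hv
    exact Lv_cu_BB p Δ' k j (fun e => by simp [e] at hj) u

lemma Lv_cw_rel (k : Fin h) (v) :
    Lv p Δ' (cw p Δ' k v) (surfaceRel h) =
      trv p Δ' (Pref k)
        (trv p Δ' (PresentedGroup.of (Sum.inl k)) v -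
          trv p Δ' (PresentedGroup.of (Sum.inl k) * PresentedGroup.of (Sum.inr k) *
            (PresentedGroup.of (Sum.inl k))⁻¹ * (PresentedGroup.of (Sum.inr k))⁻¹) v) := by
  have e1 := congrArg (Lv p Δ' (cw p Δ' k v)) (rel_decomp (h := h) k)
  rw [e1, Lv_prod_left]
  · rw [BB, Lv_commutator]
    simp [cw, sub_eq_add_neg, Pref]
  · intro w hw
    obtain ⟨j, hj, rfl⟩ := mem_take_BB k w hw
    exact Lv_cw_BB p Δ' k j (fun e => by simp [e] at hj) v
  · intro w hw
    obtain ⟨j, hj, rfl⟩ := mem_drop_BB k w hw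
    exact Lv_cw_BB p Δ' k j (fun e => by simp [e] at hj) v

end CESplit

namespace CESplit
variable {h : ℕ} (p : ℕ) (Δ' : Subgroup (SurfaceGroup h))

lemma Lv_add (c c' : Fin h ⊕ Fin h → (SurfaceGroup h ⧸ Δ') → ZMod p)
    (w : FreeGroup (Fin h ⊕ Fin h)) :
    Lv p Δ' (c + c') w = Lv p Δ' c w + Lv p Δ' c' w := by
  have hpure : ∀ y : Fin h ⊕ Fin h, (pure y : FreeGroup (Fin h ⊕ Fin h)) = FreeGroup.of y :=
    fun _ => rfl
  refine FreeGroup.induction_on w ?_ ?_ ?_ ?_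
  · simp [Lv_one]
  · intro x
    simp only [hpure, Lv_of]
    rfl
  · intro x hx
    rw [Lv_inv, Lv_inv, Lv_inv, hx, map_add]
    abel
  · intro x y hx hy
    rw [Lv_mul, Lv_mul, Lv_mul, hx, hy, map_add]
    abel

lemma Lv_smul (m : ZMod p) (c : Fin h ⊕ Fin h → (SurfaceGroup h ⧸ Δ') → ZMod p)
    (w : FreeGroup (Fin h ⊕ Fin h)) :
    Lv p Δ' (m • c) w = m • Lv p Δ' c w := by
  have hpure : ∀ y : Fin h ⊕ Fin h, (pure y : FreeGroup (Fin h ⊕ Fin h)) = FreeGroup.of y :=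
    fun _ => rfl
  refine FreeGroup.induction_on w ?_ ?_ ?_ ?_
  · simp [Lv_one]
  · intro x
    simp only [hpure, Lv_of]
    rfl
  · intro x hx
    rw [Lv_inv, Lv_inv, hx]
    funext z; simp
  · intro x y hx hy
    rw [Lv_mul, Lv_mul, hx, hy]
    funext z; simp [mul_add]

open scoped Classical in
lemma trv_sing (g : SurfaceGroup h) (y : SurfaceGroup h ⧸ Δ') :
    trv p Δ' g (fun j => if y = j then (1 : ZMod p) else 0) =
      fun j => if g • y = j then (1 : ZMod p) else 0 := by
  funext x
  simp only [trv_apply]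
  by_cases hxy : y = g⁻¹ • x
  · rw [if_pos hxy, if_pos (by rw [hxy, smul_inv_smul])]
  · rw [if_neg hxy, if_neg (fun e => hxy (by rw [← e, inv_smul_smul]))]

theorem exists_good_c (hp : p.Prime) (hΔ' : Δ'.index = p) :
    ∃ c : Fin h ⊕ Fin h → (SurfaceGroup h ⧸ Δ') → ZMod p,
      Lv p Δ' c (surfaceRel h) = fun _ => 1 := by
  classical
  haveI : Fact p.Prime := ⟨hp⟩
  have hcard : Nat.card (SurfaceGroup h ⧸ Δ') = p := hΔ'
  haveI : Finite (SurfaceGroup h ⧸ Δ') :=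
    Nat.finite_of_card_ne_zero (by rw [hcard]; exact hp.pos.ne')
  haveI : Fintype (SurfaceGroup h ⧸ Δ') := Fintype.ofFinite _
  set T : ((Fin h ⊕ Fin h) → (SurfaceGroup h ⧸ Δ') → ZMod p) →ₗ[ZMod p]
      ((SurfaceGroup h ⧸ Δ') → ZMod p) :=
    { toFun := fun c => Lv p Δ' c (surfaceRel h)
      map_add' := fun c c' => Lv_add p Δ' c c' _
      map_smul' := fun m c => Lv_smul p Δ' m c _ } with hT
  set W := LinearMap.range T with hW
  suffices hmem : (fun _ => (1 : ZMod p)) ∈ W by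
    obtain ⟨c, hc⟩ := hmem
    exact ⟨c, hc⟩
  rw [← Submodule.Quotient.mk_eq_zero]
  refine (Module.forall_dual_apply_eq_zero_iff (ZMod p) _).mp ?_
  intro φ
  set lam : ((SurfaceGroup h ⧸ Δ') → ZMod p) →ₗ[ZMod p] ZMod p := φ.comp W.mkQ with hlam
  have hlamT : ∀ c, lam (T c) = 0 := by
    intro c
    have h1 : W.mkQ (T c) = 0 := by
      rw [Submodule.mkQ_apply, Submodule.Quotient.mk_eq_zero]
      exact LinearMap.mem_range_self T c
    rw [hlam, LinearMap.comp_apply, h1, map_zero]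
  set a : (SurfaceGroup h ⧸ Δ') → ZMod p :=
    fun y => lam (fun j => if y = j then (1 : ZMod p) else 0) with ha
  set Stab : Subgroup (SurfaceGroup h) :=
    { carrier := {g | ∀ y : SurfaceGroup h ⧸ Δ', a (g • y) = a y}
      one_mem' := by intro y; simp
      mul_mem' := by
        intro g k hg hk y
        rw [mul_smul, hg, hk]
      inv_mem' := by
        intro g hg y
        have := (hg (g⁻¹ • y)).symm
        rwa [smul_inv_smul] at this } with hStab
  have hmemStab : ∀ g : SurfaceGroup h,
      g ∈ Stab ↔ ∀ y : SurfaceGroup h ⧸ Δ', a (g • y) = a y := fun g => Iff.rfl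
  have lam_trv : ∀ (g : SurfaceGroup h) (y : SurfaceGroup h ⧸ Δ'),
      lam (trv p Δ' g (fun j => if y = j then (1 : ZMod p) else 0)) = a (g • y) := by
    intro g y
    rw [trv_sing]
  have relA : ∀ (k : Fin h) (y : SurfaceGroup h ⧸ Δ'),
      a ((Pref k) • y) =
      a ((Pref k * (PresentedGroup.of (Sum.inl k) * PresentedGroup.of (Sum.inr k) *
        (PresentedGroup.of (Sum.inl k))⁻¹)) • y) := by
    intro k y
    have h0 := hlamT (cu p Δ' k (fun j => if y = j then (1 : ZMod p) else 0))
    rw [hT] at h0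
    simp only [LinearMap.coe_mk, AddHom.coe_mk] at h0
    rw [Lv_cu_rel, map_sub, trv_trv, map_sub, lam_trv, lam_trv, sub_eq_zero] at h0
    exact h0
  have relB : ∀ (k : Fin h) (y : SurfaceGroup h ⧸ Δ'),
      a ((Pref k * PresentedGroup.of (Sum.inl k)) • y) =
      a ((Pref k * (PresentedGroup.of (Sum.inl k) * PresentedGroup.of (Sum.inr k) *
        (PresentedGroup.of (Sum.inl k))⁻¹ * (PresentedGroup.of (Sum.inr k))⁻¹)) • y) := by
    intro k y
    have h0 := hlamT (cw p Δ' k (fun j => if y = j then (1 : ZMod p) else 0))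
    rw [hT] at h0
    simp only [LinearMap.coe_mk, AddHom.coe_mk] at h0
    rw [Lv_cw_rel, map_sub, trv_trv, trv_trv, map_sub, lam_trv, lam_trv, sub_eq_zero] at h0
    exact h0
  have main : ∀ n : ℕ, ∀ k : Fin h, (k : ℕ) = n →
      PresentedGroup.of (Sum.inl k) ∈ Stab ∧ PresentedGroup.of (Sum.inr k) ∈ Stab := by
    intro n
    induction n using Nat.strong_induction_on with
    | _ n IH =>
      intro k hk
      have hPref : Pref k ∈ Stab := by
        rw [Pref, map_list_prod]
        apply Subgroup.list_prod_mem
        intro x hx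
        rw [List.mem_map] at hx
        obtain ⟨v, hv, rfl⟩ := hx
        obtain ⟨j, hj, rfl⟩ := mem_take_BB k v hv
        rw [BB, map_commutatorElement, commutatorElement_def]
        have hj' := IH (j : ℕ) (by omega) j rfl
        exact mul_mem (mul_mem (mul_mem hj'.1 hj'.2) (inv_mem hj'.1)) (inv_mem hj'.2)
      set s := PresentedGroup.of (rels := {surfaceRel h}) (Sum.inl k) with hs'
      set t := PresentedGroup.of (rels := {surfaceRel h}) (Sum.inr k) with ht'
      have hm : s * t * s⁻¹ ∈ Stab := by
        rw [hmemStab]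
        intro y
        have h1 := relA k y
        rw [mul_smul] at h1
        rw [← hPref ((s * t * s⁻¹) • y), ← h1, hPref y]
      have hn : s * t * s⁻¹ * t⁻¹ * s⁻¹ ∈ Stab := by
        rw [hmemStab]
        intro y
        have h1 := relB k (s⁻¹ • y)
        rw [smul_smul, smul_smul] at h1
        have e1 : Pref k * s * s⁻¹ = Pref k := by group
        have e2 : Pref k * (s * t * s⁻¹ * t⁻¹) * s⁻¹ = Pref k * (s * t * s⁻¹ * t⁻¹ * s⁻¹) := by
          group
        rw [e1, e2, mul_smul] at h1
        rw [← hPref ((s * t * s⁻¹ * t⁻¹ * s⁻¹) • y), ← h1, hPref y]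
      have hst : s * t ∈ Stab := by
        have e : s * t = (s * t * s⁻¹ * t⁻¹ * s⁻¹)⁻¹ * (s * t * s⁻¹) := by group
        rw [e]
        exact mul_mem (inv_mem hn) hm
      have ht : t ∈ Stab := by
        have e : t = (s * t)⁻¹ * (s * t * s⁻¹) * (s * t) := by group
        rw [e]
        exact mul_mem (mul_mem (inv_mem hst) hm) hst
      have hs : s ∈ Stab := by
        have e : s = (s * t) * t⁻¹ := by group
        rw [e]
        exact mul_mem hst (inv_mem ht)
      exact ⟨hs, ht⟩
  have hStabTop : ∀ g : SurfaceGroup h, g ∈ Stab := by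
    intro g
    refine PresentedGroup.generated_by _ Stab ?_ g
    intro j
    rcases j with k | k
    · exact (main (k : ℕ) k rfl).1
    · exact (main (k : ℕ) k rfl).2
  have haconst : ∀ x : SurfaceGroup h ⧸ Δ',
      a x = a ((1 : SurfaceGroup h) : SurfaceGroup h ⧸ Δ') := by
    intro x
    obtain ⟨d, rfl⟩ := QuotientGroup.mk_surjective x
    have h1 := hStabTop d ((1 : SurfaceGroup h) : SurfaceGroup h ⧸ Δ')
    have e : d • ((1 : SurfaceGroup h) : SurfaceGroup h ⧸ Δ') =
        ((d : SurfaceGroup h) : SurfaceGroup h ⧸ Δ') := by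
      show QuotientGroup.mk (d * 1) = QuotientGroup.mk d
      rw [mul_one]
    rw [e] at h1
    exact h1
  have hfinal : lam (fun _ => (1 : ZMod p)) = 0 := by
    rw [LinearMap.pi_apply_eq_sum_univ lam (fun _ => (1 : ZMod p))]
    simp only [one_smul]
    rw [Finset.sum_congr rfl (fun i _ => haconst i)]
    rw [Finset.sum_const, Finset.card_univ]
    have hc0 : ((Fintype.card (SurfaceGroup h ⧸ Δ') : ZMod p)) = 0 := by
      rw [← Nat.card_eq_fintype_card, hcard, ZMod.natCast_self]
    rw [nsmul_eq_mul, hc0, zero_mul]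
  rw [hlam, LinearMap.comp_apply] at hfinal
  exact hfinal

end CESplit

namespace CESplit
variable {h : ℕ} {p : ℕ}

theorem splitting_exists (hp : p.Prime) (Δ' : Subgroup (SurfaceGroup h)) (hΔ' : Δ'.index = p)
    {G : Type} [Group G] (Z : Subgroup G) (hZcentral : Z ≤ Subgroup.center G)
    (hZcard : Nat.card Z = p) (π : G →* SurfaceGroup h) (hπ : Function.Surjective π)
    (hker : π.ker = Z) :
    ∃ s : Δ' →* G, ∀ x : Δ', π (s x) = (x : SurfaceGroup h) := by
  classical
  haveI : Fact p.Prime := ⟨hp⟩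
  haveI : NeZero p := ⟨hp.ne_zero⟩
  haveI : Fact (1 < p) := ⟨hp.one_lt⟩
  obtain ⟨c, hc⟩ := exists_good_c p Δ' hp hΔ'
  -- a set-theoretic lift of the generators
  set ell : FreeGroup (Fin h ⊕ Fin h) →* G :=
    FreeGroup.lift (fun α => (hπ (PresentedGroup.of α)).choose) with hell
  have hπell : ∀ w, π (ell w) = qh w := by
    have : π.comp ell = (qh (h := h)) := by
      apply FreeGroup.ext_hom
      intro α
      show π (ell (FreeGroup.of α)) = qh (FreeGroup.of α)
      rw [hell, FreeGroup.lift_apply_of]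
      exact (hπ (PresentedGroup.of α)).choose_spec
    exact fun w => DFunLike.congr_fun this w
  set z₀ : G := ell (surfaceRel h) with hz₀
  have hrel_mem : surfaceRel h ∈ Subgroup.normalClosure ({surfaceRel h} :
      Set (FreeGroup (Fin h ⊕ Fin h))) :=
    Subgroup.subset_normalClosure (Set.mem_singleton _)
  have hqh_rel : qh (surfaceRel h) = (1 : SurfaceGroup h) :=
    (QuotientGroup.eq_one_iff _).mpr hrel_mem
  have hz₀K : z₀ ∈ π.ker := by rw [MonoidHom.mem_ker, hz₀, hπell, hqh_rel]
  have hz₀Z : z₀ ∈ Z := hker ▸ hz₀K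
  have hz₀cen : z₀ ∈ Subgroup.center G := hZcentral hz₀Z
  have hz₀p : z₀ ^ p = 1 := by
    have h1 : (⟨z₀, hz₀Z⟩ : Z) ^ p = 1 := by rw [← hZcard]; exact pow_card_eq_one'
    have h2 := congrArg (Subtype.val : Z → G) h1
    simpa using h2
  -- the "power of z₀" map
  set zeta : ZMod p → G := fun k => z₀ ^ k.val with hzeta
  have hzeta_add : ∀ a b : ZMod p, zeta (a + b) = zeta a * zeta b := by
    intro a b
    rw [hzeta]
    simp only
    rw [ZMod.val_add, ← pow_eq_pow_mod _ hz₀p, pow_add]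
  have hzeta0 : zeta 0 = 1 := by rw [hzeta]; simp
  have hzeta1 : zeta 1 = z₀ := by rw [hzeta]; simp [ZMod.val_one]
  have hzeta_ker : ∀ k, π (zeta k) = 1 := by
    intro k
    rw [hzeta]
    simp only [map_pow]
    rw [MonoidHom.mem_ker.mp hz₀K, one_pow]
  have hzeta_cen : ∀ k, zeta k ∈ Subgroup.center G := fun k => pow_mem hz₀cen _
  have hzeta_comm : ∀ (g : G) (k : ZMod p), g * zeta k = zeta k * g := by
    intro g k
    exact Subgroup.mem_center_iff.mp (hzeta_cen k) g
  have hzeta_inv : ∀ k, (zeta k)⁻¹ = zeta (-k) := by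
    intro k
    have h1 := hzeta_add (-k) k
    rw [neg_add_cancel, hzeta0] at h1
    exact inv_eq_of_mul_eq_one_left h1.symm
  set x₀ : SurfaceGroup h ⧸ Δ' := ((1 : SurfaceGroup h) : SurfaceGroup h ⧸ Δ') with hx₀
  have hx₀fix : ∀ d : SurfaceGroup h, d ∈ Δ' → d • x₀ = x₀ := by
    intro d hd
    show d • ((1 : SurfaceGroup h) : SurfaceGroup h ⧸ Δ') = _
    have : d • ((1 : SurfaceGroup h) : SurfaceGroup h ⧸ Δ') =
        ((d : SurfaceGroup h) : SurfaceGroup h ⧸ Δ') := by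
      show QuotientGroup.mk (d * 1) = QuotientGroup.mk d
      rw [mul_one]
    rw [this, hx₀]
    exact (QuotientGroup.eq (s := Δ')).mpr (by simpa using inv_mem hd)
  have trv_const : ∀ (g : SurfaceGroup h) (k : ZMod p),
      trv p Δ' g (fun _ => k) = fun _ => k := fun g k => rfl
  -- the subgroup of elements whose lift is the expected central element
  set M : Subgroup (FreeGroup (Fin h ⊕ Fin h)) :=
  { carrier := {w | qh w = 1 ∧ ∃ k : ZMod p,
      Lv p Δ' c w = (fun _ => k) ∧ ell w = zeta k}
    one_mem' := by
      refine ⟨map_one _, 0, ?_, by rw [map_one, hzeta0]⟩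
      rw [Lv_one]; rfl
    mul_mem' := by
      rintro w₁ w₂ ⟨h1, k1, hL1, he1⟩ ⟨h2, k2, hL2, he2⟩
      refine ⟨by rw [map_mul, h1, h2, one_mul], k1 + k2, ?_, ?_⟩
      · rw [Lv_mul, h1, hL1, hL2, trv_one_apply]
        funext x; simp
      · rw [map_mul, he1, he2, hzeta_add]
    inv_mem' := by
      rintro w ⟨h1, k, hL, he⟩
      refine ⟨by rw [map_inv, h1, inv_one], -k, ?_, ?_⟩
      · rw [Lv_inv, h1, inv_one, trv_one_apply, hL]
        funext x; simp
      · rw [map_inv, he, hzeta_inv] } with hM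
  haveI hMnormal : M.Normal := by
    constructor
    rintro w ⟨h1, k, hL, he⟩ g
    refine ⟨by rw [map_mul, map_mul, h1, map_inv, mul_one, mul_inv_cancel], k, ?_, ?_⟩
    · have hLinv : Lv p Δ' c g⁻¹ = - trv p Δ' (qh g)⁻¹ (Lv p Δ' c g) := Lv_inv p Δ' c g
      rw [Lv_mul, Lv_mul, hL, trv_const, hLinv, map_mul, h1, mul_one, map_neg, trv_trv,
        mul_inv_cancel, trv_one_apply]
      funext x; simp
    · rw [map_mul, map_mul, map_inv, he, hzeta_comm, mul_assoc, mul_inv_cancel, mul_one]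
  have hNleM : Subgroup.normalClosure ({surfaceRel h} : Set (FreeGroup (Fin h ⊕ Fin h))) ≤ M := by
    apply Subgroup.normalClosure_le_normal
    intro x hx
    rw [Set.mem_singleton_iff] at hx
    subst hx
    exact ⟨hqh_rel, 1, hc, by rw [hzeta1]⟩
  -- the restricted projection
  set K : Subgroup (FreeGroup (Fin h ⊕ Fin h)) := Δ'.comap qh with hK
  set q' : K →* Δ' := ((qh (h := h)).domRestrict K).codRestrict Δ' (fun w => w.2) with hq'
  have hq'val : ∀ w : K, (q' w : SurfaceGroup h) = qh (w : FreeGroup (Fin h ⊕ Fin h)) :=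
    fun w => rfl
  have hq'surj : Function.Surjective q' := by
    intro d
    obtain ⟨w, hw⟩ := PresentedGroup.mk_surjective _ (d : SurfaceGroup h)
    have hwK : w ∈ K := by
      show qh w ∈ Δ'
      rw [hw]; exact d.2
    exact ⟨⟨w, hwK⟩, Subtype.ext hw⟩
  -- the corrected lift
  set s₀ : K →* G :=
  { toFun := fun w => ell (w : FreeGroup (Fin h ⊕ Fin h)) *
      (zeta (Lv p Δ' c (w : FreeGroup (Fin h ⊕ Fin h)) x₀))⁻¹
    map_one' := by
      show ell ((1 : K) : FreeGroup (Fin h ⊕ Fin h)) *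
        (zeta (Lv p Δ' c ((1 : K) : FreeGroup (Fin h ⊕ Fin h)) x₀))⁻¹ = 1
      rw [Subgroup.coe_one, map_one, Lv_one, one_mul, Pi.zero_apply, hzeta0, inv_one]
    map_mul' := by
      intro w₁ w₂
      have hco : ((w₁ * w₂ : K) : FreeGroup (Fin h ⊕ Fin h)) =
          (w₁ : FreeGroup (Fin h ⊕ Fin h)) * w₂ := rfl
      have hLx : Lv p Δ' c ((w₁ : FreeGroup (Fin h ⊕ Fin h)) * w₂) x₀ =
          Lv p Δ' c (w₁ : FreeGroup (Fin h ⊕ Fin h)) x₀ +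
          Lv p Δ' c (w₂ : FreeGroup (Fin h ⊕ Fin h)) x₀ := by
        rw [Lv_mul]
        have : trv p Δ' (qh (w₁ : FreeGroup (Fin h ⊕ Fin h)))
            (Lv p Δ' c (w₂ : FreeGroup (Fin h ⊕ Fin h))) x₀ =
            Lv p Δ' c (w₂ : FreeGroup (Fin h ⊕ Fin h)) x₀ := by
          rw [trv_apply]
          congr 1
          exact hx₀fix _ (inv_mem w₁.2)
        simp [this]
      have hcent : ∀ (g : G) (k : ZMod p), g * (zeta k)⁻¹ = (zeta k)⁻¹ * g := by
        intro g k
        rw [hzeta_inv]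
        exact hzeta_comm g (-k)
      show ell ((w₁ * w₂ : K) : FreeGroup (Fin h ⊕ Fin h)) *
          (zeta (Lv p Δ' c ((w₁ * w₂ : K) : FreeGroup (Fin h ⊕ Fin h)) x₀))⁻¹ = _
      simp only [hco, hLx]
      rw [map_mul, hzeta_add, mul_inv_rev]
      set A := ell (w₁ : FreeGroup (Fin h ⊕ Fin h)) with hA
      set B := ell (w₂ : FreeGroup (Fin h ⊕ Fin h)) with hB
      set u := (zeta (Lv p Δ' c (w₁ : FreeGroup (Fin h ⊕ Fin h)) x₀))⁻¹ with hu
      set v := (zeta (Lv p Δ' c (w₂ : FreeGroup (Fin h ⊕ Fin h)) x₀))⁻¹ with hv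
      show A * B * (v * u) = A * u * (B * v)
      calc A * B * (v * u) = A * (B * v * u) := by rw [mul_assoc, mul_assoc]
        _ = A * (u * (B * v)) := by rw [hu, hcent (B * v)]
        _ = A * u * (B * v) := by rw [mul_assoc] } with hs₀
  have hs₀val : ∀ w : K, s₀ w = ell (w : FreeGroup (Fin h ⊕ Fin h)) *
      (zeta (Lv p Δ' c (w : FreeGroup (Fin h ⊕ Fin h)) x₀))⁻¹ := fun w => rfl
  have hkill : q'.ker ≤ s₀.ker := by
    intro w hw
    rw [MonoidHom.mem_ker] at hw ⊢
    have hw1 : qh (w : FreeGroup (Fin h ⊕ Fin h)) = 1 := by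
      rw [← hq'val, hw, OneMemClass.coe_one]
    have hwM : (w : FreeGroup (Fin h ⊕ Fin h)) ∈ M := by
      apply hNleM
      exact (QuotientGroup.eq_one_iff _).mp hw1
    obtain ⟨-, k, hL, he⟩ := hwM
    rw [hs₀val, hL, he, mul_inv_cancel]
  set e := QuotientGroup.quotientKerEquivOfSurjective q' hq'surj with he
  set s : Δ' →* G := (QuotientGroup.lift q'.ker s₀ (fun w hw => hkill hw)).comp
    e.symm.toMonoidHom with hs
  refine ⟨s, ?_⟩
  intro x
  obtain ⟨w, hw⟩ := hq'surj x
  have hsx : s x = s₀ w := by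
    rw [hs]
    have he1 : e.symm x = QuotientGroup.mk w := by
      rw [MulEquiv.symm_apply_eq, ← hw]
      rfl
    simp only [MonoidHom.comp_apply, MulEquiv.coe_toMonoidHom, he1]
    rfl
  rw [hsx, hs₀val, map_mul, map_inv, hzeta_ker, inv_one, mul_one, hπell, ← hq'val, hw]

end CESplit

/-- Let `p` be prime, `Δ` the surface group of genus `h ≥ 1`, and `Δ'` a subgroup of
index `p`. Any central extension `1 → Z → G → Δ → 1` with `Z` cyclic of order `p`
splits over `Δ'`, and the preimage of `Δ'` is isomorphic to `Z × Δ'`. -/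
theorem central_extension_splits_over_index_p_subgroup (p : ℕ) (hp : p.Prime)
    (h : ℕ) (hh : 1 ≤ h) (Δ' : Subgroup (SurfaceGroup h)) (hΔ' : Δ'.index = p)
    (G : Type) [Group G] (Z : Subgroup G) (hZcentral : Z ≤ Subgroup.center G)
    (hZcyc : IsCyclic Z) (hZcard : Nat.card Z = p)
    (π : G →* SurfaceGroup h) (hπ : Function.Surjective π) (hker : π.ker = Z) :
    (∃ s : Δ' →* G, ∀ x : Δ', π (s x) = (x : SurfaceGroup h)) ∧
      Nonempty (↥(Δ'.comap π) ≃* (↥Z × ↥Δ')) := by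
  obtain ⟨s, hs⟩ := CESplit.splitting_exists hp Δ' hΔ' Z hZcentral hZcard π hπ hker
  refine ⟨⟨s, hs⟩, ?_⟩
  have hcen : ∀ z ∈ Z, ∀ g : G, g * z = z * g := fun z hz g =>
    Subgroup.mem_center_iff.mp (hZcentral hz) g
  have hmemZ : ∀ g : ↥(Δ'.comap π), (g : G) * (s ⟨π g, g.2⟩)⁻¹ ∈ Z := by
    intro g
    rw [← hker, MonoidHom.mem_ker, map_mul, map_inv, hs ⟨π (g : G), g.2⟩]
    exact mul_inv_cancel _
  have hmemK : ∀ zd : ↥Z × ↥Δ', (zd.1 : G) * s zd.2 ∈ Δ'.comap π := by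
    intro zd
    show π ((zd.1 : G) * s zd.2) ∈ Δ'
    have h1 : π (zd.1 : G) = 1 := by
      rw [← MonoidHom.mem_ker, hker]; exact zd.1.2
    rw [map_mul, h1, one_mul, hs]
    exact (zd.2).2
  have hπsd : ∀ (z : ↥Z) (d : ↥Δ'), π ((z : G) * s d) = (d : SurfaceGroup h) := by
    intro z d
    have h1 : π (z : G) = 1 := by
      rw [← MonoidHom.mem_ker, hker]; exact z.2
    rw [map_mul, h1, one_mul, hs]
  refine ⟨⟨⟨fun g => (⟨(g : G) * (s ⟨π g, g.2⟩)⁻¹, hmemZ g⟩, ⟨π (g : G), g.2⟩),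
    fun zd => ⟨(zd.1 : G) * s zd.2, hmemK zd⟩, ?_, ?_⟩, ?_⟩⟩
  · -- left inverse
    intro g
    apply Subtype.ext
    show ((g : G) * (s ⟨π (g : G), g.2⟩)⁻¹) * s ⟨π (g : G), g.2⟩ = (g : G)
    rw [inv_mul_cancel_right]
  · -- right inverse
    rintro ⟨z, d⟩
    have hd : (⟨π ((z : G) * s d), hmemK (z, d)⟩ : ↥Δ') = d := Subtype.ext (hπsd z d)
    refine Prod.ext (Subtype.ext ?_) hd
    show ((z : G) * s d) * (s (⟨π ((z : G) * s d), hmemK (z, d)⟩ : ↥Δ'))⁻¹ = (z : G)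
    rw [hd, mul_inv_cancel_right]
  · -- multiplicative
    intro g₁ g₂
    have hd : (⟨π ((g₁ * g₂ : ↥(Δ'.comap π)) : G), (g₁ * g₂).2⟩ : ↥Δ') =
        (⟨π (g₁ : G), g₁.2⟩ : ↥Δ') * ⟨π (g₂ : G), g₂.2⟩ := by
      apply Subtype.ext
      show π ((g₁ : G) * (g₂ : G)) = π (g₁ : G) * π (g₂ : G)
      rw [map_mul]
    refine Prod.ext (Subtype.ext ?_) hd
    show ((g₁ : G) * (g₂ : G)) *
        (s (⟨π ((g₁ * g₂ : ↥(Δ'.comap π)) : G), (g₁ * g₂).2⟩ : ↥Δ'))⁻¹ =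
      ((g₁ : G) * (s ⟨π (g₁ : G), g₁.2⟩)⁻¹) * ((g₂ : G) * (s ⟨π (g₂ : G), g₂.2⟩)⁻¹)
    rw [hd, map_mul, mul_inv_rev]
    set a := s (⟨π (g₁ : G), g₁.2⟩ : ↥Δ') with ha
    set b := s (⟨π (g₂ : G), g₂.2⟩ : ↥Δ') with hb
    have hk₂ : (g₂ : G) * b⁻¹ ∈ Z := hmemZ g₂
    calc (g₁ : G) * (g₂ : G) * (b⁻¹ * a⁻¹)
        = (g₁ : G) * (((g₂ : G) * b⁻¹) * a⁻¹) := by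
          rw [mul_assoc, ← mul_assoc (g₂ : G)]
      _ = (g₁ : G) * (a⁻¹ * ((g₂ : G) * b⁻¹)) := by
          rw [← hcen _ hk₂ a⁻¹]
      _ = (g₁ : G) * a⁻¹ * ((g₂ : G) * b⁻¹) := by rw [mul_assoc]
end

section
/- For every integer g ≥ 1, the direct product Γ_g × ℤ² of a genus-g surface group with ℤ² satisfies def(Γ_g × ℤ²) = −2g. -/
open scoped commutatorElement

set_option maxHeartbeats 1000000
set_option synthInstance.maxHeartbeats 400000


@[ext] structure Heis where
  p : ℚ
  q : ℚ
  r : ℚ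

namespace Heis

instance : Mul Heis := ⟨fun a b => ⟨a.p + b.p, a.q + b.q, a.r + b.r + a.p * b.q⟩⟩
instance : One Heis := ⟨⟨0, 0, 0⟩⟩
instance : Inv Heis := ⟨fun a => ⟨-a.p, -a.q, -a.r + a.p * a.q⟩⟩

@[simp] lemma mul_p (a b : Heis) : (a * b).p = a.p + b.p := rfl
@[simp] lemma mul_q (a b : Heis) : (a * b).q = a.q + b.q := rfl
@[simp] lemma mul_r (a b : Heis) : (a * b).r = a.r + b.r + a.p * b.q := rfl
@[simp] lemma one_p : (1 : Heis).p = 0 := rfl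
@[simp] lemma one_q : (1 : Heis).q = 0 := rfl
@[simp] lemma one_r : (1 : Heis).r = 0 := rfl
@[simp] lemma inv_p (a : Heis) : (a⁻¹).p = -a.p := rfl
@[simp] lemma inv_q (a : Heis) : (a⁻¹).q = -a.q := rfl
@[simp] lemma inv_r (a : Heis) : (a⁻¹).r = -a.r + a.p * a.q := rfl

instance : Group Heis where
  mul_assoc a b c := by ext <;> simp <;> ring
  one_mul a := by ext <;> simp
  mul_one a := by ext <;> simp
  inv_mul_cancel a := by ext <;> simp <;> ring

lemma commutator_eq (a b : Heis) : ⁅a, b⁆ = ⟨0, 0, a.p * b.q - b.p * a.q⟩ := by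
  ext <;> simp [commutatorElement_def] <;> ring

/-- first coordinate as a homomorphism. -/
def fstHom : Heis →* Multiplicative ℚ where
  toFun a := Multiplicative.ofAdd a.p
  map_one' := rfl
  map_mul' _ _ := rfl

/-- second coordinate as a homomorphism. -/
def sndHom : Heis →* Multiplicative ℚ where
  toFun a := Multiplicative.ofAdd a.q
  map_one' := rfl
  map_mul' _ _ := rfl

@[simp] lemma fstHom_apply (a : Heis) : fstHom a = Multiplicative.ofAdd a.p := rfl
@[simp] lemma sndHom_apply (a : Heis) : sndHom a = Multiplicative.ofAdd a.q := rfl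

lemma central_prod (l : List ℚ) :
    (l.map fun c => (⟨0, 0, c⟩ : Heis)).prod = ⟨0, 0, l.sum⟩ := by
  induction l with
  | nil => rfl
  | cons h t ih => ext <;> simp [ih]

end Heis

open Subgroup Submodule Module

theorem deficiency_upper {Γ : Type} [Group Γ] {ι K : Type} [Fintype ι] [Fintype K] [DecidableEq K]
    (γ : ι → Γ) (hγ : Subgroup.closure (Set.range γ) = ⊤)
    (A B : K → (Γ →* Multiplicative ℚ)) (c : K → List (ι × ι))
    (hrel : ∀ k, ((c k).map fun uv => ⁅γ uv.1, γ uv.2⁆).prod = 1)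
    (hpair : ∀ j k, ((c k).map fun uv =>
        (A j (γ uv.1)).toAdd * (B j (γ uv.2)).toAdd
          - (A j (γ uv.2)).toAdd * (B j (γ uv.1)).toAdd).sum = if j = k then 1 else 0)
    {a b : ℕ} (r : Fin b → FreeGroup (Fin a))
    (φ : Γ ≃* PresentedGroup (Set.range r)) :
    a + Fintype.card K ≤ b + Fintype.card ι := by
  classical
  set N : Subgroup (FreeGroup (Fin a)) := Subgroup.normalClosure (Set.range r) with hN
  set θ : FreeGroup (Fin a) →* Γ := φ.symm.toMonoidHom.comp (PresentedGroup.mk (Set.range r)) with hθ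
  have hθsurj : Function.Surjective θ :=
    φ.symm.surjective.comp (PresentedGroup.mk_surjective _)
  have hker : ∀ x : FreeGroup (Fin a), θ x = 1 ↔ x ∈ N := by
    intro x
    rw [show θ x = φ.symm (PresentedGroup.mk _ x) from rfl,
      MulEquiv.map_eq_one_iff φ.symm]
    exact QuotientGroup.eq_one_iff x
  have hrN : ∀ j, r j ∈ N := fun j => Subgroup.subset_normalClosure ⟨j, rfl⟩
  set ℓ : Γ → FreeGroup (Fin a) := Function.surjInv hθsurj with hℓdef
  have hℓ : ∀ y, θ (ℓ y) = y := Function.surjInv_eq hθsurj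
  -- Heisenberg cocycle maps
  set ψ : K → (FreeGroup (Fin a) →* Heis) := (fun k => FreeGroup.lift fun s =>
    ⟨(A k (θ (FreeGroup.of s))).toAdd, (B k (θ (FreeGroup.of s))).toAdd, 0⟩) with hψdef
  have hψp : ∀ k x, (ψ k x).p = (A k (θ x)).toAdd := by
    intro k x
    have h : Heis.fstHom.comp (ψ k) = (A k).comp θ :=
      FreeGroup.ext_hom _ _ (fun s => by simp [hψdef])
    have h2 := DFunLike.congr_fun h x
    simpa using congrArg Multiplicative.toAdd h2
  have hψq : ∀ k x, (ψ k x).q = (B k (θ x)).toAdd := by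
    intro k x
    have h : Heis.sndHom.comp (ψ k) = (B k).comp θ :=
      FreeGroup.ext_hom _ _ (fun s => by simp [hψdef])
    have h2 := DFunLike.congr_fun h x
    simpa using congrArg Multiplicative.toAdd h2
  -- exponent sum map
  set E : FreeGroup (Fin a) →* Multiplicative (Fin a → ℚ) :=
    FreeGroup.lift (fun s => Multiplicative.ofAdd (Pi.single s 1)) with hEdef
  set psiPi : FreeGroup (Fin a) →* (K → Heis) :=
    { toFun := fun x k => ψ k x
      map_one' := by funext k; simp
      map_mul' := fun x y => by funext k; simp } with hpsiPidef
  set Ψ : FreeGroup (Fin a) →* Multiplicative (Fin a → ℚ) × (K → Heis) := E.prod psiPi with hΨdef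
  set Λ : Multiplicative (Fin a → ℚ) × (K → Heis) → (Fin a → ℚ) × (K → ℚ) :=
    (fun x => (x.1.toAdd, fun k => (x.2 k).r)) with hΛdef
  set v : Fin b → (Fin a → ℚ) × (K → ℚ) := (fun j => Λ (Ψ (r j))) with hvdef
  set S : Submodule ℚ ((Fin a → ℚ) × (K → ℚ)) := Submodule.span ℚ (Set.range v) with hSdef
  have hpq : ∀ x : FreeGroup (Fin a), x ∈ N → ∀ k, (ψ k x).p = 0 ∧ (ψ k x).q = 0 := by
    intro x hx k
    rw [hψp, hψq, (hker x).2 hx]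
    simp
  have hcent : ∀ j : Fin b, Ψ (r j) ∈ Subgroup.center (Multiplicative (Fin a → ℚ) × (K → Heis)) := by
    intro j
    rw [Subgroup.mem_center_iff]
    intro z
    have h0 := hpq _ (hrN j)
    refine Prod.ext (mul_comm _ _) (funext fun k => ?_)
    have h0k : ((Ψ (r j)).2 k).p = 0 ∧ ((Ψ (r j)).2 k).q = 0 := h0 k
    show z.2 k * (Ψ (r j)).2 k = (Ψ (r j)).2 k * z.2 k
    ext <;> simp [h0k.1, h0k.2] <;> ring
  set C : Subgroup (Multiplicative (Fin a → ℚ) × (K → Heis)) :=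
    Subgroup.closure (Set.range fun j => Ψ (r j)) with hCdef
  have hCle : C ≤ Subgroup.center _ :=
    (Subgroup.closure_le _).2 (by rintro _ ⟨j, rfl⟩; exact hcent j)
  haveI hCnormal : C.Normal := by
    constructor
    intro n hn g
    have h : g * n = n * g := (Subgroup.mem_center_iff.1 (hCle hn)) g
    have : g * n * g⁻¹ = n := by rw [h, mul_assoc, mul_inv_cancel, mul_one]
    rwa [this]
  have hNC : ∀ x ∈ N, Ψ x ∈ C := by
    intro x hx
    haveI : (C.comap Ψ).Normal := hCnormal.comap Ψ
    have hle : N ≤ C.comap Ψ :=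
      Subgroup.normalClosure_le_normal
        (by rintro _ ⟨j, rfl⟩; exact Subgroup.subset_closure ⟨j, rfl⟩)
    exact hle hx
  have key : ∀ x ∈ N, Λ (Ψ x) ∈ S := by
    intro x hx
    have hx' : Ψ x ∈ C := hNC x hx
    have main : ∀ z ∈ C, (∀ k, (z.2 k).p = 0 ∧ (z.2 k).q = 0) ∧ Λ z ∈ S := by
      intro z hz
      induction hz using Subgroup.closure_induction with
      | mem z hz =>
        obtain ⟨j, rfl⟩ := hz
        exact ⟨hpq _ (hrN j), Submodule.subset_span ⟨j, rfl⟩⟩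
      | one =>
        refine ⟨fun k => ⟨rfl, rfl⟩, ?_⟩
        have : Λ 1 = 0 := by
          refine Prod.ext ?_ (funext fun k => ?_) <;> simp [hΛdef]
        rw [this]; exact S.zero_mem
      | mul z w hzC hwC hz hw =>
        refine ⟨fun k => ?_, ?_⟩
        · constructor <;> show _ = (0:ℚ)
          · show (z.2 k * w.2 k).p = 0
            simp [(hz.1 k).1, (hw.1 k).1]
          · show (z.2 k * w.2 k).q = 0
            simp [(hz.1 k).2, (hw.1 k).2]
        · have : Λ (z * w) = Λ z + Λ w := by
            refine Prod.ext ?_ (funext fun k => ?_)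
            · simp [hΛdef]
            · show (z.2 k * w.2 k).r = (z.2 k).r + (w.2 k).r
              simp [(hz.1 k).1]
          rw [this]; exact S.add_mem hz.2 hw.2
      | inv z hzC hz =>
        refine ⟨fun k => ?_, ?_⟩
        · constructor
          · show ((z.2 k)⁻¹).p = 0
            simp [(hz.1 k).1]
          · show ((z.2 k)⁻¹).q = 0
            simp [(hz.1 k).2]
        · have : Λ z⁻¹ = -Λ z := by
            refine Prod.ext ?_ (funext fun k => ?_)
            · simp [hΛdef]
            · show ((z.2 k)⁻¹).r = -(z.2 k).r
              simp [(hz.1 k).1]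
          rw [this]; exact S.neg_mem hz.2
    exact (main _ hx').2
  
  -- exponent sums of N span "most" of ℚ^a
  set U : Submodule ℚ (Fin a → ℚ) :=
    Submodule.span ℚ ((fun x : FreeGroup (Fin a) => (E x).toAdd) '' N) with hUdef
  set T : Submodule ℚ (Fin a → ℚ) :=
    Submodule.span ℚ (Set.range fun i => (E (ℓ (γ i))).toAdd) with hTdef
  have hH : Subgroup.closure ((N : Set (FreeGroup (Fin a))) ∪ Set.range fun i => ℓ (γ i)) = ⊤ := by
    rw [eq_top_iff]
    intro x _
    have hγH : ∀ y : Γ, ∃ h ∈ Subgroup.closure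
        ((N : Set (FreeGroup (Fin a))) ∪ Set.range fun i => ℓ (γ i)), θ h = y := by
      intro y
      have hy : y ∈ Subgroup.closure (Set.range γ) := by rw [hγ]; trivial
      induction hy using Subgroup.closure_induction with
      | mem z hz =>
        obtain ⟨i, rfl⟩ := hz
        exact ⟨ℓ (γ i), Subgroup.subset_closure (Or.inr ⟨i, rfl⟩), hℓ _⟩
      | one => exact ⟨1, one_mem _, map_one θ⟩
      | mul z w _ _ hz hw =>
        obtain ⟨h1, hh1, rfl⟩ := hz; obtain ⟨h2, hh2, rfl⟩ := hw
        exact ⟨h1 * h2, mul_mem hh1 hh2, map_mul θ _ _⟩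
      | inv z _ hz =>
        obtain ⟨h1, hh1, rfl⟩ := hz
        exact ⟨h1⁻¹, inv_mem hh1, map_inv θ _⟩
    obtain ⟨h, hh, hhx⟩ := hγH (θ x)
    have h1 : x * h⁻¹ ∈ N := by
      rw [← hker, map_mul, map_inv, hhx, mul_inv_cancel]
    have h2 : x = (x * h⁻¹) * h := by group
    rw [h2]
    exact mul_mem (Subgroup.subset_closure (Or.inl h1)) hh
  have hE_mem : ∀ x : FreeGroup (Fin a), (E x).toAdd ∈ U ⊔ T := by
    intro x
    have hx : x ∈ Subgroup.closure ((N : Set _) ∪ Set.range fun i => ℓ (γ i)) := by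
      rw [hH]; trivial
    induction hx using Subgroup.closure_induction with
    | mem z hz =>
      rcases hz with hz | ⟨i, rfl⟩
      · exact Submodule.mem_sup_left (Submodule.subset_span ⟨z, hz, rfl⟩)
      · exact Submodule.mem_sup_right (Submodule.subset_span ⟨i, rfl⟩)
    | one =>
      rw [map_one]
      exact zero_mem _
    | mul z w _ _ hz hw =>
      rw [map_mul, toAdd_mul]; exact add_mem hz hw
    | inv z _ hz =>
      rw [map_inv, toAdd_inv]; exact neg_mem hz
  have hUT : U ⊔ T = ⊤ := by
    rw [eq_top_iff, ← (Pi.basisFun ℚ (Fin a)).span_eq, Submodule.span_le]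
    rintro _ ⟨i, rfl⟩
    have h1 : (Pi.basisFun ℚ (Fin a)) i = (E (FreeGroup.of i)).toAdd := by
      rw [Pi.basisFun_apply]
      simp [hEdef]
    rw [h1]
    exact hE_mem _
  have hdimT : finrank ℚ T ≤ Fintype.card ι := by
    refine (finrank_span_le_card _).trans ?_
    rw [Set.toFinset_range]
    exact (Finset.card_image_le).trans (by simp)
  have hdimU : a ≤ finrank ℚ U + Fintype.card ι := by
    have h1 : finrank ℚ (⊤ : Submodule ℚ (Fin a → ℚ)) = a := by
      rw [finrank_top, Module.finrank_fintype_fun_eq_card, Fintype.card_fin]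
    have h2 := Submodule.finrank_add_le_finrank_add_finrank U T
    rw [hUT, h1] at h2
    have := hdimT
    omega
  -- the special elements realizing the cup products
  set nn : K → FreeGroup (Fin a) :=
    (fun k => ((c k).map fun uv => ⁅ℓ (γ uv.1), ℓ (γ uv.2)⁆).prod) with hnndef
  have hθnn : ∀ k, θ (nn k) = 1 := by
    intro k
    have h : θ (nn k) = ((c k).map fun uv => ⁅γ uv.1, γ uv.2⁆).prod := by
      rw [hnndef]
      simp only [map_list_prod, List.map_map]
      refine congrArg List.prod (List.map_congr_left fun uv _ => ?_)
      simp [Function.comp, map_commutatorElement, hℓ]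
    rw [h, hrel k]
  have hnnN : ∀ k, nn k ∈ N := fun k => (hker _).1 (hθnn k)
  have hψnn : ∀ j k, ψ j (nn k) = ⟨0, 0, if j = k then 1 else 0⟩ := by
    intro j k
    have h : ψ j (nn k) = (((c k).map fun uv =>
        (A j (γ uv.1)).toAdd * (B j (γ uv.2)).toAdd
          - (A j (γ uv.2)).toAdd * (B j (γ uv.1)).toAdd).map
            fun x => (⟨0, 0, x⟩ : Heis)).prod := by
      rw [hnndef]
      simp only [map_list_prod, List.map_map]
      refine congrArg List.prod (List.map_congr_left fun uv _ => ?_)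
      simp only [Function.comp]
      rw [map_commutatorElement, Heis.commutator_eq]
      simp only [hψp, hψq, hℓ]
    rw [h, Heis.central_prod, hpair j k]
  have hEnn : ∀ k, (E (nn k)).toAdd = 0 := by
    intro k
    have h : E (nn k) = 1 := by
      rw [hnndef]
      simp only [map_list_prod]
      apply List.prod_eq_one
      intro x hx
      simp only [List.map_map, List.mem_map] at hx
      obtain ⟨uv, -, rfl⟩ := hx
      simp only [Function.comp]
      rw [map_commutatorElement]
      exact commutatorElement_eq_one_iff_commute.2 (mul_comm _ _)
    rw [h]; rfl
  set w : K → (Fin a → ℚ) × (K → ℚ) := (fun k => Λ (Ψ (nn k))) with hwdef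
  have hw : ∀ k, w k = (0, Pi.single k 1) := by
    intro k
    refine Prod.ext (hEnn k) (funext fun j => ?_)
    show (ψ j (nn k)).r = (Pi.single k 1 : K → ℚ) j
    rw [hψnn, Pi.single_apply]
  have hwli : LinearIndependent ℚ w := by
    have h1 : LinearIndependent ℚ (fun k : K => Pi.single k (1:ℚ)) := by
      have := (Pi.basisFun ℚ K).linearIndependent
      have h2 : ⇑(Pi.basisFun ℚ K) = fun k : K => Pi.single k (1:ℚ) :=
        funext fun k => Pi.basisFun_apply ℚ K k
      rwa [h2] at this
    have h3 : w = ⇑(LinearMap.inr ℚ (Fin a → ℚ) (K → ℚ)) ∘ (fun k => Pi.single k 1) := by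
      funext k; rw [hw]; rfl
    rw [h3]
    exact h1.map' _ Submodule.ker_inr
  -- dimension counting
  have hSb : finrank ℚ S ≤ b := by
    refine (finrank_span_le_card _).trans ?_
    rw [Set.toFinset_range]
    exact (Finset.card_image_le).trans (by simp)
  set P1 : ((Fin a → ℚ) × (K → ℚ)) →ₗ[ℚ] (Fin a → ℚ) := LinearMap.fst ℚ _ _ with hP1def
  set f : S →ₗ[ℚ] (Fin a → ℚ) := P1.comp S.subtype with hfdef
  have hrn : finrank ℚ (LinearMap.range f) + finrank ℚ (LinearMap.ker f) = finrank ℚ S :=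
    LinearMap.finrank_range_add_finrank_ker f
  have hUrange : finrank ℚ U ≤ finrank ℚ (LinearMap.range f) := by
    apply Submodule.finrank_mono
    rw [hfdef, LinearMap.range_comp, Submodule.range_subtype]
    refine Submodule.span_le.2 ?_
    rintro _ ⟨x, hxN, rfl⟩
    exact ⟨Λ (Ψ x), key x hxN, rfl⟩
  have hWker : Fintype.card K ≤ finrank ℚ (LinearMap.ker f) := by
    have hWS : Submodule.span ℚ (Set.range w) ≤ S :=
      Submodule.span_le.2 (by rintro _ ⟨k, rfl⟩; exact key _ (hnnN k))
    have hker_le : Submodule.comap S.subtype (Submodule.span ℚ (Set.range w)) ≤ LinearMap.ker f := by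
      intro x hx
      have hx' : (x : (Fin a → ℚ) × (K → ℚ)) ∈ Submodule.span ℚ (Set.range w) := hx
      have hspan : Submodule.span ℚ (Set.range w) ≤ LinearMap.ker P1 := by
        refine Submodule.span_le.2 ?_
        rintro _ ⟨k, rfl⟩
        rw [SetLike.mem_coe, LinearMap.mem_ker, hw]
        rfl
      have : P1 (x : (Fin a → ℚ) × (K → ℚ)) = 0 := hspan hx'
      rw [LinearMap.mem_ker, hfdef]
      exact this
    calc Fintype.card K = finrank ℚ (Submodule.span ℚ (Set.range w)) :=
          (finrank_span_eq_card hwli).symm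
      _ = finrank ℚ (Submodule.comap S.subtype (Submodule.span ℚ (Set.range w))) :=
          (LinearEquiv.finrank_eq (Submodule.comapSubtypeEquivOfLe hWS)).symm
      _ ≤ finrank ℚ (LinearMap.ker f) := Submodule.finrank_mono hker_le
  omega

open Subgroup

section Helpers

variable {G H : Type} [Group G] [Group H]

lemma commutator_prod_mk (a c : G) (b d : H) :
    ⁅((a, b) : G × H), ((c, d) : G × H)⁆ = (⁅a, c⁆, ⁅b, d⁆) := rfl

lemma commute_inl_inr (x : G) (y : H) : Commute ((x, 1) : G × H) ((1, y) : G × H) := by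
  show _ = _
  ext <;> simp

lemma commutator_inl_inr (x : G) (y : H) : ⁅((x, 1) : G × H), ((1, y) : G × H)⁆ = 1 :=
  commutatorElement_eq_one_iff_commute.2 (commute_inl_inr x y)

lemma commute_of_mem_closure {S T : Set G} (h : ∀ s ∈ S, ∀ t ∈ T, Commute s t)
    {x y : G} (hx : x ∈ Subgroup.closure S) (hy : y ∈ Subgroup.closure T) : Commute x y := by
  induction hx using Subgroup.closure_induction with
  | mem z hz =>
    induction hy using Subgroup.closure_induction with
    | mem w hw => exact h z hz w hw
    | one => exact Commute.one_right z
    | mul u v _ _ h1 h2 => exact h1.mul_right h2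
    | inv u _ h1 => exact h1.inv_right
  | one => exact Commute.one_left y
  | mul u v _ _ h1 h2 => exact h1.mul_left h2
  | inv u _ h1 => exact h1.inv_left

end Helpers

lemma lift_surfaceRel_comm {g : ℕ} {M : Type} [CommGroup M] (f : Fin g ⊕ Fin g → M) :
    FreeGroup.lift f (surfaceRel g) = 1 := by
  rw [surfaceRel, map_list_prod]
  apply List.prod_eq_one
  intro x hx
  rw [List.map_ofFn] at hx
  obtain ⟨i, rfl⟩ := List.mem_ofFn.1 hx
  rw [Function.comp, map_commutatorElement]
  exact commutatorElement_eq_one_iff_commute.2 (mul_comm _ _)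

lemma mk_surfaceRel (g : ℕ) :
    PresentedGroup.mk ({surfaceRel g} : Set (FreeGroup (Fin g ⊕ Fin g))) (surfaceRel g) = 1 :=
  (QuotientGroup.eq_one_iff _).2 (Subgroup.subset_normalClosure rfl)

lemma surface_rel_holds (g : ℕ) :
    (List.ofFn fun i : Fin g =>
      ⁅(PresentedGroup.of (Sum.inl i) : SurfaceGroup g), PresentedGroup.of (Sum.inr i)⁆).prod = (1 : SurfaceGroup g) := by
  have h := mk_surfaceRel g
  rw [surfaceRel, map_list_prod, List.map_ofFn, ← surfaceRel] at h
  have h2 : List.ofFn (⇑(PresentedGroup.mk {surfaceRel g}) ∘ fun i : Fin g =>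
      ⁅(FreeGroup.of (Sum.inl i) : FreeGroup (Fin g ⊕ Fin g)), FreeGroup.of (Sum.inr i)⁆) =
      List.ofFn (fun i : Fin g =>
        ⁅(PresentedGroup.of (Sum.inl i) : SurfaceGroup g), PresentedGroup.of (Sum.inr i)⁆) := by
    refine congrArg List.ofFn (funext fun i => ?_)
    rw [Function.comp_apply, map_commutatorElement]
    rfl
  rw [h2] at h
  exact h

/-- Generators for `Γ_g × ℤ²`: the surface generators plus two torus generators. -/
abbrev GenT (g : ℕ) := (Fin g ⊕ Fin g) ⊕ Bool

/-- Index type for the relators of `Γ_g × ℤ²`. -/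
abbrev RelI (g : ℕ) := Option (Option ((Fin g ⊕ Fin g) × Bool))

/-- Relators for `Γ_g × ℤ²`. -/
def bigRel (g : ℕ) : RelI g → FreeGroup (GenT g)
  | none => FreeGroup.map Sum.inl (surfaceRel g)
  | some none =>
      ⁅(FreeGroup.of (Sum.inr true) : FreeGroup (GenT g)), FreeGroup.of (Sum.inr false)⁆
  | some (some (s, b)) =>
      ⁅(FreeGroup.of (Sum.inl s) : FreeGroup (GenT g)), FreeGroup.of (Sum.inr b)⁆

abbrev Gam (g : ℕ) := SurfaceGroup g × (Multiplicative ℤ × Multiplicative ℤ)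

def tgen (b : Bool) : Multiplicative ℤ × Multiplicative ℤ :=
  if b then (Multiplicative.ofAdd 1, 1) else (1, Multiplicative.ofAdd 1)

@[simp] lemma tgen_true : tgen true = (Multiplicative.ofAdd 1, 1) := rfl
@[simp] lemma tgen_false : tgen false = (1, Multiplicative.ofAdd 1) := rfl

def fgen (g : ℕ) : GenT g → Gam g
  | Sum.inl s => (PresentedGroup.of s, 1)
  | Sum.inr b => (1, tgen b)

lemma bigRel_lift_one (g : ℕ) : ∀ rel ∈ Set.range (bigRel g), FreeGroup.lift (fgen g) rel = 1 := by
  rintro _ ⟨k, rfl⟩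
  match k with
  | none =>
    simp only [bigRel]
    have h : (FreeGroup.lift (fgen g)).comp (FreeGroup.map Sum.inl) =
        (MonoidHom.inl (SurfaceGroup g) (Multiplicative ℤ × Multiplicative ℤ)).comp
          (PresentedGroup.mk {surfaceRel g}) :=
      FreeGroup.ext_hom _ _ (fun s => by
        simp only [MonoidHom.comp_apply, FreeGroup.map.of, FreeGroup.lift_apply_of]
        rfl)
    have h2 := DFunLike.congr_fun h (surfaceRel g)
    simp only [MonoidHom.comp_apply] at h2
    rw [h2, mk_surfaceRel, map_one]
  | some none =>
    simp only [bigRel]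
    rw [map_commutatorElement]
    simp only [FreeGroup.lift_apply_of]
    show ⁅((1, tgen true) : Gam g), ((1, tgen false) : Gam g)⁆ = 1
    rw [commutator_prod_mk]
    have h1 : ⁅(1 : SurfaceGroup g), (1 : SurfaceGroup g)⁆ = 1 :=
      commutatorElement_eq_one_iff_commute.2 (Commute.one_left _)
    have h2 : ⁅tgen true, tgen false⁆ = 1 :=
      commutatorElement_eq_one_iff_commute.2 (mul_comm _ _)
    rw [h1, h2]
    rfl
  | some (some (s, b)) =>
    simp only [bigRel]
    rw [map_commutatorElement]
    simp only [FreeGroup.lift_apply_of]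
    show ⁅((PresentedGroup.of s, 1) : Gam g), ((1, tgen b) : Gam g)⁆ = 1
    exact commutator_inl_inr _ _

/-- The big presented group `⟨x,y,t₁,t₂ ∣ …⟩`. -/
abbrev BigGroup (g : ℕ) := PresentedGroup (Set.range (bigRel g))

def Phi (g : ℕ) : BigGroup g →* Gam g := PresentedGroup.toGroup (bigRel_lift_one g)

@[simp] lemma Phi_of (g : ℕ) (z : GenT g) : Phi g (PresentedGroup.of z) = fgen g z :=
  PresentedGroup.toGroup.of _

lemma bigRel_one (g : ℕ) (k : RelI g) :
    PresentedGroup.mk (Set.range (bigRel g)) (bigRel g k) = 1 :=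
  (QuotientGroup.eq_one_iff _).2 (Subgroup.subset_normalClosure ⟨k, rfl⟩)

lemma commute_tt (g : ℕ) :
    Commute (PresentedGroup.of (Sum.inr true) : BigGroup g) (PresentedGroup.of (Sum.inr false)) := by
  rw [← commutatorElement_eq_one_iff_commute]
  have h := bigRel_one g (some none)
  rw [show bigRel g (some none) =
    ⁅(FreeGroup.of (Sum.inr true) : FreeGroup (GenT g)), FreeGroup.of (Sum.inr false)⁆ from rfl,
    map_commutatorElement] at h
  exact h

lemma commute_st (g : ℕ) (s : Fin g ⊕ Fin g) (b : Bool) :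
    Commute (PresentedGroup.of (Sum.inl s) : BigGroup g) (PresentedGroup.of (Sum.inr b)) := by
  rw [← commutatorElement_eq_one_iff_commute]
  have h := bigRel_one g (some (some (s, b)))
  rw [show bigRel g (some (some (s, b))) =
    ⁅(FreeGroup.of (Sum.inl s) : FreeGroup (GenT g)), FreeGroup.of (Sum.inr b)⁆ from rfl,
    map_commutatorElement] at h
  exact h

def Psi1 (g : ℕ) : SurfaceGroup g →* BigGroup g :=
  PresentedGroup.toGroup (f := fun s => PresentedGroup.of (Sum.inl s)) (by
    intro rel hrel
    rw [Set.mem_singleton_iff.1 hrel]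
    have h : (FreeGroup.lift fun s => (PresentedGroup.of (Sum.inl s) : BigGroup g)) =
        (PresentedGroup.mk (Set.range (bigRel g))).comp (FreeGroup.map Sum.inl) :=
      FreeGroup.ext_hom _ _ (fun s => by
        simp only [FreeGroup.lift_apply_of, MonoidHom.comp_apply, FreeGroup.map.of]
        rfl)
    rw [h, MonoidHom.comp_apply]
    exact bigRel_one g none)

@[simp] lemma Psi1_of (g : ℕ) (s : Fin g ⊕ Fin g) :
    Psi1 g (PresentedGroup.of s) = PresentedGroup.of (Sum.inl s) :=
  PresentedGroup.toGroup.of _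

def Psi2 (g : ℕ) : (Multiplicative ℤ × Multiplicative ℤ) →* BigGroup g :=
  MonoidHom.noncommCoprod (zpowersHom _ (PresentedGroup.of (Sum.inr true)))
    (zpowersHom _ (PresentedGroup.of (Sum.inr false)))
    (fun m n => by
      simp only [zpowersHom_apply]
      exact (commute_tt g).zpow_zpow _ _)

lemma Psi2_apply (g : ℕ) (m : Multiplicative ℤ × Multiplicative ℤ) :
    Psi2 g m = (PresentedGroup.of (Sum.inr true) : BigGroup g) ^ m.1.toAdd *
      (PresentedGroup.of (Sum.inr false) : BigGroup g) ^ m.2.toAdd := by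
  rw [Psi2, MonoidHom.noncommCoprod_apply, zpowersHom_apply, zpowersHom_apply]

lemma Psi1_mem (g : ℕ) (x : SurfaceGroup g) :
    Psi1 g x ∈ Subgroup.closure (Set.range fun s : Fin g ⊕ Fin g =>
      (PresentedGroup.of (Sum.inl s) : BigGroup g)) := by
  have hx : x ∈ Subgroup.closure (Set.range (PresentedGroup.of :
      (Fin g ⊕ Fin g) → SurfaceGroup g)) := by
    rw [PresentedGroup.closure_range_of]; trivial
  have h2 := Subgroup.mem_map_of_mem (Psi1 g) hx
  rw [MonoidHom.map_closure, ← Set.range_comp] at h2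
  have h3 : (⇑(Psi1 g) ∘ (PresentedGroup.of : (Fin g ⊕ Fin g) → SurfaceGroup g)) =
      fun s : Fin g ⊕ Fin g => (PresentedGroup.of (Sum.inl s) : BigGroup g) :=
    funext fun s => Psi1_of g s
  rwa [h3] at h2

lemma Psi2_mem (g : ℕ) (m : Multiplicative ℤ × Multiplicative ℤ) :
    Psi2 g m ∈ Subgroup.closure
      ({PresentedGroup.of (Sum.inr true), PresentedGroup.of (Sum.inr false)} :
        Set (BigGroup g)) := by
  rw [Psi2_apply]
  have h1 : (PresentedGroup.of (Sum.inr true) : BigGroup g) ∈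
      ({PresentedGroup.of (Sum.inr true), PresentedGroup.of (Sum.inr false)} :
        Set (BigGroup g)) := Set.mem_insert _ _
  have h2 : (PresentedGroup.of (Sum.inr false) : BigGroup g) ∈
      ({PresentedGroup.of (Sum.inr true), PresentedGroup.of (Sum.inr false)} :
        Set (BigGroup g)) := Set.mem_insert_of_mem _ rfl
  exact mul_mem (zpow_mem (Subgroup.subset_closure h1) _)
    (zpow_mem (Subgroup.subset_closure h2) _)

lemma Psi_comm (g : ℕ) (x : SurfaceGroup g) (m : Multiplicative ℤ × Multiplicative ℤ) :
    Commute (Psi1 g x) (Psi2 g m) := by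
  refine commute_of_mem_closure ?_ (Psi1_mem g x) (Psi2_mem g m)
  rintro _ ⟨s, rfl⟩ t ht
  rcases ht with rfl | rfl
  · exact commute_st g s true
  · exact commute_st g s false

def Psi (g : ℕ) : Gam g →* BigGroup g :=
  MonoidHom.noncommCoprod (Psi1 g) (Psi2 g) (Psi_comm g)

lemma Phi_comp_Psi (g : ℕ) : (Phi g).comp (Psi g) = MonoidHom.id (Gam g) := by
  have hs : ∀ x : SurfaceGroup g, Phi g (Psi1 g x) = (x, 1) := by
    have h : (Phi g).comp (Psi1 g) = MonoidHom.inl _ _ := by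
      refine PresentedGroup.ext fun s => ?_
      show Phi g (Psi1 g (PresentedGroup.of s)) = (PresentedGroup.of s, 1)
      rw [Psi1_of, Phi_of]
      rfl
    intro x
    exact DFunLike.congr_fun h x
  refine MonoidHom.ext fun p => ?_
  obtain ⟨x, m1, m2⟩ := p
  show Phi g (Psi g (x, (m1, m2))) = (x, (m1, m2))
  rw [show Psi g (x, (m1, m2)) = Psi1 g x * Psi2 g (m1, m2) from
    MonoidHom.noncommCoprod_apply _ _ _ _, Psi2_apply]
  rw [map_mul, map_mul, map_zpow, map_zpow, Phi_of, Phi_of, hs]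
  show (x, (1, 1)) * (((1, tgen true) : Gam g) ^ m1.toAdd *
    ((1, tgen false) : Gam g) ^ m2.toAdd) = (x, (m1, m2))
  have h1 : ((1, tgen true) : Gam g) ^ m1.toAdd = (1, (m1, 1)) := by
    rw [tgen_true, Prod.pow_mk, Prod.pow_mk, one_zpow, one_zpow, ← ofAdd_zsmul]
    simp
  have h2 : ((1, tgen false) : Gam g) ^ m2.toAdd = (1, (1, m2)) := by
    rw [tgen_false, Prod.pow_mk, Prod.pow_mk, one_zpow, one_zpow, ← ofAdd_zsmul]
    simp
  rw [h1, h2]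
  simp [Prod.ext_iff]

lemma Psi_comp_Phi (g : ℕ) : (Psi g).comp (Phi g) = MonoidHom.id (BigGroup g) := by
  refine PresentedGroup.ext fun z => ?_
  show Psi g (Phi g (PresentedGroup.of z)) = PresentedGroup.of z
  rw [Phi_of]
  match z with
  | Sum.inl s =>
    simp only [fgen]
    rw [show Psi g ((PresentedGroup.of s, 1) : Gam g) = Psi1 g (PresentedGroup.of s) * Psi2 g 1 from
      MonoidHom.noncommCoprod_apply _ _ _ _, map_one, mul_one, Psi1_of]
  | Sum.inr true =>
    simp only [fgen]
    rw [show Psi g ((1, tgen true) : Gam g) = Psi1 g 1 * Psi2 g (tgen true) from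
      MonoidHom.noncommCoprod_apply _ _ _ _, map_one, one_mul, tgen_true, Psi2_apply]
    simp
  | Sum.inr false =>
    simp only [fgen]
    rw [show Psi g ((1, tgen false) : Gam g) = Psi1 g 1 * Psi2 g (tgen false) from
      MonoidHom.noncommCoprod_apply _ _ _ _, map_one, one_mul, tgen_false, Psi2_apply]
    simp

/-- The isomorphism between `Γ_g × ℤ²` and its explicit presentation. -/
def bigEquiv (g : ℕ) : Gam g ≃* BigGroup g :=
  MonoidHom.toMulEquiv (Psi g) (Phi g) (Phi_comp_Psi g) (Psi_comp_Phi g)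

lemma Phi_surjective (g : ℕ) : Function.Surjective (Phi g) := fun y =>
  ⟨Psi g y, DFunLike.congr_fun (Phi_comp_Psi g) y⟩

lemma fgen_generates (g : ℕ) : Subgroup.closure (Set.range (fgen g)) = ⊤ := by
  have h : Set.range (fgen g) = ⇑(Phi g) '' Set.range (PresentedGroup.of) := by
    rw [← Set.range_comp]
    refine congrArg Set.range (funext fun z => ?_)
    simp [Function.comp]
  rw [h, ← MonoidHom.map_closure, PresentedGroup.closure_range_of]
  exact Subgroup.map_top_of_surjective _ (Phi_surjective g)

def surfHom {g : ℕ} (cf : Fin g ⊕ Fin g → ℚ) : SurfaceGroup g →* Multiplicative ℚ :=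
  PresentedGroup.toGroup (f := fun s => Multiplicative.ofAdd (cf s)) (by
    intro rel hrel
    rw [Set.mem_singleton_iff.1 hrel]
    exact lift_surfaceRel_comm _)

@[simp] lemma surfHom_of {g : ℕ} (cf : Fin g ⊕ Fin g → ℚ) (s : Fin g ⊕ Fin g) :
    surfHom cf (PresentedGroup.of s) = Multiplicative.ofAdd (cf s) :=
  PresentedGroup.toGroup.of _

def tHom (q : ℚ) : Multiplicative ℤ →* Multiplicative ℚ :=
  AddMonoidHom.toMultiplicative (zmultiplesHom ℚ q)

@[simp] lemma tHom_apply (q : ℚ) (x : Multiplicative ℤ) :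
    tHom q x = Multiplicative.ofAdd (x.toAdd • q) := rfl

def gam {g : ℕ} (cf : Fin g ⊕ Fin g → ℚ) (q1 q2 : ℚ) : Gam g →* Multiplicative ℚ :=
  ((surfHom cf).comp (MonoidHom.fst _ _)) *
    ((tHom q1).comp ((MonoidHom.fst _ _).comp (MonoidHom.snd _ _))) *
    ((tHom q2).comp ((MonoidHom.snd _ _).comp (MonoidHom.snd _ _)))

lemma gam_fgen {g : ℕ} (cf : Fin g ⊕ Fin g → ℚ) (q1 q2 : ℚ) (z : GenT g) :
    (gam cf q1 q2 (fgen g z)).toAdd = Sum.elim cf (fun b => if b then q1 else q2) z := by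
  match z with
  | Sum.inl s => simp [gam, fgen, MonoidHom.mul_apply]
  | Sum.inr true => simp [gam, fgen, MonoidHom.mul_apply]
  | Sum.inr false => simp [gam, fgen, MonoidHom.mul_apply]

def AA (g : ℕ) [NeZero g] : RelI g → (Gam g →* Multiplicative ℚ)
  | none => gam (fun s => if s = Sum.inl 0 then 1 else 0) 0 0
  | some none => gam (fun _ => 0) 1 0
  | some (some (s, _)) => gam (fun s' => if s' = s then 1 else 0) 0 0

def BB (g : ℕ) [NeZero g] : RelI g → (Gam g →* Multiplicative ℚ)
  | none => gam (fun s => if s = Sum.inr 0 then 1 else 0) 0 0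
  | some none => gam (fun _ => 0) 0 1
  | some (some (_, b)) => gam (fun _ => 0) (if b then 1 else 0) (if b then 0 else 1)

def cc (g : ℕ) : RelI g → List (GenT g × GenT g)
  | none => List.ofFn (fun i : Fin g => (Sum.inl (Sum.inl i), Sum.inl (Sum.inr i)))
  | some none => [(Sum.inr true, Sum.inr false)]
  | some (some (s, b)) => [(Sum.inl s, Sum.inr b)]

lemma cc_rel (g : ℕ) : ∀ k, ((cc g k).map fun uv => ⁅fgen g uv.1, fgen g uv.2⁆).prod = 1 := by
  intro k
  match k with
  | none =>
    simp only [cc, List.map_ofFn]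
    have h : ((fun uv : GenT g × GenT g => ⁅fgen g uv.1, fgen g uv.2⁆) ∘ fun i : Fin g =>
        (Sum.inl (Sum.inl i), Sum.inl (Sum.inr i))) = fun i : Fin g =>
        (MonoidHom.inl (SurfaceGroup g) (Multiplicative ℤ × Multiplicative ℤ))
          ⁅(PresentedGroup.of (Sum.inl i) : SurfaceGroup g), PresentedGroup.of (Sum.inr i)⁆ := by
      funext i
      rw [Function.comp_apply, map_commutatorElement]
      rfl
    rw [h]
    rw [show (List.ofFn fun i : Fin g =>
        (MonoidHom.inl (SurfaceGroup g) (Multiplicative ℤ × Multiplicative ℤ))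
          ⁅(PresentedGroup.of (Sum.inl i) : SurfaceGroup g), PresentedGroup.of (Sum.inr i)⁆)
        = List.map (MonoidHom.inl (SurfaceGroup g) (Multiplicative ℤ × Multiplicative ℤ))
          (List.ofFn fun i : Fin g =>
            ⁅(PresentedGroup.of (Sum.inl i) : SurfaceGroup g), PresentedGroup.of (Sum.inr i)⁆)
        from List.map_ofFn.symm]
    rw [← map_list_prod, surface_rel_holds, map_one]
  | some none =>
    simp only [cc, List.map_cons, List.map_nil, List.prod_cons, List.prod_nil, mul_one]
    simp only [fgen]
    rw [commutator_prod_mk]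
    have h1 : ⁅(1 : SurfaceGroup g), (1 : SurfaceGroup g)⁆ = 1 :=
      commutatorElement_eq_one_iff_commute.2 (Commute.one_left _)
    have h2 : ⁅tgen true, tgen false⁆ = 1 :=
      commutatorElement_eq_one_iff_commute.2 (mul_comm _ _)
    rw [h1, h2]
    rfl
  | some (some (s, b)) =>
    simp only [cc, List.map_cons, List.map_nil, List.prod_cons, List.prod_nil, mul_one, fgen]
    exact commutator_inl_inr _ _

lemma cc_pair (g : ℕ) [NeZero g] : ∀ j k, ((cc g k).map fun uv =>
    (AA g j (fgen g uv.1)).toAdd * (BB g j (fgen g uv.2)).toAdd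
      - (AA g j (fgen g uv.2)).toAdd * (BB g j (fgen g uv.1)).toAdd).sum
      = if j = k then 1 else 0 := by
  intro j k
  obtain _ | _ | ⟨s, b⟩ := j <;> obtain _ | _ | ⟨s', b'⟩ := k <;>
    simp [cc, AA, BB, gam_fgen, List.sum_ofFn, Finset.sum_ite_eq']
  by_cases hs : s' = s <;> by_cases hb : b' = b <;>
    cases b <;> simp_all [eq_comm]


/-- `def(Γ_g × ℤ²) = -2g` for every `g ≥ 1`. -/
theorem deficiency_surfaceGroup_prod_int_pow_two (g : ℕ) (hg : 1 ≤ g) :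
    HasDeficiency (SurfaceGroup g × (Multiplicative ℤ × Multiplicative ℤ))
      (-(2 * (g : ℤ))) := by
  haveI : NeZero g := ⟨by omega⟩
  have hcard1 : Fintype.card (GenT g) = 2 * g + 2 := by
    simp only [GenT, Fintype.card_sum, Fintype.card_fin, Fintype.card_bool]
    omega
  have hcard2 : Fintype.card (RelI g) = 4 * g + 2 := by
    simp only [RelI, Fintype.card_option, Fintype.card_prod, Fintype.card_sum,
      Fintype.card_fin, Fintype.card_bool]
    omega
  constructor
  · refine ⟨2 * g + 2, 4 * g + 2, ?_, by push_cast; ring⟩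
    have e1 : GenT g ≃ Fin (2 * g + 2) := Fintype.equivFinOfCardEq hcard1
    have e2 : Fin (4 * g + 2) ≃ RelI g := (Fintype.equivFinOfCardEq hcard2).symm
    refine ⟨fun j => FreeGroup.freeGroupCongr e1 (bigRel g (e2 j)), ?_⟩
    have hrange : Set.range (fun j => FreeGroup.freeGroupCongr e1 (bigRel g (e2 j)))
        = ⇑(FreeGroup.freeGroupCongr e1) '' Set.range (bigRel g) := by
      have h1 : Set.range ((⇑(FreeGroup.freeGroupCongr e1) ∘ bigRel g) ∘ ⇑e2)
          = Set.range (⇑(FreeGroup.freeGroupCongr e1) ∘ bigRel g) :=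
        e2.surjective.range_comp _
      rw [show (fun j => FreeGroup.freeGroupCongr e1 (bigRel g (e2 j)))
          = (⇑(FreeGroup.freeGroupCongr e1) ∘ bigRel g) ∘ ⇑e2 from rfl, h1,
        Set.range_comp]
    rw [hrange]
    exact ⟨(bigEquiv g).trans (PresentedGroup.equivPresentedGroup (Set.range (bigRel g)) e1)⟩
  · rintro a b ⟨r, ⟨φ⟩⟩
    have h := deficiency_upper (fgen g) (fgen_generates g) (AA g) (BB g) (cc g)
      (cc_rel g) (cc_pair g) r φ
    rw [hcard1, hcard2] at h
    omega
end

section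
/- For every prime p, the elementary abelian group (ℤ/p)³ satisfies def((ℤ/p)³) = −3. -/
set_option linter.unusedSectionVars false

namespace Defic

structure Hei (a : ℕ) (R : Type) where
  v : Fin a → R
  t : Fin a → Fin a → R

namespace Hei

variable {a : ℕ} {R : Type} [CommRing R]

@[ext] theorem ext' {x y : Hei a R} (h1 : x.v = y.v) (h2 : x.t = y.t) : x = y := by
  cases x; cases y; simp_all

instance : Group (Hei a R) where
  mul x y := ⟨fun i => x.v i + y.v i, fun i j => x.t i j + y.t i j + x.v i * y.v j⟩
  one := ⟨fun _ => 0, fun _ _ => 0⟩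
  inv x := ⟨fun i => -x.v i, fun i j => -x.t i j + x.v i * x.v j⟩
  mul_assoc x y z := by
    refine ext' ?_ ?_ <;> funext i <;> try funext j
    · show (x.v i + y.v i) + z.v i = x.v i + (y.v i + z.v i); ring
    · show (x.t i j + y.t i j + x.v i * y.v j) + z.t i j + (x.v i + y.v i) * z.v j
        = x.t i j + (y.t i j + z.t i j + y.v i * z.v j) + x.v i * (y.v j + z.v j)
      ring
  one_mul x := by
    refine ext' ?_ ?_ <;> funext i <;> try funext j
    · show 0 + x.v i = x.v i; ring
    · show 0 + x.t i j + 0 * x.v j = x.t i j; ring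
  mul_one x := by
    refine ext' ?_ ?_ <;> funext i <;> try funext j
    · show x.v i + 0 = x.v i; ring
    · show x.t i j + 0 + x.v i * 0 = x.t i j; ring
  inv_mul_cancel x := by
    refine ext' ?_ ?_ <;> funext i <;> try funext j
    · show -x.v i + x.v i = 0; ring
    · show (-x.t i j + x.v i * x.v j) + x.t i j + (-x.v i) * x.v j = 0; ring

@[simp] theorem mul_v (x y : Hei a R) : (x * y).v = fun i => x.v i + y.v i := rfl
@[simp] theorem mul_t (x y : Hei a R) :
    (x * y).t = fun i j => x.t i j + y.t i j + x.v i * y.v j := rfl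
@[simp] theorem inv_v (x : Hei a R) : (x⁻¹).v = fun i => -x.v i := rfl
@[simp] theorem inv_t (x : Hei a R) : (x⁻¹).t = fun i j => -x.t i j + x.v i * x.v j := rfl
@[simp] theorem one_v : (1 : Hei a R).v = fun _ => 0 := rfl
@[simp] theorem one_t : (1 : Hei a R).t = fun _ _ => 0 := rfl

end Hei

variable (p a : ℕ) [Fact p.Prime]

instance : NeZero (p^2) := ⟨pow_ne_zero _ (Fact.out (p := p.Prime)).ne_zero⟩

noncomputable abbrev cp : ZMod (p^2) →+* ZMod p := ZMod.castHom (dvd_pow_self p two_ne_zero) _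

variable (M : Fin 3 → Fin a → ZMod p)

noncomputable def Amap : (Fin a → ZMod (p^2)) →+ (Fin 3 → ZMod p) :=
  AddMonoidHom.mk' (fun v k => ∑ i, cp p (v i) * M k i) (by
    intro u v; funext k
    show ∑ i, cp p ((u + v) i) * M k i = (∑ i, cp p (u i) * M k i) + ∑ i, cp p (v i) * M k i
    simp only [Pi.add_apply, map_add, add_mul]
    rw [Finset.sum_add_distrib])

noncomputable def Lmap : (Fin a → Fin a → ZMod (p^2)) →+ (Fin 3 → Fin 3 → ZMod p) :=
  AddMonoidHom.mk' (fun t k l => ∑ i, ∑ j, cp p (t i j) * M k i * M l j) (by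
    intro s t; funext k l
    show ∑ i, ∑ j, cp p ((s + t) i j) * M k i * M l j
        = (∑ i, ∑ j, cp p (s i j) * M k i * M l j) + ∑ i, ∑ j, cp p (t i j) * M k i * M l j
    simp only [Pi.add_apply, map_add, add_mul]
    rw [← Finset.sum_add_distrib]
    exact Finset.sum_congr rfl fun i _ => Finset.sum_add_distrib)

theorem Lmap_outer (v w : Fin a → ZMod (p^2)) :
    Lmap p a M (fun i j => v i * w j) = fun k l => Amap p a M v k * Amap p a M w l := by
  funext k l
  show ∑ i, ∑ j, cp p (v i * w j) * M k i * M l j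
      = (∑ i, cp p (v i) * M k i) * (∑ j, cp p (w j) * M l j)
  rw [Finset.sum_mul_sum]
  refine Finset.sum_congr rfl fun i _ => Finset.sum_congr rfl fun j _ => ?_
  rw [map_mul]; ring

/-- ambient abelian group -/
abbrev Kgp := (Fin a → ZMod (p^2)) × (Fin 3 → Fin 3 → ZMod p)

noncomputable def theta (x : Hei a (ZMod (p^2))) : Kgp p a := (x.v, Lmap p a M x.t)

variable {p a M}

theorem theta_mul (x y : Hei a (ZMod (p^2))) :
    theta p a M (x * y) = theta p a M x + theta p a M y
      + (0, fun k l => Amap p a M x.v k * Amap p a M y.v l) := by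
  refine Prod.ext ?_ ?_
  · funext i
    show x.v i + y.v i = x.v i + y.v i + 0
    ring
  · show Lmap p a M (x.t + y.t + fun i j => x.v i * y.v j) = _
    rw [map_add, map_add, Lmap_outer]
    rfl

theorem theta_inv (x : Hei a (ZMod (p^2))) :
    theta p a M x⁻¹ = -theta p a M x
      + (0, fun k l => Amap p a M x.v k * Amap p a M x.v l) := by
  refine Prod.ext ?_ ?_
  · funext i
    show -x.v i = -x.v i + 0
    ring
  · show Lmap p a M ((-x.t) + fun i j => x.v i * x.v j) = _
    rw [map_add, map_neg, Lmap_outer]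
    rfl

theorem theta_conj (g x : Hei a (ZMod (p^2))) (hx : Amap p a M x.v = 0) :
    theta p a M (g * x * g⁻¹) = theta p a M x := by
  have hgx : Amap p a M ((g * x).v) = Amap p a M g.v := by
    have h : (g * x).v = g.v + x.v := rfl
    rw [h, map_add, hx, add_zero]
  have hgi : Amap p a M ((g⁻¹).v) = -Amap p a M g.v := by
    have h : (g⁻¹).v = -g.v := rfl
    rw [h, map_neg]
  rw [theta_mul, theta_mul, theta_inv, hgx, hgi, hx]
  have h1 : ((0, fun k l => Amap p a M g.v k * (0 : Fin 3 → ZMod p) l) : Kgp p a) = 0 := by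
    refine Prod.ext rfl ?_
    funext k l
    show Amap p a M g.v k * 0 = 0
    ring
  have h3 : ((0, fun k l => Amap p a M g.v k * (-(Amap p a M g.v)) l) : Kgp p a)
      = -((0, fun k l => Amap p a M g.v k * Amap p a M g.v l) : Kgp p a) := by
    refine Prod.ext (by simp) ?_
    funext k l
    show Amap p a M g.v k * (-(Amap p a M g.v l)) = -(Amap p a M g.v k * Amap p a M g.v l)
    ring
  rw [h1, h3]
  abel

theorem theta_commutator (x y : Hei a (ZMod (p^2))) :
    theta p a M (x * y * x⁻¹ * y⁻¹) = (0, fun k l =>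
      Amap p a M x.v k * Amap p a M y.v l - Amap p a M y.v k * Amap p a M x.v l) := by
  have hc : x * y * x⁻¹ * y⁻¹
      = ⟨fun _ => 0, fun i j => x.v i * y.v j - y.v i * x.v j⟩ := by
    refine Hei.ext' ?_ ?_ <;> funext i <;> try funext j
    · simp only [Hei.mul_v, Hei.inv_v]
      ring
    · simp only [Hei.mul_v, Hei.mul_t, Hei.inv_v, Hei.inv_t]
      ring
  rw [hc]
  refine Prod.ext rfl ?_
  show Lmap p a M ((fun i j => x.v i * y.v j) - fun i j => y.v i * x.v j) = _
  rw [map_sub, Lmap_outer, Lmap_outer]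
  rfl

theorem theta_one : theta p a M 1 = 0 := by
  refine Prod.ext rfl ?_
  show Lmap p a M (0 : Fin a → Fin a → ZMod (p^2)) = 0
  exact map_zero _

theorem theta_mul_ker (x y : Hei a (ZMod (p^2))) (hx : Amap p a M x.v = 0) :
    theta p a M (x * y) = theta p a M x + theta p a M y := by
  rw [theta_mul, hx]
  have h : ((0, fun k l => (0 : Fin 3 → ZMod p) k * Amap p a M y.v l) : Kgp p a) = 0 := by
    refine Prod.ext rfl ?_
    funext k l
    show (0 : ZMod p) * _ = 0
    ring
  rw [h, add_zero]

theorem theta_inv_ker (x : Hei a (ZMod (p^2))) (hx : Amap p a M x.v = 0) :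
    theta p a M x⁻¹ = -theta p a M x := by
  rw [theta_inv, hx]
  have h : ((0, fun k l => (0 : Fin 3 → ZMod p) k * (0 : Fin 3 → ZMod p) l) : Kgp p a) = 0 := by
    refine Prod.ext rfl ?_
    funext k l
    show (0 : ZMod p) * _ = 0
    ring
  rw [h, add_zero]

variable (p a M)

theorem Amap_single (i : Fin a) :
    Amap p a M (fun j => if j = i then 1 else 0) = fun k => M k i := by
  funext k
  show ∑ j, cp p (if j = i then 1 else 0) * M k j = M k i
  have h : ∀ j, cp p (if j = i then (1 : ZMod (p^2)) else 0) * M k j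
      = if j = i then M k j else 0 := by
    intro j
    by_cases hj : j = i
    · subst hj; rw [if_pos rfl, if_pos rfl, map_one, one_mul]
    · rw [if_neg hj, if_neg hj, map_zero, zero_mul]
  simp only [h]
  simp

/-- the generators of the Magnus group -/
def gen (i : Fin a) : Hei a (ZMod (p^2)) := ⟨fun j => if j = i then 1 else 0, fun _ _ => 0⟩

theorem prod_v (L : List (Hei a (ZMod (p^2)))) :
    (L.prod).v = fun i => (L.map (fun x => x.v i)).sum := by
  induction L with
  | nil => rfl
  | cons x L ih =>
    funext i
    rw [List.prod_cons]
    show x.v i + (L.prod).v i = _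
    rw [ih]
    simp

theorem pow_v (x : Hei a (ZMod (p^2))) (m : ℕ) : (x ^ m).v = fun i => m • x.v i := by
  induction m with
  | zero => simp [pow_zero]
  | succ m ih =>
    funext i
    have h : x ^ (m+1) = x ^ m * x := pow_succ x m
    rw [h]
    show (x ^ m).v i + x.v i = _
    rw [ih]
    simp only [succ_nsmul]

/-- canonical word with given exponents -/
def word (c : Fin a → ℕ) : FreeGroup (Fin a) :=
  (List.ofFn fun i => FreeGroup.of i ^ c i).prod

noncomputable def mu : FreeGroup (Fin a) →* Hei a (ZMod (p^2)) :=
  FreeGroup.lift (fun i => gen p a i)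

theorem mu_word_v (c : Fin a → ℕ) :
    (mu p a (word a c)).v = fun i => (c i : ZMod (p^2)) := by
  rw [word, map_list_prod, List.map_ofFn, prod_v]
  funext i
  rw [List.map_ofFn, List.sum_ofFn]
  have h : ∀ j : Fin a, ((fun x => Hei.v x i) ∘ (⇑(mu p a)) ∘ fun i => FreeGroup.of i ^ c i) j
      = if i = j then (c j : ZMod (p^2)) else 0 := by
    intro j
    show (mu p a (FreeGroup.of j ^ c j)).v i = _
    rw [map_pow, pow_v]
    have hg : mu p a (FreeGroup.of j) = gen p a j := FreeGroup.lift_apply_of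
    rw [hg]
    show c j • (if i = j then (1 : ZMod (p^2)) else 0) = _
    by_cases hij : i = j <;> simp [hij]
  exact (Finset.sum_congr rfl fun j _ => h j).trans (by simp)

theorem theta_fst (x : Hei a (ZMod (p^2))) : (theta p a M x).1 = x.v := rfl

/-- the explicit equivalence between the triple product and functions out of `Fin 3` -/
def epsilon : (Multiplicative (ZMod p) × Multiplicative (ZMod p) × Multiplicative (ZMod p))
    ≃* Multiplicative (Fin 3 → ZMod p) where
  toFun g := Multiplicative.ofAdd ![g.1.toAdd, g.2.1.toAdd, g.2.2.toAdd]
  invFun f := (Multiplicative.ofAdd (f.toAdd 0), Multiplicative.ofAdd (f.toAdd 1),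
    Multiplicative.ofAdd (f.toAdd 2))
  left_inv g := by rfl
  right_inv f := by
    apply Multiplicative.toAdd.injective
    funext k
    fin_cases k <;> rfl
  map_mul' g h := by
    apply Multiplicative.toAdd.injective
    funext k
    fin_cases k <;> rfl

theorem main_bound {b : ℕ} (r : Fin b → FreeGroup (Fin a))
    (e : (Multiplicative (ZMod p) × Multiplicative (ZMod p) × Multiplicative (ZMod p))
      ≃* PresentedGroup (Set.range r)) :
    a + 3 ≤ b := by
  classical
  set N := Subgroup.normalClosure (Set.range r) with hN
  let q : FreeGroup (Fin a) →* PresentedGroup (Set.range r) := PresentedGroup.mk (Set.range r)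
  let φ : FreeGroup (Fin a) →* Multiplicative (Fin 3 → ZMod p) :=
    ((epsilon p).toMonoidHom.comp e.symm.toMonoidHom).comp q
  have hkerq : ∀ w, q w = 1 ↔ w ∈ N := fun w => QuotientGroup.eq_one_iff w
  have hker : ∀ w, φ w = 1 ↔ w ∈ N := by
    intro w
    show epsilon p (e.symm (q w)) = 1 ↔ _
    rw [MulEquiv.map_eq_one_iff, MulEquiv.map_eq_one_iff]
    exact hkerq w
  have hsurj : Function.Surjective φ := by
    have h1 : Function.Surjective q := PresentedGroup.mk_surjective _
    exact ((epsilon p).surjective.comp e.symm.surjective).comp h1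
  set M : Fin 3 → Fin a → ZMod p := fun k i => (φ (FreeGroup.of i)).toAdd k with hM
  have hfac : ∀ w, Multiplicative.ofAdd (Amap p a M (mu p a w).v) = φ w := by
    have h : (MonoidHom.mk' (fun x : Hei a (ZMod (p^2)) =>
        Multiplicative.ofAdd (Amap p a M x.v)) (by
          intro x y
          show Multiplicative.ofAdd (Amap p a M (x * y).v) = _
          have hv : (x * y).v = x.v + y.v := rfl
          rw [hv, map_add]
          rfl)).comp (mu p a) = φ := by
      apply FreeGroup.ext_hom
      intro i
      show Multiplicative.ofAdd (Amap p a M (mu p a (FreeGroup.of i)).v) = φ (FreeGroup.of i)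
      have hg : mu p a (FreeGroup.of i) = gen p a i := FreeGroup.lift_apply_of
      rw [hg]
      show Multiplicative.ofAdd (Amap p a M (fun j => if j = i then 1 else 0)) = _
      rw [Amap_single]
      rfl
    intro w
    exact DFunLike.congr_fun h w
  have hA0 : ∀ w, φ w = 1 → Amap p a M (mu p a w).v = 0 := by
    intro w hw
    have := hfac w
    rw [hw] at this
    exact ofAdd_eq_one.mp this
  have hAval : ∀ w, Amap p a M (mu p a w).v = (φ w).toAdd := by
    intro w
    have h := hfac w
    apply Multiplicative.ofAdd.injective
    rw [h]
    rfl
  set S : AddSubgroup (Kgp p a) :=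
    AddSubgroup.closure (Set.range fun i => theta p a M (mu p a (r i))) with hS
  have hSmem : ∀ w ∈ N, φ w = 1 ∧ theta p a M (mu p a w) ∈ S := by
    let N' : Subgroup (FreeGroup (Fin a)) :=
      { carrier := {w | φ w = 1 ∧ theta p a M (mu p a w) ∈ S}
        one_mem' := ⟨map_one φ, by rw [map_one, theta_one]; exact zero_mem S⟩
        mul_mem' := by
          rintro x y ⟨hx1, hx2⟩ ⟨hy1, hy2⟩
          refine ⟨by rw [map_mul, hx1, hy1, one_mul], ?_⟩
          rw [map_mul, theta_mul_ker _ _ (hA0 x hx1)]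
          exact add_mem hx2 hy2
        inv_mem' := by
          rintro x ⟨hx1, hx2⟩
          refine ⟨by rw [map_inv, hx1, inv_one], ?_⟩
          rw [map_inv, theta_inv_ker _ (hA0 x hx1)]
          exact neg_mem hx2 }
    haveI : N'.Normal := by
      constructor
      rintro n ⟨hn1, hn2⟩ g
      refine ⟨by rw [map_mul, map_mul, hn1, map_inv, mul_one, mul_inv_cancel], ?_⟩
      rw [map_mul, map_mul, map_inv, theta_conj _ _ (hA0 n hn1)]
      exact hn2
    have hle : N ≤ N' := by
      apply Subgroup.normalClosure_le_normal
      rintro x ⟨i, rfl⟩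
      refine ⟨(hker (r i)).mpr (Subgroup.subset_normalClosure ⟨i, rfl⟩), ?_⟩
      exact AddSubgroup.subset_closure ⟨i, rfl⟩
    exact fun w hw => hle hw
  have hS1 : ∀ s ∈ S, Amap p a M s.1 = 0 := by
    intro s hs
    have hle : S ≤ ((Amap p a M).comp (AddMonoidHom.fst _ _)).ker := by
      rw [hS]
      apply AddSubgroup.closure_le _ |>.mpr
      rintro x ⟨i, rfl⟩
      show Amap p a M (theta p a M (mu p a (r i))).1 = 0
      rw [theta_fst]
      exact hA0 (r i) ((hker (r i)).mpr (Subgroup.subset_normalClosure ⟨i, rfl⟩))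
    exact hle hs
  -- ===== counting =====
  have hp1 : 1 < p := (Fact.out (p := p.Prime)).one_lt
  have hppos : 0 < p := lt_trans zero_lt_one hp1
  let Usub : AddSubgroup (Fin a → ZMod (p^2)) := (Amap p a M).ker
  have hUsurj : Function.Surjective (Amap p a M) := by
    intro y
    obtain ⟨w, hw⟩ := hsurj (Multiplicative.ofAdd y)
    exact ⟨(mu p a w).v, by rw [hAval, hw]; rfl⟩
  have cardV : Nat.card (Fin a → ZMod (p^2)) = p ^ (2*a) := by
    rw [Nat.card_pi]
    simp only [Nat.card_zmod, Finset.prod_const, Finset.card_univ, Fintype.card_fin]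
    rw [← pow_mul]
  have cardW3 : Nat.card (Fin 3 → ZMod p) = p ^ 3 := by
    rw [Nat.card_pi]
    simp [Nat.card_zmod]
  have cardU : Nat.card Usub * p ^ 3 = p ^ (2*a) := by
    have h1 := AddSubgroup.card_eq_card_quotient_mul_card_addSubgroup Usub
    have h2 : Nat.card ((Fin a → ZMod (p^2)) ⧸ Usub) = p ^ 3 := by
      rw [Nat.card_congr (QuotientAddGroup.quotientKerEquivOfSurjective _ hUsurj).toEquiv]
      exact cardW3
    rw [h2, mul_comm] at h1
    rw [← h1, cardV]
  -- the multiplication-by-p maps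
  let psmulV : (Fin a → ZMod (p^2)) →+ (Fin a → ZMod (p^2)) :=
    AddMonoidHom.mk' (fun v => p • v) (fun x y => smul_add _ x y)
  let g0 : Usub →+ (Fin a → ZMod (p^2)) := psmulV.comp Usub.subtype
  have cardkerg0 : p ^ a ≤ Nat.card g0.ker := by
    have hmem : ∀ c : Fin a → ZMod p,
        (fun i => (p : ZMod (p^2)) * ((c i).val : ZMod (p^2))) ∈ Usub := by
      intro c
      show Amap p a M _ = 0
      funext k
      show ∑ i, cp p ((p : ZMod (p^2)) * ((c i).val : ZMod (p^2))) * M k i = 0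
      refine Finset.sum_eq_zero fun i _ => ?_
      rw [map_mul, map_natCast (cp p) p, ZMod.natCast_self, zero_mul, zero_mul]
    have hpp : ((p : ZMod (p^2)) * (p : ZMod (p^2))) = 0 := by
      rw [← Nat.cast_mul, ← pow_two, ZMod.natCast_self]
    have hker0 : ∀ c : Fin a → ZMod p,
        (⟨fun i => (p : ZMod (p^2)) * ((c i).val : ZMod (p^2)), hmem c⟩ : Usub) ∈ g0.ker := by
      intro c
      rw [AddMonoidHom.mem_ker]
      show p • (fun i => (p : ZMod (p^2)) * ((c i).val : ZMod (p^2))) = 0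
      funext i
      show p • ((p : ZMod (p^2)) * ((c i).val : ZMod (p^2))) = 0
      rw [nsmul_eq_mul, ← mul_assoc, hpp, zero_mul]
    have hinj : Function.Injective (fun c : Fin a → ZMod p =>
        (⟨⟨fun i => (p : ZMod (p^2)) * ((c i).val : ZMod (p^2)), hmem c⟩, hker0 c⟩ : g0.ker)) := by
      intro c c' h
      have h1 : (fun i => (p : ZMod (p^2)) * ((c i).val : ZMod (p^2)))
          = (fun i => (p : ZMod (p^2)) * ((c' i).val : ZMod (p^2))) :=
        congrArg Subtype.val (congrArg Subtype.val h)
      funext i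
      have h2 : ((p * (c i).val : ℕ) : ZMod (p^2)) = ((p * (c' i).val : ℕ) : ZMod (p^2)) := by
        push_cast
        exact congrFun h1 i
      have hlt : ∀ d : ZMod p, p * d.val < p ^ 2 := by
        intro d
        rw [pow_two]
        exact (Nat.mul_lt_mul_left hppos).mpr (ZMod.val_lt d)
      have h3 : p * (c i).val = p * (c' i).val := by
        have := congrArg ZMod.val h2
        rwa [ZMod.val_cast_of_lt (hlt (c i)), ZMod.val_cast_of_lt (hlt (c' i))] at this
      exact ZMod.val_injective p (Nat.eq_of_mul_eq_mul_left hppos h3)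
    calc p ^ a = Nat.card (Fin a → ZMod p) := by
          rw [Nat.card_pi]; simp [Nat.card_zmod]
    _ ≤ Nat.card g0.ker := Nat.card_le_card_of_injective _ hinj
  have cardUdec : Nat.card Usub = Nat.card g0.range * Nat.card g0.ker := by
    have h1 := AddSubgroup.card_eq_card_quotient_mul_card_addSubgroup g0.ker
    rw [Nat.card_congr (QuotientAddGroup.quotientKerEquivRange g0).toEquiv] at h1
    exact h1
  let psmulK : Kgp p a →+ Kgp p a :=
    AddMonoidHom.mk' (fun x => (p : ℤ) • x) (fun x y => smul_add _ x y)
  let pS : AddSubgroup (Kgp p a) := S.map psmulK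
  have hpS : ∀ x ∈ pS, x.2 = 0 ∧ x.1 ∈ g0.range := by
    rintro x ⟨s, hsS, rfl⟩
    constructor
    · show ((p : ℤ) • s).2 = 0
      funext k l
      show (p : ℤ) • s.2 k l = 0
      rw [zsmul_eq_mul]
      push_cast
      rw [ZMod.natCast_self, zero_mul]
    · show ((p : ℤ) • s).1 ∈ g0.range
      have h1 : ((p : ℤ) • s).1 = g0 ⟨s.1, AddMonoidHom.mem_ker.mpr (hS1 s hsS)⟩ := by
        show (p : ℤ) • s.1 = p • s.1
        rw [natCast_zsmul]
      rw [h1]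
      exact ⟨_, rfl⟩
  have cardpS : Nat.card pS ≤ Nat.card g0.range := by
    have hinj : Function.Injective (fun x : pS => (⟨x.1.1, (hpS x.1 x.2).2⟩ : g0.range)) := by
      rintro x y h
      have h1 : x.1.1 = y.1.1 := congrArg Subtype.val h
      apply Subtype.ext
      apply Prod.ext h1
      rw [(hpS x.1 x.2).1, (hpS y.1 y.2).1]
    exact Nat.card_le_card_of_injective _ hinj
  -- upper bound on S
  have cardS_ub : Nat.card S ≤ p ^ b * Nat.card pS := by
    set gens : Fin b → Kgp p a := fun i => theta p a M (mu p a (r i)) with hgens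
    have hgen : ∀ i, gens i ∈ S := fun i => AddSubgroup.subset_closure ⟨i, rfl⟩
    have hpSle : pS ≤ S := by
      rintro x ⟨s, hsS, rfl⟩
      show (p:ℤ) • s ∈ S
      exact zsmul_mem hsS _
    have hsurjF : ∀ s ∈ S, ∃ (c : Fin b → ZMod p) (z : Kgp p a), z ∈ pS ∧
        s = (∑ i, ((c i).val : ℤ) • gens i) + z := by
      intro s hsS
      have hspan : s ∈ Submodule.span ℤ (Set.range gens) := by
        have heq := Submodule.span_int_eq_addSubgroupClosure (Set.range gens)
        have : s ∈ (Submodule.span ℤ (Set.range gens)).toAddSubgroup := by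
          rw [heq]
          exact hsS
        exact this
      obtain ⟨m, hm⟩ := (Submodule.mem_span_range_iff_exists_fun ℤ).mp hspan
      refine ⟨fun i => ((m i : ℤ) : ZMod p), s - ∑ i, ((((m i : ℤ) : ZMod p)).val : ℤ) • gens i,
        ?_, by abel⟩
      have hdvd : ∀ i, ∃ k : ℤ, m i - ((((m i : ℤ) : ZMod p)).val : ℤ) = p * k := by
        intro i
        have : ((m i - ((((m i : ℤ) : ZMod p)).val : ℤ) : ℤ) : ZMod p) = 0 := by
          push_cast
          rw [ZMod.natCast_val, ZMod.cast_id, sub_eq_zero]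
        exact (ZMod.intCast_zmod_eq_zero_iff_dvd _ p).mp this
      choose k hk using hdvd
      refine ⟨∑ i, k i • gens i, sum_mem (fun i _ => zsmul_mem (hgen i) _), ?_⟩
      show (p:ℤ) • ∑ i, k i • gens i = s - ∑ i, ((((m i : ℤ) : ZMod p)).val : ℤ) • gens i
      rw [Finset.smul_sum, ← hm, ← Finset.sum_sub_distrib]
      refine Finset.sum_congr rfl fun i _ => ?_
      rw [smul_smul, ← sub_smul, hk i]
    let F : (Fin b → ZMod p) × pS → S := fun cz =>
      ⟨(∑ i, ((cz.1 i).val : ℤ) • gens i) + cz.2.1,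
        add_mem (sum_mem fun i _ => zsmul_mem (hgen i) _) (hpSle cz.2.2)⟩
    have hFsurj : Function.Surjective F := by
      rintro ⟨s, hsS⟩
      obtain ⟨c, z, hz, hsz⟩ := hsurjF s hsS
      exact ⟨(c, ⟨z, hz⟩), Subtype.ext hsz.symm⟩
    calc Nat.card S ≤ Nat.card ((Fin b → ZMod p) × pS) :=
          Nat.card_le_card_of_surjective F hFsurj
    _ = p ^ b * Nat.card pS := by
        rw [Nat.card_prod, Nat.card_pi]
        simp [Nat.card_zmod]
  -- lower bound on S
  have cardS_lb : Nat.card Usub * p ^ 3 ≤ Nat.card S := by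
    have hword : ∀ u : Usub,
        theta p a M (mu p a (word a fun i => ((u : Fin a → ZMod (p^2)) i).val)) ∈ S ∧
        (mu p a (word a fun i => ((u : Fin a → ZMod (p^2)) i).val)).v
          = (u : Fin a → ZMod (p^2)) := by
      intro u
      have hv : (mu p a (word a fun i => ((u : Fin a → ZMod (p^2)) i).val)).v
          = (u : Fin a → ZMod (p^2)) := by
        rw [mu_word_v]
        funext i
        rw [ZMod.natCast_val, ZMod.cast_id]
      have hu0 : Amap p a M (u : Fin a → ZMod (p^2)) = 0 := u.2
      have hφ : φ (word a fun i => ((u : Fin a → ZMod (p^2)) i).val) = 1 := by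
        rw [← hfac, hv, hu0]
        rfl
      exact ⟨(hSmem _ ((hker _).mp hφ)).2, hv⟩
    have hcommS : ∀ x y : Fin 3 → ZMod p,
        ((0, fun k l => x k * y l - y k * x l) : Kgp p a) ∈ S := by
      intro x y
      obtain ⟨f, hf⟩ := hsurj (Multiplicative.ofAdd x)
      obtain ⟨g, hg⟩ := hsurj (Multiplicative.ofAdd y)
      have hfA : Amap p a M (mu p a f).v = x := by rw [hAval, hf]; rfl
      have hgA : Amap p a M (mu p a g).v = y := by rw [hAval, hg]; rfl
      have hone : φ (f * g * f⁻¹ * g⁻¹) = 1 := by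
        simp only [map_mul, map_inv]
        rw [mul_comm (φ f) (φ g)]
        group
      have hmem := (hSmem _ ((hker _).mp hone)).2
      simp only [map_mul, map_inv] at hmem
      rw [theta_commutator, hfA, hgA] at hmem
      exact hmem
    let sgl : Fin 3 → ZMod p → (Fin 3 → ZMod p) := fun i x j => if j = i then x else 0
    let tA : (Fin 3 → ZMod p) → (Fin 3 → Fin 3 → ZMod p) := fun c k l =>
      sgl (0:Fin 3) (c 0) k * sgl (1:Fin 3) (1:ZMod p) l
        - sgl (1:Fin 3) (1:ZMod p) k * sgl (0:Fin 3) (c 0) l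
    let tB : (Fin 3 → ZMod p) → (Fin 3 → Fin 3 → ZMod p) := fun c k l =>
      sgl (0:Fin 3) (c 1) k * sgl (2:Fin 3) (1:ZMod p) l
        - sgl (2:Fin 3) (1:ZMod p) k * sgl (0:Fin 3) (c 1) l
    let tC : (Fin 3 → ZMod p) → (Fin 3 → Fin 3 → ZMod p) := fun c k l =>
      sgl (1:Fin 3) (c 2) k * sgl (2:Fin 3) (1:ZMod p) l
        - sgl (2:Fin 3) (1:ZMod p) k * sgl (1:Fin 3) (c 2) l
    let mf : (Fin 3 → ZMod p) → (Fin 3 → Fin 3 → ZMod p) := fun c => tA c + (tB c + tC c)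
    have hmfS : ∀ c, ((0, mf c) : Kgp p a) ∈ S := by
      intro c
      have h0 : ((0, mf c) : Kgp p a)
          = ((0, tA c) : Kgp p a) + (((0, tB c) : Kgp p a) + ((0, tC c) : Kgp p a)) := by
        refine Prod.ext (by simp) rfl
      rw [h0]
      refine add_mem ?_ (add_mem ?_ ?_)
      · exact hcommS (sgl (0:Fin 3) (c 0)) (sgl (1:Fin 3) (1:ZMod p))
      · exact hcommS (sgl (0:Fin 3) (c 1)) (sgl (2:Fin 3) (1:ZMod p))
      · exact hcommS (sgl (1:Fin 3) (c 2)) (sgl (2:Fin 3) (1:ZMod p))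
    have hmfeval : ∀ c : Fin 3 → ZMod p,
        mf c 0 1 = c 0 ∧ mf c 0 2 = c 1 ∧ mf c 1 2 = c 2 := by
      intro c
      refine ⟨?_, ?_, ?_⟩ <;>
        simp [mf, tA, tB, tC, sgl]
    let Jf : Usub × (Fin 3 → ZMod p) → S := fun uc =>
      ⟨theta p a M (mu p a (word a fun i => ((uc.1 : Fin a → ZMod (p^2)) i).val))
          + ((0, mf uc.2) : Kgp p a),
        add_mem (hword uc.1).1 (hmfS uc.2)⟩
    have hJinj : Function.Injective Jf := by
      intro x y h
      have hval : (Jf x : Kgp p a) = (Jf y : Kgp p a) := congrArg Subtype.val h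
      have h1 : (x.1 : Fin a → ZMod (p^2)) = (y.1 : Fin a → ZMod (p^2)) := by
        have := congrArg Prod.fst hval
        simpa [Jf, theta_fst, (hword x.1).2, (hword y.1).2] using this
      have hx1 : x.1 = y.1 := Subtype.ext h1
      have h2 : mf x.2 = mf y.2 := by
        have hsnd := congrArg Prod.snd hval
        have hw : (theta p a M (mu p a (word a fun i =>
            ((x.1 : Fin a → ZMod (p^2)) i).val))).2 = (theta p a M (mu p a (word a fun i =>
            ((y.1 : Fin a → ZMod (p^2)) i).val))).2 := by rw [hx1]
        have hsnd' : (theta p a M (mu p a (word a fun i =>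
            ((x.1 : Fin a → ZMod (p^2)) i).val))).2 + mf x.2
            = (theta p a M (mu p a (word a fun i =>
            ((y.1 : Fin a → ZMod (p^2)) i).val))).2 + mf y.2 := hsnd
        rw [hw] at hsnd'
        exact add_left_cancel hsnd'
      have hc : x.2 = y.2 := by
        funext k
        have e1 := (hmfeval x.2).1
        have e2 := (hmfeval x.2).2.1
        have e3 := (hmfeval x.2).2.2
        have f1 := (hmfeval y.2).1
        have f2 := (hmfeval y.2).2.1
        have f3 := (hmfeval y.2).2.2
        fin_cases k
        · show x.2 0 = y.2 0
          rw [← e1, ← f1, h2]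
        · show x.2 1 = y.2 1
          rw [← e2, ← f2, h2]
        · show x.2 2 = y.2 2
          rw [← e3, ← f3, h2]
      exact Prod.ext hx1 hc
    calc Nat.card Usub * p ^ 3 = Nat.card (Usub × (Fin 3 → ZMod p)) := by
          rw [Nat.card_prod, cardW3]
    _ ≤ Nat.card S := Nat.card_le_card_of_injective Jf hJinj
  -- final arithmetic
  have step1 : p ^ (2*a) ≤ p ^ b * Nat.card g0.range := by
    calc p ^ (2*a) = Nat.card Usub * p ^ 3 := cardU.symm
    _ ≤ Nat.card S := cardS_lb
    _ ≤ p ^ b * Nat.card pS := cardS_ub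
    _ ≤ p ^ b * Nat.card g0.range := Nat.mul_le_mul_left _ cardpS
  have step2 : p ^ (2*a) * p ^ a ≤ p ^ b * Nat.card Usub := by
    calc p ^ (2*a) * p ^ a ≤ (p ^ b * Nat.card g0.range) * p ^ a :=
      Nat.mul_le_mul_right _ step1
    _ ≤ (p ^ b * Nat.card g0.range) * Nat.card g0.ker := by
      exact Nat.mul_le_mul_left _ cardkerg0
    _ = p ^ b * (Nat.card g0.range * Nat.card g0.ker) := by ring
    _ = p ^ b * Nat.card Usub := by rw [← cardUdec]
  have step3 : p ^ (2*a) * p ^ (a + 3) ≤ p ^ b * p ^ (2*a) := by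
    calc p ^ (2*a) * p ^ (a+3) = (p ^ (2*a) * p ^ a) * p ^ 3 := by rw [pow_add]; ring
    _ ≤ (p ^ b * Nat.card Usub) * p ^ 3 := Nat.mul_le_mul_right _ step2
    _ = p ^ b * (Nat.card Usub * p ^ 3) := by ring
    _ = p ^ b * p ^ (2*a) := by rw [cardU]
  have step4 : p ^ (a + 3) ≤ p ^ b := by
    have hpos : 0 < p ^ (2*a) := Nat.pow_pos hppos
    have := step3
    rw [mul_comm (p ^ b) (p ^ (2*a))] at this
    exact Nat.le_of_mul_le_mul_left this hpos
  exact (Nat.pow_le_pow_iff_right hp1).mp step4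

-- ===================== existence of the presentation =====================

section Existence

variable (p : ℕ) [Fact p.Prime]

open scoped commutatorElement

instance : NeZero p := ⟨(Fact.out (p := p.Prime)).ne_zero⟩

theorem pow_mod {Γ : Type} [Group Γ] (x : Γ) (hx : x ^ p = 1) (m : ℕ) :
    x ^ (m % p) = x ^ m := by
  conv_rhs => rw [← Nat.div_add_mod m p]
  rw [pow_add, pow_mul, hx, one_pow, one_mul]

/-- homomorphism from `ZMod p` determined by an element whose `p`-th power is `1` -/
def powHom {Γ : Type} [Group Γ] (x : Γ) (hx : x ^ p = 1) : Multiplicative (ZMod p) →* Γ where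
  toFun c := x ^ (Multiplicative.toAdd c).val
  map_one' := by
    show x ^ (0 : ZMod p).val = 1
    rw [ZMod.val_zero, pow_zero]
  map_mul' c d := by
    show x ^ ((Multiplicative.toAdd c) + (Multiplicative.toAdd d)).val = _
    rw [ZMod.val_add, pow_mod p x hx, pow_add]

theorem powHom_apply {Γ : Type} [Group Γ] (x : Γ) (hx : x ^ p = 1)
    (c : Multiplicative (ZMod p)) :
    powHom p x hx c = x ^ (Multiplicative.toAdd c).val := rfl

abbrev Gp := Multiplicative (ZMod p) × Multiplicative (ZMod p) × Multiplicative (ZMod p)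

/-- the six standard relators -/
def rels6 : Fin 6 → FreeGroup (Fin 3)
  | ⟨0, _⟩ => FreeGroup.of (0 : Fin 3) ^ p
  | ⟨1, _⟩ => FreeGroup.of (1 : Fin 3) ^ p
  | ⟨2, _⟩ => FreeGroup.of (2 : Fin 3) ^ p
  | ⟨3, _⟩ => ⁅FreeGroup.of (0 : Fin 3), FreeGroup.of (1 : Fin 3)⁆
  | ⟨4, _⟩ => ⁅FreeGroup.of (0 : Fin 3), FreeGroup.of (2 : Fin 3)⁆
  | ⟨5, _⟩ => ⁅FreeGroup.of (1 : Fin 3), FreeGroup.of (2 : Fin 3)⁆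

/-- the target generators -/
def gfun : Fin 3 → Gp p
  | ⟨0, _⟩ => (Multiplicative.ofAdd (1 : ZMod p), 1, 1)
  | ⟨1, _⟩ => (1, Multiplicative.ofAdd (1 : ZMod p), 1)
  | ⟨2, _⟩ => (1, 1, Multiplicative.ofAdd (1 : ZMod p))

theorem ofAdd_pow (x : ZMod p) : (Multiplicative.ofAdd x) ^ p = 1 := by
  rw [← ofAdd_nsmul, nsmul_eq_mul, ZMod.natCast_self, zero_mul]
  rfl

theorem hrel : ∀ w ∈ Set.range (rels6 p), FreeGroup.lift (gfun p) w = 1 := by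
  rintro w ⟨i, rfl⟩
  fin_cases i
  · show FreeGroup.lift (gfun p) (FreeGroup.of (0 : Fin 3) ^ p) = 1
    rw [map_pow, FreeGroup.lift_apply_of]
    show ((Multiplicative.ofAdd (1 : ZMod p), 1, 1) : Gp p) ^ p = 1
    rw [Prod.pow_mk, Prod.pow_mk, ofAdd_pow, one_pow]
    rfl
  · show FreeGroup.lift (gfun p) (FreeGroup.of (1 : Fin 3) ^ p) = 1
    rw [map_pow, FreeGroup.lift_apply_of]
    show ((1, Multiplicative.ofAdd (1 : ZMod p), 1) : Gp p) ^ p = 1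
    rw [Prod.pow_mk, Prod.pow_mk, ofAdd_pow, one_pow]
    rfl
  · show FreeGroup.lift (gfun p) (FreeGroup.of (2 : Fin 3) ^ p) = 1
    rw [map_pow, FreeGroup.lift_apply_of]
    show ((1, 1, Multiplicative.ofAdd (1 : ZMod p)) : Gp p) ^ p = 1
    rw [Prod.pow_mk, Prod.pow_mk, ofAdd_pow, one_pow]
    rfl
  · show FreeGroup.lift (gfun p) ⁅FreeGroup.of (0 : Fin 3), FreeGroup.of (1 : Fin 3)⁆ = 1
    rw [map_commutatorElement]
    exact commutatorElement_eq_one_iff_commute.mpr (Commute.all _ _)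
  · show FreeGroup.lift (gfun p) ⁅FreeGroup.of (0 : Fin 3), FreeGroup.of (2 : Fin 3)⁆ = 1
    rw [map_commutatorElement]
    exact commutatorElement_eq_one_iff_commute.mpr (Commute.all _ _)
  · show FreeGroup.lift (gfun p) ⁅FreeGroup.of (1 : Fin 3), FreeGroup.of (2 : Fin 3)⁆ = 1
    rw [map_commutatorElement]
    exact commutatorElement_eq_one_iff_commute.mpr (Commute.all _ _)

/-- the presented group -/
abbrev PG := PresentedGroup (Set.range (rels6 p))

noncomputable def fhom : PG p →* Gp p := PresentedGroup.toGroup (hrel p)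

theorem relone (j : Fin 6) : PresentedGroup.mk (Set.range (rels6 p)) (rels6 p j) = 1 :=
  (QuotientGroup.eq_one_iff _).mpr (Subgroup.subset_normalClosure ⟨j, rfl⟩)

theorem Xpow (i : Fin 3) :
    (PresentedGroup.of (rels := Set.range (rels6 p)) i) ^ p = 1 := by
  fin_cases i
  · have h := relone p 0
    show (PresentedGroup.mk (Set.range (rels6 p)) (FreeGroup.of (0 : Fin 3))) ^ p = 1
    rw [← map_pow]
    exact h
  · have h := relone p 1
    show (PresentedGroup.mk (Set.range (rels6 p)) (FreeGroup.of (1 : Fin 3))) ^ p = 1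
    rw [← map_pow]
    exact h
  · have h := relone p 2
    show (PresentedGroup.mk (Set.range (rels6 p)) (FreeGroup.of (2 : Fin 3))) ^ p = 1
    rw [← map_pow]
    exact h

theorem Xcomm01 : Commute (PresentedGroup.of (rels := Set.range (rels6 p)) 0)
    (PresentedGroup.of (rels := Set.range (rels6 p)) 1) := by
  apply commutatorElement_eq_one_iff_commute.mp
  have h := relone p 3
  rw [show rels6 p 3 = ⁅FreeGroup.of (0 : Fin 3), FreeGroup.of (1 : Fin 3)⁆ from rfl, map_commutatorElement] at h
  exact h

theorem Xcomm02 : Commute (PresentedGroup.of (rels := Set.range (rels6 p)) 0)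
    (PresentedGroup.of (rels := Set.range (rels6 p)) 2) := by
  apply commutatorElement_eq_one_iff_commute.mp
  have h := relone p 4
  rw [show rels6 p 4 = ⁅FreeGroup.of (0 : Fin 3), FreeGroup.of (2 : Fin 3)⁆ from rfl, map_commutatorElement] at h
  exact h

theorem Xcomm12 : Commute (PresentedGroup.of (rels := Set.range (rels6 p)) 1)
    (PresentedGroup.of (rels := Set.range (rels6 p)) 2) := by
  apply commutatorElement_eq_one_iff_commute.mp
  have h := relone p 5
  rw [show rels6 p 5 = ⁅FreeGroup.of (1 : Fin 3), FreeGroup.of (2 : Fin 3)⁆ from rfl, map_commutatorElement] at h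
  exact h

noncomputable def hhom : Gp p →* PG p :=
  MonoidHom.mk' (fun g =>
    powHom p _ (Xpow p 0) g.1 * powHom p _ (Xpow p 1) g.2.1 * powHom p _ (Xpow p 2) g.2.2) (by
    intro g h
    simp only [Prod.fst_mul, Prod.snd_mul]
    rw [map_mul, map_mul, map_mul]
    have c1 : Commute (powHom p _ (Xpow p 0) h.1) (powHom p _ (Xpow p 1) g.2.1) :=
      (Xcomm01 p).pow_pow _ _
    have c2 : Commute (powHom p _ (Xpow p 0) h.1 * powHom p _ (Xpow p 1) h.2.1)
        (powHom p _ (Xpow p 2) g.2.2) :=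
      Commute.mul_left ((Xcomm02 p).pow_pow _ _) ((Xcomm12 p).pow_pow _ _)
    calc powHom p _ (Xpow p 0) g.1 * powHom p _ (Xpow p 0) h.1 *
          (powHom p _ (Xpow p 1) g.2.1 * powHom p _ (Xpow p 1) h.2.1) *
          (powHom p _ (Xpow p 2) g.2.2 * powHom p _ (Xpow p 2) h.2.2)
        = (powHom p _ (Xpow p 0) g.1 * powHom p _ (Xpow p 1) g.2.1) *
          (powHom p _ (Xpow p 0) h.1 * powHom p _ (Xpow p 1) h.2.1) *
          (powHom p _ (Xpow p 2) g.2.2 * powHom p _ (Xpow p 2) h.2.2) := by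
          rw [Commute.mul_mul_mul_comm c1]
    _ = (powHom p _ (Xpow p 0) g.1 * powHom p _ (Xpow p 1) g.2.1 * powHom p _ (Xpow p 2) g.2.2) *
          (powHom p _ (Xpow p 0) h.1 * powHom p _ (Xpow p 1) h.2.1 * powHom p _ (Xpow p 2) h.2.2)
          := by rw [Commute.mul_mul_mul_comm c2])

theorem ofAdd_val_pow (c : Multiplicative (ZMod p)) :
    (Multiplicative.ofAdd (1 : ZMod p)) ^ (Multiplicative.toAdd c).val = c := by
  rw [← ofAdd_nsmul, nsmul_eq_mul, mul_one, ZMod.natCast_val, ZMod.cast_id]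
  rfl

theorem left_inv_fh : ∀ g : Gp p, fhom p (hhom p g) = g := by
  intro g
  show fhom p (powHom p _ (Xpow p 0) g.1 * powHom p _ (Xpow p 1) g.2.1 *
    powHom p _ (Xpow p 2) g.2.2) = g
  rw [map_mul, map_mul, powHom_apply, powHom_apply, powHom_apply, map_pow, map_pow, map_pow]
  have h0 : fhom p (PresentedGroup.of (rels := Set.range (rels6 p)) 0) = gfun p 0 :=
    PresentedGroup.toGroup.of (hrel p)
  have h1 : fhom p (PresentedGroup.of (rels := Set.range (rels6 p)) 1) = gfun p 1 :=
    PresentedGroup.toGroup.of (hrel p)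
  have h2 : fhom p (PresentedGroup.of (rels := Set.range (rels6 p)) 2) = gfun p 2 :=
    PresentedGroup.toGroup.of (hrel p)
  rw [h0, h1, h2]
  show ((Multiplicative.ofAdd (1 : ZMod p), 1, 1) : Gp p) ^ (Multiplicative.toAdd g.1).val *
      ((1, Multiplicative.ofAdd (1 : ZMod p), 1) : Gp p) ^ (Multiplicative.toAdd g.2.1).val *
      ((1, 1, Multiplicative.ofAdd (1 : ZMod p)) : Gp p) ^ (Multiplicative.toAdd g.2.2).val = g
  simp only [Prod.pow_mk, one_pow, ofAdd_val_pow, Prod.mk_mul_mk, one_mul, mul_one]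

theorem right_inv_fh : ∀ x : PG p, hhom p (fhom p x) = x := by
  have heq : (hhom p).comp (fhom p) = MonoidHom.id (PG p) := by
    apply PresentedGroup.ext
    intro i
    show hhom p (fhom p (PresentedGroup.of i)) = PresentedGroup.of i
    have hof : fhom p (PresentedGroup.of (rels := Set.range (rels6 p)) i) = gfun p i :=
      PresentedGroup.toGroup.of (hrel p)
    rw [hof]
    have hval1 : (Multiplicative.toAdd (Multiplicative.ofAdd (1 : ZMod p))).val = 1 := by
      haveI : Fact (1 < p) := ⟨(Fact.out (p := p.Prime)).one_lt⟩
      exact ZMod.val_one p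
    have hval0 : (Multiplicative.toAdd (1 : Multiplicative (ZMod p))).val = 0 := ZMod.val_zero
    fin_cases i
    · show hhom p ((Multiplicative.ofAdd (1 : ZMod p), 1, 1) : Gp p) = _
      show powHom p _ (Xpow p 0) (Multiplicative.ofAdd (1 : ZMod p)) *
        powHom p _ (Xpow p 1) 1 * powHom p _ (Xpow p 2) 1 = _
      rw [powHom_apply, powHom_apply, powHom_apply, hval1, hval0, pow_zero, pow_zero, pow_one,
        mul_one, mul_one]
      rfl
    · show hhom p ((1, Multiplicative.ofAdd (1 : ZMod p), 1) : Gp p) = _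
      show powHom p _ (Xpow p 0) 1 *
        powHom p _ (Xpow p 1) (Multiplicative.ofAdd (1 : ZMod p)) * powHom p _ (Xpow p 2) 1 = _
      rw [powHom_apply, powHom_apply, powHom_apply, hval1, hval0, pow_zero, pow_zero, pow_one,
        one_mul, mul_one]
      rfl
    · show hhom p ((1, 1, Multiplicative.ofAdd (1 : ZMod p)) : Gp p) = _
      show powHom p _ (Xpow p 0) 1 * powHom p _ (Xpow p 1) 1 *
        powHom p _ (Xpow p 2) (Multiplicative.ofAdd (1 : ZMod p)) = _
      rw [powHom_apply, powHom_apply, powHom_apply, hval1, hval0, pow_zero, pow_zero, pow_one,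
        one_mul, one_mul]
      rfl
  intro x
  exact DFunLike.congr_fun heq x

/-- the explicit presentation equivalence -/
noncomputable def presEquiv : Gp p ≃* PG p where
  toFun := hhom p
  invFun := fhom p
  left_inv := left_inv_fh p
  right_inv := right_inv_fh p
  map_mul' := map_mul (hhom p)

end Existence

end Defic

/-- `def((ℤ/p)³) = -3` for every prime `p`. -/
theorem deficiency_zmod_pow_three (p : ℕ) (hp : p.Prime) :
    HasDeficiency
      (Multiplicative (ZMod p) × Multiplicative (ZMod p) × Multiplicative (ZMod p))
      (-3) := by
  haveI : Fact p.Prime := ⟨hp⟩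
  constructor
  · exact ⟨3, 6, ⟨Defic.rels6 p, ⟨Defic.presEquiv p⟩⟩, by norm_num⟩
  · rintro a b ⟨r, ⟨e⟩⟩
    have h := Defic.main_bound p a r e
    have h2 : (a : ℤ) + 3 ≤ (b : ℤ) := by exact_mod_cast h
    linarith
end

section
/- Let Γ be a fully residually free group that is non-abelian (there exist a, b ∈ Γ with ab ≠ ba). Then Γ admits a surjective group homomorphism onto the free group of rank 2. -/
/-- A group `Γ` is fully residually free if for every finite subset `S ⊆ Γ` there is a
homomorphism to a free group of finite rank that is injective on `S`. -/
def FullyResiduallyFree (Γ : Type) [Group Γ] : Prop :=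
  ∀ S : Finset Γ, ∃ (n : ℕ) (φ : Γ →* FreeGroup (Fin n)), Set.InjOn φ ↑S

lemma freeGroup_comm_of_subsingleton {X : Type*} [Subsingleton X]
    (g h : FreeGroup X) : Commute g h := by
  induction g with
  | C1 => exact Commute.one_left h
  | of x =>
    induction h with
    | C1 => exact Commute.one_right _
    | of y => rw [Subsingleton.elim x y]
    | inv_of y hy => exact hy.inv_right
    | mul u v hu hv => exact hu.mul_right hv
  | inv_of x hx => exact hx.inv_left
  | mul u v hu hv => exact hu.mul_left hv

lemma freeGroup_map_surjective {X Y : Type*} {f : X → Y} (hf : Function.Surjective f) :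
    Function.Surjective (FreeGroup.map f : FreeGroup X →* FreeGroup Y) := by
  rw [← MonoidHom.range_eq_top, ← top_le_iff, ← FreeGroup.closure_range_of Y,
    Subgroup.closure_le]
  rintro _ ⟨y, rfl⟩
  obtain ⟨x, rfl⟩ := hf y
  exact ⟨FreeGroup.of x, by simp⟩

/-- A non-abelian fully residually free group surjects onto the free group of rank 2. -/
theorem fullyResiduallyFree_nonabelian_surjects_free (Γ : Type) [Group Γ]
    (hfrf : FullyResiduallyFree Γ) (hna : ∃ a b : Γ, a * b ≠ b * a) :
    ∃ φ : Γ →* FreeGroup (Fin 2), Function.Surjective φ := by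
  classical
  obtain ⟨a, b, hab⟩ := hna
  obtain ⟨n, φ, hinj⟩ := hfrf {a * b, b * a}
  have hφ : φ (a * b) ≠ φ (b * a) := fun h =>
    hab (hinj (by simp) (by simp) h)
  -- the range of φ is a free group
  set H := φ.range with hH
  haveI : IsFreeGroup H := inferInstance
  set ψ : Γ →* H := φ.rangeRestrict with hψ
  have hψsurj : Function.Surjective ψ := φ.rangeRestrict_surjective
  have hψne : ψ (a * b) ≠ ψ (b * a) := by
    intro h
    exact hφ (congrArg Subtype.val h)
  -- the generator type has two distinct elements
  have : ∃ x y : IsFreeGroup.Generators H, x ≠ y := by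
    by_contra hc
    push_neg at hc
    haveI : Subsingleton (IsFreeGroup.Generators H) := ⟨hc⟩
    have e := IsFreeGroup.toFreeGroup H
    have : ψ a * ψ b = ψ b * ψ a := by
      have := freeGroup_comm_of_subsingleton (e (ψ a)) (e (ψ b))
      have : e (ψ a * ψ b) = e (ψ b * ψ a) := by
        rw [map_mul, map_mul]; exact this
      exact e.injective this
    exact hψne (by rw [map_mul, map_mul, this])
  obtain ⟨x, y, hxy⟩ := this
  set f : IsFreeGroup.Generators H → Fin 2 := fun z => if z = x then 0 else 1 with hf
  have hfsurj : Function.Surjective f := by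
    intro i
    fin_cases i
    · exact ⟨x, by simp [hf]⟩
    · exact ⟨y, by simp [hf, Ne.symm hxy]⟩
  refine ⟨(FreeGroup.map f).comp (((IsFreeGroup.toFreeGroup H : H ≃* FreeGroup
      (IsFreeGroup.Generators H)) : H →* FreeGroup (IsFreeGroup.Generators H)).comp ψ), ?_⟩
  exact (freeGroup_map_surjective hfsurj).comp
    ((IsFreeGroup.toFreeGroup H).surjective.comp hψsurj)
end
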